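/- arXiv:0712.0152 — 5 statements merged into one kernel-verified Lean document; each statement's English description precedes it below -/
import Mathlib

section
/- Let n ≥ 1, let a < t be real numbers, let 0 < α ≤ 1, let L : ℝ × ℝⁿ × ℝⁿ × ℝⁿ → ℝ be of class C⁴, and let q : ℝ → ℝⁿ be of class C⁴ on [a,t]. Suppose that for every C⁴ function h : ℝ → ℝⁿ with h(a) = h(t) = 0 and h'(a) = h'(t) = 0, the function ε ↦ (1/Γ(α)) ∫_a^t L(θ, q(θ)+εh(θ), q'(θ)+εh'(θ), q''(θ)+εh''(θ)) (t−θ)^{α−1} dθ has derivative 0 at ε = 0. Then for every θ ∈ (a,t): ∂₂L − (d/dθ)∂₃L + (d²/dθ²)∂₄L = ((1−α)/(t−θ))·(∂₃L − 2(d/dθ)∂₄L) − ((1−α)(2−α)/(t−θ)²)·∂₄L, where each partial derivative of L is evaluated along (θ, q(θ), q'(θ), q''(θ)). -/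
open scoped RealInnerProductSpace
open InnerProductSpace MeasureTheory Set Topology

set_option maxHeartbeats 2000000
set_option synthInstance.maxHeartbeats 400000

section FalvaAux

variable {n : ℕ}

noncomputable def falvaI2 (n : ℕ) :
    EuclideanSpace ℝ (Fin n) →L[ℝ] ℝ × EuclideanSpace ℝ (Fin n) ×
      EuclideanSpace ℝ (Fin n) × EuclideanSpace ℝ (Fin n) :=
  (0 : EuclideanSpace ℝ (Fin n) →L[ℝ] ℝ).prod
    ((ContinuousLinearMap.id ℝ (EuclideanSpace ℝ (Fin n))).prod 0)

noncomputable def falvaI3 (n : ℕ) :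
    EuclideanSpace ℝ (Fin n) →L[ℝ] ℝ × EuclideanSpace ℝ (Fin n) ×
      EuclideanSpace ℝ (Fin n) × EuclideanSpace ℝ (Fin n) :=
  (0 : EuclideanSpace ℝ (Fin n) →L[ℝ] ℝ).prod
    ((0 : EuclideanSpace ℝ (Fin n) →L[ℝ] EuclideanSpace ℝ (Fin n)).prod
      ((ContinuousLinearMap.id ℝ (EuclideanSpace ℝ (Fin n))).prod 0))

noncomputable def falvaI4 (n : ℕ) :
    EuclideanSpace ℝ (Fin n) →L[ℝ] ℝ × EuclideanSpace ℝ (Fin n) ×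
      EuclideanSpace ℝ (Fin n) × EuclideanSpace ℝ (Fin n) :=
  (0 : EuclideanSpace ℝ (Fin n) →L[ℝ] ℝ).prod
    ((0 : EuclideanSpace ℝ (Fin n) →L[ℝ] EuclideanSpace ℝ (Fin n)).prod
      ((0 : EuclideanSpace ℝ (Fin n) →L[ℝ] EuclideanSpace ℝ (Fin n)).prod
        (ContinuousLinearMap.id ℝ (EuclideanSpace ℝ (Fin n)))))

variable {L : ℝ × EuclideanSpace ℝ (Fin n) × EuclideanSpace ℝ (Fin n) ×
      EuclideanSpace ℝ (Fin n) → ℝ}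

lemma falva_grad2 (hL : Differentiable ℝ L)
    (p : ℝ × EuclideanSpace ℝ (Fin n) × EuclideanSpace ℝ (Fin n) × EuclideanSpace ℝ (Fin n)) :
    gradient (fun y => L (p.1, y, p.2.2.1, p.2.2.2)) p.2.1
      = (toDual ℝ (EuclideanSpace ℝ (Fin n))).symm ((fderiv ℝ L p).comp (falvaI2 n)) := by
  have hincl : HasFDerivAt (fun y : EuclideanSpace ℝ (Fin n) =>
      ((p.1, y, p.2.2.1, p.2.2.2) : ℝ × EuclideanSpace ℝ (Fin n) ×
        EuclideanSpace ℝ (Fin n) × EuclideanSpace ℝ (Fin n))) (falvaI2 n) p.2.1 := by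
    have heq : (fun y : EuclideanSpace ℝ (Fin n) =>
        ((p.1, y, p.2.2.1, p.2.2.2) : ℝ × EuclideanSpace ℝ (Fin n) ×
          EuclideanSpace ℝ (Fin n) × EuclideanSpace ℝ (Fin n)))
        = fun y => ((p.1, 0, p.2.2.1, p.2.2.2) : ℝ × EuclideanSpace ℝ (Fin n) ×
          EuclideanSpace ℝ (Fin n) × EuclideanSpace ℝ (Fin n)) + (falvaI2 n) y := by
      funext y
      simp [falvaI2, Prod.ext_iff]
    rw [heq]
    exact ((falvaI2 n).hasFDerivAt).const_add _
  have hcomp : HasFDerivAt (fun y => L (p.1, y, p.2.2.1, p.2.2.2))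
      ((fderiv ℝ L p).comp (falvaI2 n)) p.2.1 := by
    have := (hL p).hasFDerivAt.comp p.2.1 (by simpa using hincl)
    exact this
  rw [gradient, hcomp.fderiv]

lemma falva_grad3 (hL : Differentiable ℝ L)
    (p : ℝ × EuclideanSpace ℝ (Fin n) × EuclideanSpace ℝ (Fin n) × EuclideanSpace ℝ (Fin n)) :
    gradient (fun y => L (p.1, p.2.1, y, p.2.2.2)) p.2.2.1
      = (toDual ℝ (EuclideanSpace ℝ (Fin n))).symm ((fderiv ℝ L p).comp (falvaI3 n)) := by
  have hincl : HasFDerivAt (fun y : EuclideanSpace ℝ (Fin n) =>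
      ((p.1, p.2.1, y, p.2.2.2) : ℝ × EuclideanSpace ℝ (Fin n) ×
        EuclideanSpace ℝ (Fin n) × EuclideanSpace ℝ (Fin n))) (falvaI3 n) p.2.2.1 := by
    have heq : (fun y : EuclideanSpace ℝ (Fin n) =>
        ((p.1, p.2.1, y, p.2.2.2) : ℝ × EuclideanSpace ℝ (Fin n) ×
          EuclideanSpace ℝ (Fin n) × EuclideanSpace ℝ (Fin n)))
        = fun y => ((p.1, p.2.1, 0, p.2.2.2) : ℝ × EuclideanSpace ℝ (Fin n) ×
          EuclideanSpace ℝ (Fin n) × EuclideanSpace ℝ (Fin n)) + (falvaI3 n) y := by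
      funext y
      simp [falvaI3, Prod.ext_iff]
    rw [heq]
    exact ((falvaI3 n).hasFDerivAt).const_add _
  have hcomp : HasFDerivAt (fun y => L (p.1, p.2.1, y, p.2.2.2))
      ((fderiv ℝ L p).comp (falvaI3 n)) p.2.2.1 := by
    have := (hL p).hasFDerivAt.comp p.2.2.1 (by simpa using hincl)
    exact this
  rw [gradient, hcomp.fderiv]

lemma falva_grad4 (hL : Differentiable ℝ L)
    (p : ℝ × EuclideanSpace ℝ (Fin n) × EuclideanSpace ℝ (Fin n) × EuclideanSpace ℝ (Fin n)) :
    gradient (fun y => L (p.1, p.2.1, p.2.2.1, y)) p.2.2.2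
      = (toDual ℝ (EuclideanSpace ℝ (Fin n))).symm ((fderiv ℝ L p).comp (falvaI4 n)) := by
  have hincl : HasFDerivAt (fun y : EuclideanSpace ℝ (Fin n) =>
      ((p.1, p.2.1, p.2.2.1, y) : ℝ × EuclideanSpace ℝ (Fin n) ×
        EuclideanSpace ℝ (Fin n) × EuclideanSpace ℝ (Fin n))) (falvaI4 n) p.2.2.2 := by
    have heq : (fun y : EuclideanSpace ℝ (Fin n) =>
        ((p.1, p.2.1, p.2.2.1, y) : ℝ × EuclideanSpace ℝ (Fin n) ×
          EuclideanSpace ℝ (Fin n) × EuclideanSpace ℝ (Fin n)))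
        = fun y => ((p.1, p.2.1, p.2.2.1, 0) : ℝ × EuclideanSpace ℝ (Fin n) ×
          EuclideanSpace ℝ (Fin n) × EuclideanSpace ℝ (Fin n)) + (falvaI4 n) y := by
      funext y
      simp [falvaI4, Prod.ext_iff]
    rw [heq]
    exact ((falvaI4 n).hasFDerivAt).const_add _
  have hcomp : HasFDerivAt (fun y => L (p.1, p.2.1, p.2.2.1, y))
      ((fderiv ℝ L p).comp (falvaI4 n)) p.2.2.2 := by
    have := (hL p).hasFDerivAt.comp p.2.2.2 (by simpa using hincl)
    exact this
  rw [gradient, hcomp.fderiv]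

lemma falva_decomp (hL : Differentiable ℝ L)
    (p : ℝ × EuclideanSpace ℝ (Fin n) × EuclideanSpace ℝ (Fin n) × EuclideanSpace ℝ (Fin n))
    (u₁ u₂ u₃ : EuclideanSpace ℝ (Fin n)) :
    fderiv ℝ L p ((0 : ℝ), u₁, u₂, u₃)
      = ⟪gradient (fun y => L (p.1, y, p.2.2.1, p.2.2.2)) p.2.1, u₁⟫_ℝ
        + ⟪gradient (fun y => L (p.1, p.2.1, y, p.2.2.2)) p.2.2.1, u₂⟫_ℝ
        + ⟪gradient (fun y => L (p.1, p.2.1, p.2.2.1, y)) p.2.2.2, u₃⟫_ℝ := by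
  rw [falva_grad2 hL p, falva_grad3 hL p, falva_grad4 hL p]
  rw [toDual_symm_apply, toDual_symm_apply, toDual_symm_apply]
  have hdec : ((0 : ℝ), u₁, u₂, u₃) = (falvaI2 n) u₁ + (falvaI3 n) u₂ + (falvaI4 n) u₃ := by
    simp [falvaI2, falvaI3, falvaI4, Prod.ext_iff]
  rw [hdec, map_add, map_add]
  rfl

lemma falva_smooth2 (hL : ContDiff ℝ 4 L) :
    ContDiff ℝ 2 (fun p : ℝ × EuclideanSpace ℝ (Fin n) × EuclideanSpace ℝ (Fin n) ×
        EuclideanSpace ℝ (Fin n) =>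
      gradient (fun y => L (p.1, y, p.2.2.1, p.2.2.2)) p.2.1) := by
  have heq : (fun p : ℝ × EuclideanSpace ℝ (Fin n) × EuclideanSpace ℝ (Fin n) ×
        EuclideanSpace ℝ (Fin n) => gradient (fun y => L (p.1, y, p.2.2.1, p.2.2.2)) p.2.1)
      = fun p => (toDual ℝ (EuclideanSpace ℝ (Fin n))).symm ((fderiv ℝ L p).comp (falvaI2 n)) :=
    funext fun p => falva_grad2 (hL.differentiable (by norm_num)) p
  rw [heq]
  have hfd : ContDiff ℝ 3 (fderiv ℝ L) := hL.fderiv_right (by norm_num)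
  exact (((toDual ℝ (EuclideanSpace ℝ (Fin n))).symm.contDiff).comp
    (hfd.clm_comp contDiff_const)).of_le (by norm_num)

lemma falva_smooth3 (hL : ContDiff ℝ 4 L) :
    ContDiff ℝ 2 (fun p : ℝ × EuclideanSpace ℝ (Fin n) × EuclideanSpace ℝ (Fin n) ×
        EuclideanSpace ℝ (Fin n) =>
      gradient (fun y => L (p.1, p.2.1, y, p.2.2.2)) p.2.2.1) := by
  have heq : (fun p : ℝ × EuclideanSpace ℝ (Fin n) × EuclideanSpace ℝ (Fin n) ×
        EuclideanSpace ℝ (Fin n) => gradient (fun y => L (p.1, p.2.1, y, p.2.2.2)) p.2.2.1)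
      = fun p => (toDual ℝ (EuclideanSpace ℝ (Fin n))).symm ((fderiv ℝ L p).comp (falvaI3 n)) :=
    funext fun p => falva_grad3 (hL.differentiable (by norm_num)) p
  rw [heq]
  have hfd : ContDiff ℝ 3 (fderiv ℝ L) := hL.fderiv_right (by norm_num)
  exact (((toDual ℝ (EuclideanSpace ℝ (Fin n))).symm.contDiff).comp
    (hfd.clm_comp contDiff_const)).of_le (by norm_num)

lemma falva_smooth4 (hL : ContDiff ℝ 4 L) :
    ContDiff ℝ 2 (fun p : ℝ × EuclideanSpace ℝ (Fin n) × EuclideanSpace ℝ (Fin n) ×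
        EuclideanSpace ℝ (Fin n) =>
      gradient (fun y => L (p.1, p.2.1, p.2.2.1, y)) p.2.2.2) := by
  have heq : (fun p : ℝ × EuclideanSpace ℝ (Fin n) × EuclideanSpace ℝ (Fin n) ×
        EuclideanSpace ℝ (Fin n) => gradient (fun y => L (p.1, p.2.1, p.2.2.1, y)) p.2.2.2)
      = fun p => (toDual ℝ (EuclideanSpace ℝ (Fin n))).symm ((fderiv ℝ L p).comp (falvaI4 n)) :=
    funext fun p => falva_grad4 (hL.differentiable (by norm_num)) p
  rw [heq]
  have hfd : ContDiff ℝ 3 (fderiv ℝ L) := hL.fderiv_right (by norm_num)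
  exact (((toDual ℝ (EuclideanSpace ℝ (Fin n))).symm.contDiff).comp
    (hfd.clm_comp contDiff_const)).of_le (by norm_num)

lemma falva_weight_integrable (a t α : ℝ) (h0 : 0 < α) :
    IntervalIntegrable (fun s => (t - s) ^ (α - 1)) volume a t := by
  have h := intervalIntegral.intervalIntegrable_rpow' (a := t - a) (b := 0) (r := α - 1)
    (by linarith)
  simpa using h.comp_sub_left t

end FalvaAux

/-- **Euler–Lagrange equations for second-order FALVA problems.**
If `q` gives a stationary value to the second-order FALVA functional
`I²[q] = (1/Γ(α)) ∫_a^t L(θ, q, q', q'') (t-θ)^(α-1) dθ` (first variation vanishing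
for every `C⁴` variation `h` with `h(a) = h(t) = 0` and `h'(a) = h'(t) = 0`),
then on `(a,t)`:
`∂₂L - d/dθ ∂₃L + d²/dθ² ∂₄L
  = ((1-α)/(t-θ))(∂₃L - 2 d/dθ ∂₄L) - ((1-α)(2-α)/(t-θ)²) ∂₄L`. -/
theorem falva_second_order_euler_lagrange
    (n : ℕ) (hn : 1 ≤ n) (a t α : ℝ) (hat : a < t) (hα0 : 0 < α) (hα1 : α ≤ 1)
    (L : ℝ × EuclideanSpace ℝ (Fin n) × EuclideanSpace ℝ (Fin n) ×
          EuclideanSpace ℝ (Fin n) → ℝ)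
    (hL : ContDiff ℝ 4 L)
    (q : ℝ → EuclideanSpace ℝ (Fin n))
    (hq : ContDiffOn ℝ 4 q (Set.Icc a t))
    (hstat : ∀ h : ℝ → EuclideanSpace ℝ (Fin n),
      ContDiff ℝ 4 h → h a = 0 → h t = 0 → deriv h a = 0 → deriv h t = 0 →
      HasDerivAt (fun ε : ℝ => (1 / Real.Gamma α) *
          ∫ θ in a..t,
            L (θ, q θ + ε • h θ, deriv q θ + ε • deriv h θ,
                deriv (deriv q) θ + ε • deriv (deriv h) θ) * (t - θ) ^ (α - 1))
        0 0) :
    ∀ θ ∈ Set.Ioo a t,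
      gradient (fun y => L (θ, y, deriv q θ, deriv (deriv q) θ)) (q θ)
          - deriv (fun s =>
              gradient (fun v => L (s, q s, v, deriv (deriv q) s)) (deriv q s)) θ
          + deriv (deriv (fun s =>
              gradient (fun w => L (s, q s, deriv q s, w)) (deriv (deriv q) s))) θ
        = ((1 - α) / (t - θ)) •
              (gradient (fun v => L (θ, q θ, v, deriv (deriv q) θ)) (deriv q θ)
                - (2 : ℝ) • deriv (fun s =>
                    gradient (fun w => L (s, q s, deriv q s, w)) (deriv (deriv q) s)) θ)
            - ((1 - α) * (2 - α) / (t - θ) ^ 2) •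
                gradient (fun w => L (θ, q θ, deriv q θ, w)) (deriv (deriv q) θ) := by
  intro θ hθ
  have hθa : a < θ := hθ.1
  have hθt : θ < t := hθ.2
  have key : ∀ v : EuclideanSpace ℝ (Fin n),
      ⟪gradient (fun y => L (θ, y, deriv q θ, deriv (deriv q) θ)) (q θ), v⟫_ℝ
          * (t - θ) ^ (α - 1)
        - (⟪deriv (fun s =>
              gradient (fun v => L (s, q s, v, deriv (deriv q) s)) (deriv q s)) θ, v⟫_ℝ
                * (t - θ) ^ (α - 1)
            + ⟪gradient (fun v => L (θ, q θ, v, deriv (deriv q) θ)) (deriv q θ), v⟫_ℝ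
                * ((1 - α) * (t - θ) ^ (α - 2)))
        + (⟪deriv (deriv (fun s =>
              gradient (fun w => L (s, q s, deriv q s, w)) (deriv (deriv q) s))) θ, v⟫_ℝ
                * (t - θ) ^ (α - 1)
            + 2 * ⟪deriv (fun s =>
                  gradient (fun w => L (s, q s, deriv q s, w)) (deriv (deriv q) s)) θ, v⟫_ℝ
                * ((1 - α) * (t - θ) ^ (α - 2))
            + ⟪gradient (fun w => L (θ, q θ, deriv q θ, w)) (deriv (deriv q) θ), v⟫_ℝ
                * ((1 - α) * (2 - α) * (t - θ) ^ (α - 3))) = 0 := by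
    -- ===== shared infrastructure =====
    have hUo : IsOpen (Set.Ioo a t) := isOpen_Ioo
    have hLd : Differentiable ℝ L := hL.differentiable (by norm_num)
    have hqU : ContDiffOn ℝ 4 q (Set.Ioo a t) := hq.mono Set.Ioo_subset_Icc_self
    have hq1U : ContDiffOn ℝ 3 (deriv q) (Set.Ioo a t) :=
      hqU.deriv_of_isOpen hUo (by norm_num)
    have hq2U : ContDiffOn ℝ 2 (deriv (deriv q)) (Set.Ioo a t) :=
      hq1U.deriv_of_isOpen hUo (by norm_num)
    have hgammaU : ContDiffOn ℝ 2 (fun s : ℝ =>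
        ((s, q s, deriv q s, deriv (deriv q) s) : ℝ × EuclideanSpace ℝ (Fin n) ×
          EuclideanSpace ℝ (Fin n) × EuclideanSpace ℝ (Fin n))) (Set.Ioo a t) :=
      contDiffOn_id.prodMk ((hqU.of_le (by norm_num)).prodMk
        ((hq1U.of_le (by norm_num)).prodMk hq2U))
    have hAgU : ContDiffOn ℝ 2 (fun s : ℝ =>
        gradient (fun y => L (s, y, deriv q s, deriv (deriv q) s)) (q s)) (Set.Ioo a t) := by
      have heq : (fun s : ℝ => gradient (fun y => L (s, y, deriv q s, deriv (deriv q) s)) (q s))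
          = (fun p : ℝ × EuclideanSpace ℝ (Fin n) × EuclideanSpace ℝ (Fin n) ×
              EuclideanSpace ℝ (Fin n) => gradient (fun y => L (p.1, y, p.2.2.1, p.2.2.2)) p.2.1)
            ∘ (fun s : ℝ => (s, q s, deriv q s, deriv (deriv q) s)) := rfl
      rw [heq]
      exact (falva_smooth2 hL).comp_contDiffOn hgammaU
    have hBgU : ContDiffOn ℝ 2 (fun s : ℝ =>
        gradient (fun y => L (s, q s, y, deriv (deriv q) s)) (deriv q s)) (Set.Ioo a t) := by
      have heq : (fun s : ℝ => gradient (fun y => L (s, q s, y, deriv (deriv q) s)) (deriv q s))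
          = (fun p : ℝ × EuclideanSpace ℝ (Fin n) × EuclideanSpace ℝ (Fin n) ×
              EuclideanSpace ℝ (Fin n) => gradient (fun y => L (p.1, p.2.1, y, p.2.2.2)) p.2.2.1)
            ∘ (fun s : ℝ => (s, q s, deriv q s, deriv (deriv q) s)) := rfl
      rw [heq]
      exact (falva_smooth3 hL).comp_contDiffOn hgammaU
    have hCgU : ContDiffOn ℝ 2 (fun s : ℝ =>
        gradient (fun y => L (s, q s, deriv q s, y)) (deriv (deriv q) s)) (Set.Ioo a t) := by
      have heq : (fun s : ℝ => gradient (fun y => L (s, q s, deriv q s, y)) (deriv (deriv q) s))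
          = (fun p : ℝ × EuclideanSpace ℝ (Fin n) × EuclideanSpace ℝ (Fin n) ×
              EuclideanSpace ℝ (Fin n) => gradient (fun y => L (p.1, p.2.1, p.2.2.1, y)) p.2.2.2)
            ∘ (fun s : ℝ => (s, q s, deriv q s, deriv (deriv q) s)) := rfl
      rw [heq]
      exact (falva_smooth4 hL).comp_contDiffOn hgammaU
    have hB1U : ContDiffOn ℝ 1 (deriv (fun s : ℝ =>
        gradient (fun y => L (s, q s, y, deriv (deriv q) s)) (deriv q s))) (Set.Ioo a t) :=
      hBgU.deriv_of_isOpen hUo (by norm_num)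
    have hC1U : ContDiffOn ℝ 1 (deriv (fun s : ℝ =>
        gradient (fun y => L (s, q s, deriv q s, y)) (deriv (deriv q) s))) (Set.Ioo a t) :=
      hCgU.deriv_of_isOpen hUo (by norm_num)
    have hC2U : ContinuousOn (deriv (deriv (fun s : ℝ =>
        gradient (fun y => L (s, q s, deriv q s, y)) (deriv (deriv q) s)))) (Set.Ioo a t) :=
      (hC1U.deriv_of_isOpen (m := 0) hUo (by norm_num)).continuousOn
    have hBder : ∀ x ∈ Set.Ioo a t, HasDerivAt (fun s : ℝ =>
        gradient (fun y => L (s, q s, y, deriv (deriv q) s)) (deriv q s))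
        (deriv (fun s : ℝ =>
          gradient (fun y => L (s, q s, y, deriv (deriv q) s)) (deriv q s)) x) x :=
      fun x hx => ((hBgU.contDiffAt (hUo.mem_nhds hx)).differentiableAt
        (by norm_num)).hasDerivAt
    have hCder : ∀ x ∈ Set.Ioo a t, HasDerivAt (fun s : ℝ =>
        gradient (fun y => L (s, q s, deriv q s, y)) (deriv (deriv q) s))
        (deriv (fun s : ℝ =>
          gradient (fun y => L (s, q s, deriv q s, y)) (deriv (deriv q) s)) x) x :=
      fun x hx => ((hCgU.contDiffAt (hUo.mem_nhds hx)).differentiableAt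
        (by norm_num)).hasDerivAt
    have hC1der : ∀ x ∈ Set.Ioo a t, HasDerivAt (deriv (fun s : ℝ =>
        gradient (fun y => L (s, q s, deriv q s, y)) (deriv (deriv q) s)))
        (deriv (deriv (fun s : ℝ =>
          gradient (fun y => L (s, q s, deriv q s, y)) (deriv (deriv q) s))) x) x :=
      fun x hx => ((hC1U.contDiffAt (hUo.mem_nhds hx)).differentiableAt
        (by norm_num)).hasDerivAt
    have hwder : ∀ (β : ℝ) (x : ℝ), x < t →
        HasDerivAt (fun s : ℝ => (t - s) ^ β) (-(β * (t - x) ^ (β - 1))) x := by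
      intro β x hx
      have h1 : HasDerivAt (fun s : ℝ => t - s) (-1) x := by
        simpa using (hasDerivAt_id x).const_sub t
      have h2 := (Real.hasDerivAt_rpow_const (x := t - x) (p := β)
        (Or.inl (by linarith))).comp x h1
      refine h2.congr_deriv ?_
      ring
    have hw1der : ∀ x : ℝ, x < t →
        HasDerivAt (fun s : ℝ => (t - s) ^ (α - 1)) ((1 - α) * (t - x) ^ (α - 2)) x := by
      intro x hx
      convert hwder (α - 1) x hx using 1
      rw [show α - 1 - 1 = α - 2 by ring]; ring
    have hw2der : ∀ x : ℝ, x < t →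
        HasDerivAt (fun s : ℝ => (1 - α) * (t - s) ^ (α - 2))
          ((1 - α) * (2 - α) * (t - x) ^ (α - 3)) x := by
      intro x hx
      have h := (hwder (α - 2) x hx).const_mul (1 - α)
      refine h.congr_deriv ?_
      rw [show α - 2 - 1 = α - 3 by ring]; ring
    have hwcU : ∀ β : ℝ, ContinuousOn (fun s : ℝ => (t - s) ^ β) (Set.Ioo a t) := by
      intro β
      apply ContinuousOn.rpow_const ((continuous_const.sub continuous_id).continuousOn)
      intro x hx
      exact Or.inl (by exact sub_ne_zero.mpr (ne_of_gt hx.2))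
    -- ===== Step V : first variation =====
    have hV : ∀ c d : ℝ, a < c → c < d → d < t →
        ∀ φ : ℝ → ℝ, ContDiff ℝ 4 φ → tsupport φ ⊆ Set.Icc c d →
        ∀ v : EuclideanSpace ℝ (Fin n),
        ∫ s in a..t,
          (φ s * ⟪gradient (fun y => L (s, y, deriv q s, deriv (deriv q) s)) (q s), v⟫_ℝ
            + deriv φ s * ⟪gradient (fun y => L (s, q s, y, deriv (deriv q) s)) (deriv q s), v⟫_ℝ
            + deriv (deriv φ) s *
                ⟪gradient (fun y => L (s, q s, deriv q s, y)) (deriv (deriv q) s), v⟫_ℝ)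
          * (t - s) ^ (α - 1) = 0 := by
      intro c d hac hcd hdt φ hφ4 hφsupp v
      have hφd : Differentiable ℝ φ := hφ4.differentiable (by norm_num)
      have hφ3 : ContDiff ℝ 3 (deriv φ) :=
        ((contDiff_succ_iff_deriv (n := 3)).mp (by norm_num at hφ4 ⊢; exact hφ4)).2.2
      have hφ2 : ContDiff ℝ 2 (deriv (deriv φ)) :=
        ((contDiff_succ_iff_deriv (n := 2)).mp (by norm_num at hφ3 ⊢; exact hφ3)).2.2
      have hφd2 : Differentiable ℝ (deriv φ) := hφ3.differentiable (by norm_num)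
      have hd1 : deriv (fun s : ℝ => φ s • v) = fun s : ℝ => deriv φ s • v :=
        funext fun s => deriv_smul_const (hφd s) v
      have hd2 : deriv (fun s : ℝ => deriv φ s • v) = fun s : ℝ => deriv (deriv φ) s • v :=
        funext fun s => deriv_smul_const (hφd2 s) v
      have hsubt : tsupport (deriv φ) ⊆ tsupport φ :=
        closure_minimal support_deriv_subset (isClosed_tsupport φ)
      have hnot : ∀ x : ℝ, x < c ∨ d < x →
          φ x = 0 ∧ deriv φ x = 0 ∧ deriv (deriv φ) x = 0 := by
        intro x hx
        have hxn : x ∉ Set.Icc c d := by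
          rcases hx with h | h <;> simp only [Set.mem_Icc, not_and, not_le] <;> intro h' <;>
            first | linarith | (exfalso; linarith)
        have h1 : x ∉ tsupport φ := fun hmem => hxn (hφsupp hmem)
        have h2 : x ∉ tsupport (deriv φ) := fun hmem => h1 (hsubt hmem)
        have h3 : x ∉ tsupport (deriv (deriv φ)) := fun hmem =>
          h2 (closure_minimal support_deriv_subset (isClosed_tsupport _) hmem)
        exact ⟨image_eq_zero_of_notMem_tsupport h1, image_eq_zero_of_notMem_tsupport h2,
          image_eq_zero_of_notMem_tsupport h3⟩
      have HS := hstat (fun s => φ s • v) (hφ4.smul contDiff_const)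
        (by beta_reduce; rw [(hnot a (Or.inl hac)).1, zero_smul])
        (by beta_reduce; rw [(hnot t (Or.inr hdt)).1, zero_smul])
        (by rw [hd1]; beta_reduce; rw [(hnot a (Or.inl hac)).2.1, zero_smul])
        (by rw [hd1]; beta_reduce; rw [(hnot t (Or.inr hdt)).2.1, zero_smul])
      rw [hd1, hd2] at HS
      simp only [] at HS
      -- curve notation
      set γf : ℝ → ℝ × EuclideanSpace ℝ (Fin n) × EuclideanSpace ℝ (Fin n) ×
          EuclideanSpace ℝ (Fin n) := fun s => (s, q s, deriv q s, deriv (deriv q) s) with hγf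
      set Df : ℝ → ℝ × EuclideanSpace ℝ (Fin n) × EuclideanSpace ℝ (Fin n) ×
          EuclideanSpace ℝ (Fin n) :=
        fun s => ((0:ℝ), φ s • v, deriv φ s • v, deriv (deriv φ) s • v) with hDf
      set Γf : ℝ → ℝ × EuclideanSpace ℝ (Fin n) × EuclideanSpace ℝ (Fin n) ×
          EuclideanSpace ℝ (Fin n) :=
        fun s => (s, q s, derivWithin q (Set.Icc a t) s,
          derivWithin (derivWithin q (Set.Icc a t)) (Set.Icc a t) s) with hΓf
      have hDcont : Continuous Df := by
        rw [hDf]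
        exact continuous_const.prodMk ((hφ4.continuous.smul continuous_const).prodMk
          ((hφ3.continuous.smul continuous_const).prodMk
            (hφ2.continuous.smul continuous_const)))
      have hudo : UniqueDiffOn ℝ (Set.Icc a t) := uniqueDiffOn_Icc hat
      have hQ1c : ContinuousOn (derivWithin q (Set.Icc a t)) (Set.Icc a t) :=
        hq.continuousOn_derivWithin hudo (by norm_num)
      have hQ13 : ContDiffOn ℝ 3 (derivWithin q (Set.Icc a t)) (Set.Icc a t) :=
        hq.derivWithin hudo (by norm_num)
      have hQ2c : ContinuousOn (derivWithin (derivWithin q (Set.Icc a t)) (Set.Icc a t))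
          (Set.Icc a t) := hQ13.continuousOn_derivWithin hudo (by norm_num)
      have hΓc : ContinuousOn Γf (Set.Icc a t) := by
        rw [hΓf]
        exact continuousOn_id.prodMk (hq.continuousOn.prodMk (hQ1c.prodMk hQ2c))
      have hγeq : ∀ s ∈ Set.Ioo a t, γf s = Γf s := by
        intro s hs
        have hIccnhds : Set.Icc a t ∈ 𝓝 s := Icc_mem_nhds hs.1 hs.2
        have h1 : deriv q s = derivWithin q (Set.Icc a t) s :=
          (derivWithin_of_mem_nhds hIccnhds).symm
        have hev : deriv q =ᶠ[𝓝 s] derivWithin q (Set.Icc a t) := by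
          filter_upwards [hUo.mem_nhds hs] with x hx
          exact (derivWithin_of_mem_nhds (Icc_mem_nhds hx.1 hx.2)).symm
        have h2 : deriv (deriv q) s
            = derivWithin (derivWithin q (Set.Icc a t)) (Set.Icc a t) s := by
          rw [hev.deriv_eq]
          exact (derivWithin_of_mem_nhds hIccnhds).symm
        rw [hγf, hΓf]
        simp only [h1, h2]
      -- compact bounds
      have hGcont : ContinuousOn (fun z : ℝ × ℝ => Γf z.1 + z.2 • Df z.1)
          ((Set.Icc a t) ×ˢ (Set.Icc (-1:ℝ) 1)) :=
        (hΓc.comp continuous_fst.continuousOn (fun z hz => hz.1)).add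
          ((continuous_snd.continuousOn).smul ((hDcont.comp continuous_fst).continuousOn))
      have hKcpt : IsCompact ((fun z : ℝ × ℝ => Γf z.1 + z.2 • Df z.1) ''
          ((Set.Icc a t) ×ˢ (Set.Icc (-1:ℝ) 1))) :=
        (isCompact_Icc.prod isCompact_Icc).image_of_continuousOn hGcont
      obtain ⟨M, hM⟩ := hKcpt.exists_bound_of_continuousOn
        ((hL.continuous_fderiv (by norm_num)).continuousOn)
      obtain ⟨M0, hM0⟩ := hKcpt.exists_bound_of_continuousOn (hL.continuous.continuousOn)
      obtain ⟨CD, hCD⟩ := (isCompact_Icc (a := a) (b := t)).exists_bound_of_continuousOn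
        hDcont.continuousOn
      have hmemK : ∀ s ∈ Set.Ioo a t, ∀ ε : ℝ, ε ∈ Set.Icc (-1:ℝ) 1 →
          (γf s + ε • Df s) ∈ ((fun z : ℝ × ℝ => Γf z.1 + z.2 • Df z.1) ''
            ((Set.Icc a t) ×ˢ (Set.Icc (-1:ℝ) 1))) := by
        intro s hs ε hε
        refine ⟨(s, ε), ⟨⟨hs.1.le, hs.2.le⟩, hε⟩, ?_⟩
        simp only []
        rw [hγeq s hs]
      -- measurability
      have hIw := falva_weight_integrable a t α hα0
      have hmIoc : Set.uIoc a t = Set.Ioc a t := uIoc_of_le hat.le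
      have haeIoo : ∀ᵐ s : ℝ, s ∈ Set.uIoc a t → s ∈ Set.Ioo a t := by
        have h0 : ∀ᵐ s : ℝ, s ≠ t := by
          rw [ae_iff]
          simp only [not_not, Set.setOf_eq_eq_singleton]
          exact measure_singleton t
        filter_upwards [h0] with s hst hmem
        rw [hmIoc] at hmem
        exact ⟨hmem.1, lt_of_le_of_ne hmem.2 hst⟩
      have hresteq : volume.restrict (Set.uIoc a t) = volume.restrict (Set.Ioo a t) := by
        rw [hmIoc]
        exact Measure.restrict_congr_set Ioo_ae_eq_Ioc.symm
      have hγΓae : ∀ᵐ s ∂(volume.restrict (Set.uIoc a t)), γf s = Γf s := by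
        rw [hresteq]
        filter_upwards [ae_restrict_mem measurableSet_Ioo] with s hs
        exact hγeq s hs
      have hFmeas : ∀ ε : ℝ, AEStronglyMeasurable
          (fun s => L (γf s + ε • Df s) * (t - s) ^ (α - 1))
          (volume.restrict (Set.uIoc a t)) := by
        intro ε
        have hg : AEStronglyMeasurable
            (fun s => L (Γf s + ε • Df s) * (t - s) ^ (α - 1))
            (volume.restrict (Set.uIoc a t)) := by
          rw [hresteq]
          exact ((hL.continuous.comp_continuousOn
            ((hΓc.mono Set.Ioo_subset_Icc_self).add
              ((hDcont.const_smul ε).continuousOn))).mul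
                (hwcU (α - 1))).aestronglyMeasurable measurableSet_Ioo
        apply hg.congr
        filter_upwards [hγΓae] with s hs
        rw [hs]
      have hF'meas : AEStronglyMeasurable
          (fun s => (fderiv ℝ L (γf s + (0:ℝ) • Df s)) (Df s) * (t - s) ^ (α - 1))
          (volume.restrict (Set.uIoc a t)) := by
        have hg : AEStronglyMeasurable
            (fun s => (fderiv ℝ L (Γf s + (0:ℝ) • Df s)) (Df s) * (t - s) ^ (α - 1))
            (volume.restrict (Set.uIoc a t)) := by
          rw [hresteq]
          apply ContinuousOn.aestronglyMeasurable _ measurableSet_Ioo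
          exact (((((hL.continuous_fderiv (by norm_num)).comp_continuousOn
            ((hΓc.mono Set.Ioo_subset_Icc_self).add
              ((hDcont.const_smul (0:ℝ)).continuousOn))).clm_apply
                hDcont.continuousOn)).mul (hwcU (α - 1)))
        apply hg.congr
        filter_upwards [hγΓae] with s hs
        rw [hs]
      have hFdiff : ∀ (s ε : ℝ), HasDerivAt (fun e => L (γf s + e • Df s) * (t - s) ^ (α - 1))
          ((fderiv ℝ L (γf s + ε • Df s)) (Df s) * (t - s) ^ (α - 1)) ε := by
        intro s ε
        have hline : HasDerivAt (fun e : ℝ => γf s + e • Df s) (Df s) ε := by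
          simpa using ((hasDerivAt_id ε).smul_const (Df s)).const_add (γf s)
        exact ((hLd (γf s + ε • Df s)).hasFDerivAt.comp_hasDerivAt ε hline).mul_const _
      have hwnn : ∀ s ∈ Set.uIoc a t, 0 ≤ (t - s) ^ (α - 1) := by
        intro s hs
        apply Real.rpow_nonneg
        rw [hmIoc] at hs
        linarith [hs.2]
      have h_bound : ∀ᵐ s : ℝ, s ∈ Set.uIoc a t → ∀ ε ∈ Metric.ball (0:ℝ) 1,
          ‖(fderiv ℝ L (γf s + ε • Df s)) (Df s) * (t - s) ^ (α - 1)‖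
            ≤ (max M 0 * max CD 0) * (t - s) ^ (α - 1) := by
        filter_upwards [haeIoo] with s hs hmem ε hε
        have hsIoo := hs hmem
        have hεI : ε ∈ Set.Icc (-1:ℝ) 1 := by
          rw [Metric.mem_ball, Real.dist_eq, sub_zero] at hε
          have := abs_lt.mp hε
          exact ⟨this.1.le, this.2.le⟩
        have hK := hmemK s hsIoo ε hεI
        have h1 : ‖fderiv ℝ L (γf s + ε • Df s)‖ ≤ max M 0 :=
          le_trans (hM _ hK) (le_max_left _ _)
        have h2 : ‖Df s‖ ≤ max CD 0 :=
          le_trans (hCD s ⟨hsIoo.1.le, hsIoo.2.le⟩) (le_max_left _ _)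
        rw [norm_mul, Real.norm_eq_abs ((t - s) ^ (α - 1)), abs_of_nonneg (hwnn s hmem)]
        apply mul_le_mul_of_nonneg_right _ (hwnn s hmem)
        calc ‖(fderiv ℝ L (γf s + ε • Df s)) (Df s)‖
            ≤ ‖fderiv ℝ L (γf s + ε • Df s)‖ * ‖Df s‖ :=
              (fderiv ℝ L (γf s + ε • Df s)).le_opNorm (Df s)
          _ ≤ max M 0 * max CD 0 :=
              mul_le_mul h1 h2 (norm_nonneg _) (le_max_right _ _)
      have hbint : IntervalIntegrable
          (fun s => (max M 0 * max CD 0) * (t - s) ^ (α - 1)) volume a t :=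
        hIw.const_mul _
      have hF0int : IntervalIntegrable
          (fun s => L (γf s + (0:ℝ) • Df s) * (t - s) ^ (α - 1)) volume a t := by
        rw [intervalIntegrable_iff]
        apply Integrable.mono' (intervalIntegrable_iff.mp (hIw.const_mul (max M0 0)))
          (hFmeas 0)
        filter_upwards [ae_restrict_of_ae haeIoo, ae_restrict_mem measurableSet_uIoc]
          with s hs hmem
        have hsIoo := hs hmem
        have hK := hmemK s hsIoo 0 (by constructor <;> norm_num)
        have h1 : ‖L (γf s + (0:ℝ) • Df s)‖ ≤ max M0 0 :=
          le_trans (hM0 _ hK) (le_max_left _ _)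
        rw [norm_mul, Real.norm_eq_abs ((t - s) ^ (α - 1)), abs_of_nonneg (hwnn s hmem)]
        exact mul_le_mul_of_nonneg_right h1 (hwnn s hmem)
      have hdiffae : ∀ᵐ s : ℝ, s ∈ Set.uIoc a t → ∀ ε ∈ Metric.ball (0:ℝ) 1,
          HasDerivAt (fun e => L (γf s + e • Df s) * (t - s) ^ (α - 1))
            ((fderiv ℝ L (γf s + ε • Df s)) (Df s) * (t - s) ^ (α - 1)) ε :=
        Filter.Eventually.of_forall (fun s _ ε _ => hFdiff s ε)
      have HDI := intervalIntegral.hasDerivAt_integral_of_dominated_loc_of_deriv_le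
        (F := fun ε s => L (γf s + ε • Df s) * (t - s) ^ (α - 1))
        (F' := fun ε s => (fderiv ℝ L (γf s + ε • Df s)) (Df s) * (t - s) ^ (α - 1))
        (x₀ := (0:ℝ)) (s := Metric.ball (0:ℝ) 1) (Metric.ball_mem_nhds _ one_pos)
        (Filter.Eventually.of_forall hFmeas) hF0int hF'meas h_bound hbint hdiffae
      have HD2 := HasDerivAt.const_mul (1 / Real.Gamma α) HDI.2
      have hfeq : (fun ε : ℝ => 1 / Real.Gamma α * ∫ s in a..t,
          L (s, q s + ε • (φ s • v), deriv q s + ε • (deriv φ s • v),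
            deriv (deriv q) s + ε • (deriv (deriv φ) s • v)) * (t - s) ^ (α - 1))
          = fun ε : ℝ => 1 / Real.Gamma α * ∫ s in a..t,
            L (γf s + ε • Df s) * (t - s) ^ (α - 1) := by
        funext ε
        congr 1
        have hintg : ∀ s : ℝ, γf s + ε • Df s
            = (s, q s + ε • (φ s • v), deriv q s + ε • (deriv φ s • v),
                deriv (deriv q) s + ε • (deriv (deriv φ) s • v)) := by
          intro s
          rw [hγf, hDf]
          simp only [Prod.smul_mk, Prod.mk_add_mk, smul_zero, add_zero]
        simp only [hintg]
      rw [hfeq] at HS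
      have huniq := HS.unique HD2
      have hGamma : Real.Gamma α ≠ 0 := (Real.Gamma_pos_of_pos hα0).ne'
      have hint0 : ∫ s in a..t,
          (fderiv ℝ L (γf s + (0:ℝ) • Df s)) (Df s) * (t - s) ^ (α - 1) = 0 := by
        rcases mul_eq_zero.mp huniq.symm with h | h
        · exact absurd h (one_div_ne_zero hGamma)
        · exact h
      have hpt : ∀ s : ℝ,
          (φ s * ⟪gradient (fun y => L (s, y, deriv q s, deriv (deriv q) s)) (q s), v⟫_ℝ
            + deriv φ s * ⟪gradient (fun y => L (s, q s, y, deriv (deriv q) s)) (deriv q s), v⟫_ℝ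
            + deriv (deriv φ) s *
                ⟪gradient (fun y => L (s, q s, deriv q s, y)) (deriv (deriv q) s), v⟫_ℝ)
            * (t - s) ^ (α - 1)
          = (fderiv ℝ L (γf s + (0:ℝ) • Df s)) (Df s) * (t - s) ^ (α - 1) := by
        intro s
        rw [zero_smul, add_zero, hγf, hDf]
        simp only []
        rw [falva_decomp hLd]
        simp only []
        rw [real_inner_smul_right, real_inner_smul_right, real_inner_smul_right]
      calc ∫ s in a..t,
            (φ s * ⟪gradient (fun y => L (s, y, deriv q s, deriv (deriv q) s)) (q s), v⟫_ℝ
              + deriv φ s * ⟪gradient (fun y => L (s, q s, y, deriv (deriv q) s)) (deriv q s), v⟫_ℝ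
              + deriv (deriv φ) s *
                  ⟪gradient (fun y => L (s, q s, deriv q s, y)) (deriv (deriv q) s), v⟫_ℝ)
            * (t - s) ^ (α - 1)
          = ∫ s in a..t,
            (fderiv ℝ L (γf s + (0:ℝ) • Df s)) (Df s) * (t - s) ^ (α - 1) :=
            intervalIntegral.integral_congr (fun s _ => hpt s)
        _ = 0 := hint0

    -- continuity of the Euler-Lagrange expression
    have hKcont : ∀ v : EuclideanSpace ℝ (Fin n), ContinuousOn (fun s : ℝ =>
        ⟪gradient (fun y => L (s, y, deriv q s, deriv (deriv q) s)) (q s), v⟫_ℝ * (t - s) ^ (α - 1)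
            - (⟪deriv (fun r => gradient (fun y => L (r, q r, y, deriv (deriv q) r)) (deriv q r)) s, v⟫_ℝ * (t - s) ^ (α - 1)
              + ⟪gradient (fun y => L (s, q s, y, deriv (deriv q) s)) (deriv q s), v⟫_ℝ * ((1 - α) * (t - s) ^ (α - 2)))
            + (⟪deriv (deriv (fun r => gradient (fun y => L (r, q r, deriv q r, y)) (deriv (deriv q) r))) s, v⟫_ℝ * (t - s) ^ (α - 1)
              + 2 * ⟪deriv (fun r => gradient (fun y => L (r, q r, deriv q r, y)) (deriv (deriv q) r)) s, v⟫_ℝ * ((1 - α) * (t - s) ^ (α - 2))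
              + ⟪gradient (fun y => L (s, q s, deriv q s, y)) (deriv (deriv q) s), v⟫_ℝ * ((1 - α) * (2 - α) * (t - s) ^ (α - 3)))) (Set.Ioo a t) := by
      intro v
      have hiA : ContinuousOn (fun s : ℝ =>
          ⟪gradient (fun y => L (s, y, deriv q s, deriv (deriv q) s)) (q s), v⟫_ℝ)
          (Set.Ioo a t) := ContinuousOn.inner (𝕜 := ℝ) hAgU.continuousOn continuousOn_const
      have hiB : ContinuousOn (fun s : ℝ =>
          ⟪gradient (fun y => L (s, q s, y, deriv (deriv q) s)) (deriv q s), v⟫_ℝ)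
          (Set.Ioo a t) := ContinuousOn.inner (𝕜 := ℝ) hBgU.continuousOn continuousOn_const
      have hiC : ContinuousOn (fun s : ℝ =>
          ⟪gradient (fun y => L (s, q s, deriv q s, y)) (deriv (deriv q) s), v⟫_ℝ)
          (Set.Ioo a t) := ContinuousOn.inner (𝕜 := ℝ) hCgU.continuousOn continuousOn_const
      have hiB1 : ContinuousOn (fun s : ℝ =>
          ⟪deriv (fun r => gradient (fun y => L (r, q r, y, deriv (deriv q) r)) (deriv q r)) s,
            v⟫_ℝ) (Set.Ioo a t) :=
        ContinuousOn.inner (𝕜 := ℝ) hB1U.continuousOn continuousOn_const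
      have hiC1 : ContinuousOn (fun s : ℝ =>
          ⟪deriv (fun r => gradient (fun y => L (r, q r, deriv q r, y)) (deriv (deriv q) r)) s,
            v⟫_ℝ) (Set.Ioo a t) :=
        ContinuousOn.inner (𝕜 := ℝ) hC1U.continuousOn continuousOn_const
      have hiC2 : ContinuousOn (fun s : ℝ =>
          ⟪deriv (deriv (fun r =>
            gradient (fun y => L (r, q r, deriv q r, y)) (deriv (deriv q) r))) s, v⟫_ℝ)
          (Set.Ioo a t) := ContinuousOn.inner (𝕜 := ℝ) hC2U continuousOn_const
      exact ((hiA.mul (hwcU (α - 1))).sub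
        ((hiB1.mul (hwcU (α - 1))).add (hiB.mul (continuousOn_const.mul (hwcU (α - 2)))))).add
        (((hiC2.mul (hwcU (α - 1))).add
          ((continuousOn_const.mul hiC1).mul (continuousOn_const.mul (hwcU (α - 2))))).add
          (hiC.mul (continuousOn_const.mul (hwcU (α - 3)))))
    -- ===== Step 2 : integration by parts =====
    have hIBP : ∀ c d : ℝ, a < c → c < d → d < t →
        ∀ φ : ℝ → ℝ, ContDiff ℝ 4 φ → tsupport φ ⊆ Set.Icc c d →
        ∀ v : EuclideanSpace ℝ (Fin n),
        ∫ s in ((a + c)/2)..((d + t)/2), φ s *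
          (⟪gradient (fun y => L (s, y, deriv q s, deriv (deriv q) s)) (q s), v⟫_ℝ * (t - s) ^ (α - 1)
            - (⟪deriv (fun r => gradient (fun y => L (r, q r, y, deriv (deriv q) r)) (deriv q r)) s, v⟫_ℝ * (t - s) ^ (α - 1)
              + ⟪gradient (fun y => L (s, q s, y, deriv (deriv q) s)) (deriv q s), v⟫_ℝ * ((1 - α) * (t - s) ^ (α - 2)))
            + (⟪deriv (deriv (fun r => gradient (fun y => L (r, q r, deriv q r, y)) (deriv (deriv q) r))) s, v⟫_ℝ * (t - s) ^ (α - 1)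
              + 2 * ⟪deriv (fun r => gradient (fun y => L (r, q r, deriv q r, y)) (deriv (deriv q) r)) s, v⟫_ℝ * ((1 - α) * (t - s) ^ (α - 2))
              + ⟪gradient (fun y => L (s, q s, deriv q s, y)) (deriv (deriv q) s), v⟫_ℝ * ((1 - α) * (2 - α) * (t - s) ^ (α - 3)))) = 0 := by
      intro c d hac hcd hdt φ hφ4 hφsupp v
      have hVi := hV c d hac hcd hdt φ hφ4 hφsupp v
      have hφd : Differentiable ℝ φ := hφ4.differentiable (by norm_num)
      have hφ3 : ContDiff ℝ 3 (deriv φ) :=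
        ((contDiff_succ_iff_deriv (n := 3)).mp (by norm_num at hφ4 ⊢; exact hφ4)).2.2
      have hφ2 : ContDiff ℝ 2 (deriv (deriv φ)) :=
        ((contDiff_succ_iff_deriv (n := 2)).mp (by norm_num at hφ3 ⊢; exact hφ3)).2.2
      have hφd2 : Differentiable ℝ (deriv φ) := hφ3.differentiable (by norm_num)
      have hsubt : tsupport (deriv φ) ⊆ tsupport φ :=
        closure_minimal support_deriv_subset (isClosed_tsupport φ)
      have hnot : ∀ x : ℝ, x < c ∨ d < x →
          φ x = 0 ∧ deriv φ x = 0 ∧ deriv (deriv φ) x = 0 := by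
        intro x hx
        have hxn : x ∉ Set.Icc c d := by
          rcases hx with h | h <;> simp only [Set.mem_Icc, not_and, not_le] <;> intro h' <;>
            first | linarith | (exfalso; linarith)
        have h1 : x ∉ tsupport φ := fun hmem => hxn (hφsupp hmem)
        have h2 : x ∉ tsupport (deriv φ) := fun hmem => h1 (hsubt hmem)
        have h3 : x ∉ tsupport (deriv (deriv φ)) := fun hmem =>
          h2 (closure_minimal support_deriv_subset (isClosed_tsupport _) hmem)
        exact ⟨image_eq_zero_of_notMem_tsupport h1, image_eq_zero_of_notMem_tsupport h2,
          image_eq_zero_of_notMem_tsupport h3⟩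
      have hnotIcc : ∀ x : ℝ, x ∉ Set.Icc c d → x < c ∨ d < x := by
        intro x hx
        by_contra hcon
        push_neg at hcon
        exact hx ⟨hcon.1, hcon.2⟩
      have hac' : a < (a + c)/2 := by linarith
      have hc'c : (a + c)/2 < c := by linarith
      have hdd' : d < (d + t)/2 := by linarith
      have hd't : (d + t)/2 < t := by linarith
      have hc'd' : (a + c)/2 < (d + t)/2 := by linarith
      have hIccU : Set.Icc ((a + c)/2) ((d + t)/2) ⊆ Set.Ioo a t :=
        fun x hx => ⟨lt_of_lt_of_le hac' hx.1, lt_of_le_of_lt hx.2 hd't⟩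
      have huicc : Set.uIcc ((a + c)/2) ((d + t)/2) = Set.Icc ((a + c)/2) ((d + t)/2) :=
        uIcc_of_le hc'd'.le
      have hsup0 : ∀ x : ℝ, x ∉ Set.Icc c d →
          (φ x * ⟪gradient (fun y => L (x, y, deriv q x, deriv (deriv q) x)) (q x), v⟫_ℝ
            + deriv φ x * ⟪gradient (fun y => L (x, q x, y, deriv (deriv q) x)) (deriv q x), v⟫_ℝ
            + deriv (deriv φ) x *
                ⟪gradient (fun y => L (x, q x, deriv q x, y)) (deriv (deriv q) x), v⟫_ℝ)
            * (t - x) ^ (α - 1) = 0 := by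
        intro x hx
        obtain ⟨h1, h2, h3⟩ := hnot x (hnotIcc x hx)
        rw [h1, h2, h3]
        ring
      have hsup0' : ∀ x : ℝ, x ∉ Set.Icc c d →
          φ x * (⟪gradient (fun y => L (x, y, deriv q x, deriv (deriv q) x)) (q x), v⟫_ℝ * (t - x) ^ (α - 1)
            - (⟪deriv (fun r => gradient (fun y => L (r, q r, y, deriv (deriv q) r)) (deriv q r)) x, v⟫_ℝ * (t - x) ^ (α - 1)
              + ⟪gradient (fun y => L (x, q x, y, deriv (deriv q) x)) (deriv q x), v⟫_ℝ * ((1 - α) * (t - x) ^ (α - 2)))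
            + (⟪deriv (deriv (fun r => gradient (fun y => L (r, q r, deriv q r, y)) (deriv (deriv q) r))) x, v⟫_ℝ * (t - x) ^ (α - 1)
              + 2 * ⟪deriv (fun r => gradient (fun y => L (r, q r, deriv q r, y)) (deriv (deriv q) r)) x, v⟫_ℝ * ((1 - α) * (t - x) ^ (α - 2))
              + ⟪gradient (fun y => L (x, q x, deriv q x, y)) (deriv (deriv q) x), v⟫_ℝ * ((1 - α) * (2 - α) * (t - x) ^ (α - 3)))) = 0 := by
        intro x hx
        rw [(hnot x (hnotIcc x hx)).1, zero_mul]
      have hIccIoc1 : Set.Icc c d ⊆ Set.Ioc a t :=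
        fun x hx => ⟨lt_of_lt_of_le hac hx.1, le_trans hx.2 hdt.le⟩
      have hIccIoc2 : Set.Icc c d ⊆ Set.Ioc ((a + c)/2) ((d + t)/2) :=
        fun x hx => ⟨lt_of_lt_of_le hc'c hx.1, le_trans hx.2 hdd'.le⟩
      have hsub1 := (Function.support_subset_iff'.mpr hsup0).trans hIccIoc1
      have hsub2 := (Function.support_subset_iff'.mpr hsup0).trans hIccIoc2
      have hΨder : ∀ x ∈ Set.uIcc ((a + c)/2) ((d + t)/2),
          HasDerivAt (fun s : ℝ =>
            φ s * (⟪gradient (fun y => L (s, q s, y, deriv (deriv q) s)) (deriv q s), v⟫_ℝ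
                * (t - s) ^ (α - 1))
            + deriv φ s * (⟪gradient (fun y => L (s, q s, deriv q s, y)) (deriv (deriv q) s), v⟫_ℝ
                * (t - s) ^ (α - 1))
            - φ s * (⟪deriv (fun r => gradient (fun y => L (r, q r, deriv q r, y))
                  (deriv (deriv q) r)) s, v⟫_ℝ * (t - s) ^ (α - 1)
                + ⟪gradient (fun y => L (s, q s, deriv q s, y)) (deriv (deriv q) s), v⟫_ℝ
                  * ((1 - α) * (t - s) ^ (α - 2))))
          (deriv φ x * (⟪gradient (fun y => L (x, q x, y, deriv (deriv q) x)) (deriv q x), v⟫_ℝ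
              * (t - x) ^ (α - 1))
            + φ x * (⟪deriv (fun r => gradient (fun y => L (r, q r, y, deriv (deriv q) r))
                  (deriv q r)) x, v⟫_ℝ * (t - x) ^ (α - 1)
                + ⟪gradient (fun y => L (x, q x, y, deriv (deriv q) x)) (deriv q x), v⟫_ℝ
                  * ((1 - α) * (t - x) ^ (α - 2)))
            + (deriv (deriv φ) x *
                (⟪gradient (fun y => L (x, q x, deriv q x, y)) (deriv (deriv q) x), v⟫_ℝ
                  * (t - x) ^ (α - 1))
              + deriv φ x * (⟪deriv (fun r => gradient (fun y => L (r, q r, deriv q r, y))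
                    (deriv (deriv q) r)) x, v⟫_ℝ * (t - x) ^ (α - 1)
                  + ⟪gradient (fun y => L (x, q x, deriv q x, y)) (deriv (deriv q) x), v⟫_ℝ
                    * ((1 - α) * (t - x) ^ (α - 2))))
            - (deriv φ x * (⟪deriv (fun r => gradient (fun y => L (r, q r, deriv q r, y))
                    (deriv (deriv q) r)) x, v⟫_ℝ * (t - x) ^ (α - 1)
                  + ⟪gradient (fun y => L (x, q x, deriv q x, y)) (deriv (deriv q) x), v⟫_ℝ
                    * ((1 - α) * (t - x) ^ (α - 2)))
              + φ x * ((⟪deriv (deriv (fun r => gradient (fun y => L (r, q r, deriv q r, y))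
                      (deriv (deriv q) r))) x, v⟫_ℝ * (t - x) ^ (α - 1)
                    + ⟪deriv (fun r => gradient (fun y => L (r, q r, deriv q r, y))
                      (deriv (deriv q) r)) x, v⟫_ℝ * ((1 - α) * (t - x) ^ (α - 2)))
                  + (⟪deriv (fun r => gradient (fun y => L (r, q r, deriv q r, y))
                      (deriv (deriv q) r)) x, v⟫_ℝ * ((1 - α) * (t - x) ^ (α - 2))
                    + ⟪gradient (fun y => L (x, q x, deriv q x, y)) (deriv (deriv q) x), v⟫_ℝ
                      * ((1 - α) * (2 - α) * (t - x) ^ (α - 3)))))) x := by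
        intro x hx
        rw [huicc] at hx
        have hxU : x ∈ Set.Ioo a t := hIccU hx
        have hxt : x < t := hxU.2
        have hφx : HasDerivAt φ (deriv φ x) x := (hφd x).hasDerivAt
        have hφ'x : HasDerivAt (deriv φ) (deriv (deriv φ) x) x := (hφd2 x).hasDerivAt
        have hwx := hw1der x hxt
        have hw1x := hw2der x hxt
        have hiBx : HasDerivAt (fun s : ℝ =>
            ⟪gradient (fun y => L (s, q s, y, deriv (deriv q) s)) (deriv q s), v⟫_ℝ)
            (⟪deriv (fun r => gradient (fun y => L (r, q r, y, deriv (deriv q) r))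
              (deriv q r)) x, v⟫_ℝ) x := by
          simpa using HasDerivAt.inner (𝕜 := ℝ) (hBder x hxU) (hasDerivAt_const x v)
        have hiCx : HasDerivAt (fun s : ℝ =>
            ⟪gradient (fun y => L (s, q s, deriv q s, y)) (deriv (deriv q) s), v⟫_ℝ)
            (⟪deriv (fun r => gradient (fun y => L (r, q r, deriv q r, y))
              (deriv (deriv q) r)) x, v⟫_ℝ) x := by
          simpa using HasDerivAt.inner (𝕜 := ℝ) (hCder x hxU) (hasDerivAt_const x v)
        have hiC1x : HasDerivAt (fun s : ℝ =>
            ⟪deriv (fun r => gradient (fun y => L (r, q r, deriv q r, y))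
              (deriv (deriv q) r)) s, v⟫_ℝ)
            (⟪deriv (deriv (fun r => gradient (fun y => L (r, q r, deriv q r, y))
              (deriv (deriv q) r))) x, v⟫_ℝ) x := by
          simpa using HasDerivAt.inner (𝕜 := ℝ) (hC1der x hxU) (hasDerivAt_const x v)
        exact ((hφx.mul (hiBx.mul hwx)).add (hφ'x.mul (hiCx.mul hwx))).sub
          (hφx.mul ((hiC1x.mul hwx).add (hiCx.mul hw1x)))
      have hiBc : ContinuousOn (fun s : ℝ =>
          ⟪gradient (fun y => L (s, q s, y, deriv (deriv q) s)) (deriv q s), v⟫_ℝ)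
          (Set.Ioo a t) := ContinuousOn.inner (𝕜 := ℝ) hBgU.continuousOn continuousOn_const
      have hiCc : ContinuousOn (fun s : ℝ =>
          ⟪gradient (fun y => L (s, q s, deriv q s, y)) (deriv (deriv q) s), v⟫_ℝ)
          (Set.Ioo a t) := ContinuousOn.inner (𝕜 := ℝ) hCgU.continuousOn continuousOn_const
      have hiB1c : ContinuousOn (fun s : ℝ =>
          ⟪deriv (fun r => gradient (fun y => L (r, q r, y, deriv (deriv q) r)) (deriv q r)) s,
            v⟫_ℝ) (Set.Ioo a t) :=
        ContinuousOn.inner (𝕜 := ℝ) hB1U.continuousOn continuousOn_const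
      have hiC1c : ContinuousOn (fun s : ℝ =>
          ⟪deriv (fun r => gradient (fun y => L (r, q r, deriv q r, y)) (deriv (deriv q) r)) s,
            v⟫_ℝ) (Set.Ioo a t) :=
        ContinuousOn.inner (𝕜 := ℝ) hC1U.continuousOn continuousOn_const
      have hiC2c : ContinuousOn (fun s : ℝ =>
          ⟪deriv (deriv (fun r =>
            gradient (fun y => L (r, q r, deriv q r, y)) (deriv (deriv q) r))) s, v⟫_ℝ)
          (Set.Ioo a t) := ContinuousOn.inner (𝕜 := ℝ) hC2U continuousOn_const
      have hΨdint : IntervalIntegrable (fun x : ℝ =>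
          deriv φ x * (⟪gradient (fun y => L (x, q x, y, deriv (deriv q) x)) (deriv q x), v⟫_ℝ
              * (t - x) ^ (α - 1))
            + φ x * (⟪deriv (fun r => gradient (fun y => L (r, q r, y, deriv (deriv q) r))
                  (deriv q r)) x, v⟫_ℝ * (t - x) ^ (α - 1)
                + ⟪gradient (fun y => L (x, q x, y, deriv (deriv q) x)) (deriv q x), v⟫_ℝ
                  * ((1 - α) * (t - x) ^ (α - 2)))
            + (deriv (deriv φ) x *
                (⟪gradient (fun y => L (x, q x, deriv q x, y)) (deriv (deriv q) x), v⟫_ℝ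
                  * (t - x) ^ (α - 1))
              + deriv φ x * (⟪deriv (fun r => gradient (fun y => L (r, q r, deriv q r, y))
                    (deriv (deriv q) r)) x, v⟫_ℝ * (t - x) ^ (α - 1)
                  + ⟪gradient (fun y => L (x, q x, deriv q x, y)) (deriv (deriv q) x), v⟫_ℝ
                    * ((1 - α) * (t - x) ^ (α - 2))))
            - (deriv φ x * (⟪deriv (fun r => gradient (fun y => L (r, q r, deriv q r, y))
                    (deriv (deriv q) r)) x, v⟫_ℝ * (t - x) ^ (α - 1)
                  + ⟪gradient (fun y => L (x, q x, deriv q x, y)) (deriv (deriv q) x), v⟫_ℝ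
                    * ((1 - α) * (t - x) ^ (α - 2)))
              + φ x * ((⟪deriv (deriv (fun r => gradient (fun y => L (r, q r, deriv q r, y))
                      (deriv (deriv q) r))) x, v⟫_ℝ * (t - x) ^ (α - 1)
                    + ⟪deriv (fun r => gradient (fun y => L (r, q r, deriv q r, y))
                      (deriv (deriv q) r)) x, v⟫_ℝ * ((1 - α) * (t - x) ^ (α - 2)))
                  + (⟪deriv (fun r => gradient (fun y => L (r, q r, deriv q r, y))
                      (deriv (deriv q) r)) x, v⟫_ℝ * ((1 - α) * (t - x) ^ (α - 2))
                    + ⟪gradient (fun y => L (x, q x, deriv q x, y)) (deriv (deriv q) x), v⟫_ℝ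
                      * ((1 - α) * (2 - α) * (t - x) ^ (α - 3)))))) volume ((a + c)/2) ((d + t)/2) := by
        apply ContinuousOn.intervalIntegrable
        rw [huicc]
        apply ContinuousOn.sub
        · exact ((hφ3.continuous.continuousOn.mul
            ((hiBc.mul (hwcU (α - 1))).mono hIccU)).add
              (hφ4.continuous.continuousOn.mul
                (((hiB1c.mul (hwcU (α - 1))).add
                  (hiBc.mul (continuousOn_const.mul (hwcU (α - 2))))).mono hIccU))).add
              ((hφ2.continuous.continuousOn.mul
                ((hiCc.mul (hwcU (α - 1))).mono hIccU)).add
                (hφ3.continuous.continuousOn.mul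
                  (((hiC1c.mul (hwcU (α - 1))).add
                    (hiCc.mul (continuousOn_const.mul (hwcU (α - 2))))).mono hIccU)))
        · exact (hφ3.continuous.continuousOn.mul
            (((hiC1c.mul (hwcU (α - 1))).add
              (hiCc.mul (continuousOn_const.mul (hwcU (α - 2))))).mono hIccU)).add
            (hφ4.continuous.continuousOn.mul
              ((((hiC2c.mul (hwcU (α - 1))).add
                (hiC1c.mul (continuousOn_const.mul (hwcU (α - 2))))).add
                ((hiC1c.mul (continuousOn_const.mul (hwcU (α - 2)))).add
                  (hiCc.mul (continuousOn_const.mul (hwcU (α - 3)))))).mono hIccU))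
      have hftc := intervalIntegral.integral_eq_sub_of_hasDerivAt hΨder hΨdint
      have hbc1 : φ ((a + c)/2) = 0 := (hnot _ (Or.inl hc'c)).1
      have hbc2 : deriv φ ((a + c)/2) = 0 := (hnot _ (Or.inl hc'c)).2.1
      have hbd1 : φ ((d + t)/2) = 0 := (hnot _ (Or.inr hdd')).1
      have hbd2 : deriv φ ((d + t)/2) = 0 := (hnot _ (Or.inr hdd')).2.1
      have hzeroPsi : ∫ x in ((a + c)/2)..((d + t)/2), (fun x : ℝ =>
          deriv φ x * (⟪gradient (fun y => L (x, q x, y, deriv (deriv q) x)) (deriv q x), v⟫_ℝ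
              * (t - x) ^ (α - 1))
            + φ x * (⟪deriv (fun r => gradient (fun y => L (r, q r, y, deriv (deriv q) r))
                  (deriv q r)) x, v⟫_ℝ * (t - x) ^ (α - 1)
                + ⟪gradient (fun y => L (x, q x, y, deriv (deriv q) x)) (deriv q x), v⟫_ℝ
                  * ((1 - α) * (t - x) ^ (α - 2)))
            + (deriv (deriv φ) x *
                (⟪gradient (fun y => L (x, q x, deriv q x, y)) (deriv (deriv q) x), v⟫_ℝ
                  * (t - x) ^ (α - 1))
              + deriv φ x * (⟪deriv (fun r => gradient (fun y => L (r, q r, deriv q r, y))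
                    (deriv (deriv q) r)) x, v⟫_ℝ * (t - x) ^ (α - 1)
                  + ⟪gradient (fun y => L (x, q x, deriv q x, y)) (deriv (deriv q) x), v⟫_ℝ
                    * ((1 - α) * (t - x) ^ (α - 2))))
            - (deriv φ x * (⟪deriv (fun r => gradient (fun y => L (r, q r, deriv q r, y))
                    (deriv (deriv q) r)) x, v⟫_ℝ * (t - x) ^ (α - 1)
                  + ⟪gradient (fun y => L (x, q x, deriv q x, y)) (deriv (deriv q) x), v⟫_ℝ
                    * ((1 - α) * (t - x) ^ (α - 2)))
              + φ x * ((⟪deriv (deriv (fun r => gradient (fun y => L (r, q r, deriv q r, y))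
                      (deriv (deriv q) r))) x, v⟫_ℝ * (t - x) ^ (α - 1)
                    + ⟪deriv (fun r => gradient (fun y => L (r, q r, deriv q r, y))
                      (deriv (deriv q) r)) x, v⟫_ℝ * ((1 - α) * (t - x) ^ (α - 2)))
                  + (⟪deriv (fun r => gradient (fun y => L (r, q r, deriv q r, y))
                      (deriv (deriv q) r)) x, v⟫_ℝ * ((1 - α) * (t - x) ^ (α - 2))
                    + ⟪gradient (fun y => L (x, q x, deriv q x, y)) (deriv (deriv q) x), v⟫_ℝ
                      * ((1 - α) * (2 - α) * (t - x) ^ (α - 3)))))) x = 0 := by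
        rw [hftc]
        try simp only []
        rw [hbc1, hbc2, hbd1, hbd2]
        ring
      have hKint : IntervalIntegrable (fun s : ℝ => φ s *
          (⟪gradient (fun y => L (s, y, deriv q s, deriv (deriv q) s)) (q s), v⟫_ℝ * (t - s) ^ (α - 1)
            - (⟪deriv (fun r => gradient (fun y => L (r, q r, y, deriv (deriv q) r)) (deriv q r)) s, v⟫_ℝ * (t - s) ^ (α - 1)
              + ⟪gradient (fun y => L (s, q s, y, deriv (deriv q) s)) (deriv q s), v⟫_ℝ * ((1 - α) * (t - s) ^ (α - 2)))
            + (⟪deriv (deriv (fun r => gradient (fun y => L (r, q r, deriv q r, y)) (deriv (deriv q) r))) s, v⟫_ℝ * (t - s) ^ (α - 1)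
              + 2 * ⟪deriv (fun r => gradient (fun y => L (r, q r, deriv q r, y)) (deriv (deriv q) r)) s, v⟫_ℝ * ((1 - α) * (t - s) ^ (α - 2))
              + ⟪gradient (fun y => L (s, q s, deriv q s, y)) (deriv (deriv q) s), v⟫_ℝ * ((1 - α) * (2 - α) * (t - s) ^ (α - 3))))) volume ((a + c)/2) ((d + t)/2) := by
        apply ContinuousOn.intervalIntegrable
        rw [huicc]
        exact hφ4.continuous.continuousOn.mul ((hKcont v).mono hIccU)
      have e1 : ∫ x : ℝ,
          (φ x * ⟪gradient (fun y => L (x, y, deriv q x, deriv (deriv q) x)) (q x), v⟫_ℝ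
            + deriv φ x * ⟪gradient (fun y => L (x, q x, y, deriv (deriv q) x)) (deriv q x), v⟫_ℝ
            + deriv (deriv φ) x *
                ⟪gradient (fun y => L (x, q x, deriv q x, y)) (deriv (deriv q) x), v⟫_ℝ)
            * (t - x) ^ (α - 1) = 0 := by
        rw [← intervalIntegral.integral_eq_integral_of_support_subset hsub1]
        exact hVi
      have e2 : ∫ s in ((a + c)/2)..((d + t)/2),
          (φ s * ⟪gradient (fun y => L (s, y, deriv q s, deriv (deriv q) s)) (q s), v⟫_ℝ
            + deriv φ s * ⟪gradient (fun y => L (s, q s, y, deriv (deriv q) s)) (deriv q s), v⟫_ℝ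
            + deriv (deriv φ) s *
                ⟪gradient (fun y => L (s, q s, deriv q s, y)) (deriv (deriv q) s), v⟫_ℝ)
            * (t - s) ^ (α - 1) = 0 := by
        rw [intervalIntegral.integral_eq_integral_of_support_subset hsub2]
        exact e1
      have e3 : ∫ s in ((a + c)/2)..((d + t)/2),
          (φ s * ⟪gradient (fun y => L (s, y, deriv q s, deriv (deriv q) s)) (q s), v⟫_ℝ
            + deriv φ s * ⟪gradient (fun y => L (s, q s, y, deriv (deriv q) s)) (deriv q s), v⟫_ℝ
            + deriv (deriv φ) s *
                ⟪gradient (fun y => L (s, q s, deriv q s, y)) (deriv (deriv q) s), v⟫_ℝ)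
            * (t - s) ^ (α - 1)
          = (∫ s in ((a + c)/2)..((d + t)/2), φ s *
            (⟪gradient (fun y => L (s, y, deriv q s, deriv (deriv q) s)) (q s), v⟫_ℝ * (t - s) ^ (α - 1)
            - (⟪deriv (fun r => gradient (fun y => L (r, q r, y, deriv (deriv q) r)) (deriv q r)) s, v⟫_ℝ * (t - s) ^ (α - 1)
              + ⟪gradient (fun y => L (s, q s, y, deriv (deriv q) s)) (deriv q s), v⟫_ℝ * ((1 - α) * (t - s) ^ (α - 2)))
            + (⟪deriv (deriv (fun r => gradient (fun y => L (r, q r, deriv q r, y)) (deriv (deriv q) r))) s, v⟫_ℝ * (t - s) ^ (α - 1)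
              + 2 * ⟪deriv (fun r => gradient (fun y => L (r, q r, deriv q r, y)) (deriv (deriv q) r)) s, v⟫_ℝ * ((1 - α) * (t - s) ^ (α - 2))
              + ⟪gradient (fun y => L (s, q s, deriv q s, y)) (deriv (deriv q) s), v⟫_ℝ * ((1 - α) * (2 - α) * (t - s) ^ (α - 3)))))
          + ∫ x in ((a + c)/2)..((d + t)/2), (fun x : ℝ =>
          deriv φ x * (⟪gradient (fun y => L (x, q x, y, deriv (deriv q) x)) (deriv q x), v⟫_ℝ
              * (t - x) ^ (α - 1))
            + φ x * (⟪deriv (fun r => gradient (fun y => L (r, q r, y, deriv (deriv q) r))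
                  (deriv q r)) x, v⟫_ℝ * (t - x) ^ (α - 1)
                + ⟪gradient (fun y => L (x, q x, y, deriv (deriv q) x)) (deriv q x), v⟫_ℝ
                  * ((1 - α) * (t - x) ^ (α - 2)))
            + (deriv (deriv φ) x *
                (⟪gradient (fun y => L (x, q x, deriv q x, y)) (deriv (deriv q) x), v⟫_ℝ
                  * (t - x) ^ (α - 1))
              + deriv φ x * (⟪deriv (fun r => gradient (fun y => L (r, q r, deriv q r, y))
                    (deriv (deriv q) r)) x, v⟫_ℝ * (t - x) ^ (α - 1)
                  + ⟪gradient (fun y => L (x, q x, deriv q x, y)) (deriv (deriv q) x), v⟫_ℝ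
                    * ((1 - α) * (t - x) ^ (α - 2))))
            - (deriv φ x * (⟪deriv (fun r => gradient (fun y => L (r, q r, deriv q r, y))
                    (deriv (deriv q) r)) x, v⟫_ℝ * (t - x) ^ (α - 1)
                  + ⟪gradient (fun y => L (x, q x, deriv q x, y)) (deriv (deriv q) x), v⟫_ℝ
                    * ((1 - α) * (t - x) ^ (α - 2)))
              + φ x * ((⟪deriv (deriv (fun r => gradient (fun y => L (r, q r, deriv q r, y))
                      (deriv (deriv q) r))) x, v⟫_ℝ * (t - x) ^ (α - 1)
                    + ⟪deriv (fun r => gradient (fun y => L (r, q r, deriv q r, y))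
                      (deriv (deriv q) r)) x, v⟫_ℝ * ((1 - α) * (t - x) ^ (α - 2)))
                  + (⟪deriv (fun r => gradient (fun y => L (r, q r, deriv q r, y))
                      (deriv (deriv q) r)) x, v⟫_ℝ * ((1 - α) * (t - x) ^ (α - 2))
                    + ⟪gradient (fun y => L (x, q x, deriv q x, y)) (deriv (deriv q) x), v⟫_ℝ
                      * ((1 - α) * (2 - α) * (t - x) ^ (α - 3)))))) x := by
        rw [← intervalIntegral.integral_add hKint hΨdint]
        apply intervalIntegral.integral_congr
        intro x hx
        simp only []
        ring
      rw [e2, hzeroPsi, add_zero] at e3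
      exact e3.symm
    have key0 : ∀ v : EuclideanSpace ℝ (Fin n), ¬ (0 <
        ⟪gradient (fun y => L (θ, y, deriv q θ, deriv (deriv q) θ)) (q θ), v⟫_ℝ * (t - θ) ^ (α - 1)
            - (⟪deriv (fun r => gradient (fun y => L (r, q r, y, deriv (deriv q) r)) (deriv q r)) θ, v⟫_ℝ * (t - θ) ^ (α - 1)
              + ⟪gradient (fun y => L (θ, q θ, y, deriv (deriv q) θ)) (deriv q θ), v⟫_ℝ * ((1 - α) * (t - θ) ^ (α - 2)))
            + (⟪deriv (deriv (fun r => gradient (fun y => L (r, q r, deriv q r, y)) (deriv (deriv q) r))) θ, v⟫_ℝ * (t - θ) ^ (α - 1)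
              + 2 * ⟪deriv (fun r => gradient (fun y => L (r, q r, deriv q r, y)) (deriv (deriv q) r)) θ, v⟫_ℝ * ((1 - α) * (t - θ) ^ (α - 2))
              + ⟪gradient (fun y => L (θ, q θ, deriv q θ, y)) (deriv (deriv q) θ), v⟫_ℝ * ((1 - α) * (2 - α) * (t - θ) ^ (α - 3)))) := by
      intro v hpos
      have hKat : ContinuousAt (fun s : ℝ =>
          ⟪gradient (fun y => L (s, y, deriv q s, deriv (deriv q) s)) (q s), v⟫_ℝ * (t - s) ^ (α - 1)
            - (⟪deriv (fun r => gradient (fun y => L (r, q r, y, deriv (deriv q) r)) (deriv q r)) s, v⟫_ℝ * (t - s) ^ (α - 1)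
              + ⟪gradient (fun y => L (s, q s, y, deriv (deriv q) s)) (deriv q s), v⟫_ℝ * ((1 - α) * (t - s) ^ (α - 2)))
            + (⟪deriv (deriv (fun r => gradient (fun y => L (r, q r, deriv q r, y)) (deriv (deriv q) r))) s, v⟫_ℝ * (t - s) ^ (α - 1)
              + 2 * ⟪deriv (fun r => gradient (fun y => L (r, q r, deriv q r, y)) (deriv (deriv q) r)) s, v⟫_ℝ * ((1 - α) * (t - s) ^ (α - 2))
              + ⟪gradient (fun y => L (s, q s, deriv q s, y)) (deriv (deriv q) s), v⟫_ℝ * ((1 - α) * (2 - α) * (t - s) ^ (α - 3)))) θ :=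
        (hKcont v).continuousAt (hUo.mem_nhds hθ)
      have hev := hKat.eventually (eventually_gt_nhds hpos)
      have hmem : ({s : ℝ | 0 <
          ⟪gradient (fun y => L (s, y, deriv q s, deriv (deriv q) s)) (q s), v⟫_ℝ * (t - s) ^ (α - 1)
            - (⟪deriv (fun r => gradient (fun y => L (r, q r, y, deriv (deriv q) r)) (deriv q r)) s, v⟫_ℝ * (t - s) ^ (α - 1)
              + ⟪gradient (fun y => L (s, q s, y, deriv (deriv q) s)) (deriv q s), v⟫_ℝ * ((1 - α) * (t - s) ^ (α - 2)))
            + (⟪deriv (deriv (fun r => gradient (fun y => L (r, q r, deriv q r, y)) (deriv (deriv q) r))) s, v⟫_ℝ * (t - s) ^ (α - 1)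
              + 2 * ⟪deriv (fun r => gradient (fun y => L (r, q r, deriv q r, y)) (deriv (deriv q) r)) s, v⟫_ℝ * ((1 - α) * (t - s) ^ (α - 2))
              + ⟪gradient (fun y => L (s, q s, deriv q s, y)) (deriv (deriv q) s), v⟫_ℝ * ((1 - α) * (2 - α) * (t - s) ^ (α - 3)))} ∩ Set.Ioo a t) ∈ 𝓝 θ := Filter.inter_mem hev (hUo.mem_nhds hθ)
      obtain ⟨ρ, hρpos, hρsub⟩ := Metric.nhds_basis_closedBall.mem_iff.mp hmem
      set bump : ContDiffBump θ := ⟨ρ/2, ρ, by positivity, by linarith⟩ with hbump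
      have hbr : bump.rOut = ρ := rfl
      have htb : tsupport (⇑bump) = Set.Icc (θ - ρ) (θ + ρ) := by
        rw [bump.tsupport_eq, hbr, Real.closedBall_eq_Icc]
      have hmem1 : θ - ρ ∈ Metric.closedBall θ ρ := by
        rw [Metric.mem_closedBall, Real.dist_eq, show θ - ρ - θ = -ρ by ring, abs_neg,
          abs_of_nonneg hρpos.le]
      have hmem2 : θ + ρ ∈ Metric.closedBall θ ρ := by
        rw [Metric.mem_closedBall, Real.dist_eq, show θ + ρ - θ = ρ by ring,
          abs_of_nonneg hρpos.le]
      have h1 : θ - ρ ∈ Set.Ioo a t := (hρsub hmem1).2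
      have h2 : θ + ρ ∈ Set.Ioo a t := (hρsub hmem2).2
      have hIN := hIBP (θ - ρ) (θ + ρ) h1.1 (by linarith) h2.2 (⇑bump) bump.contDiff
        (by rw [htb]) v
      have hsuppb : ∀ x : ℝ, x ∉ Set.Ioo (θ - ρ) (θ + ρ) → (⇑bump) x *
          (⟪gradient (fun y => L (x, y, deriv q x, deriv (deriv q) x)) (q x), v⟫_ℝ * (t - x) ^ (α - 1)
            - (⟪deriv (fun r => gradient (fun y => L (r, q r, y, deriv (deriv q) r)) (deriv q r)) x, v⟫_ℝ * (t - x) ^ (α - 1)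
              + ⟪gradient (fun y => L (x, q x, y, deriv (deriv q) x)) (deriv q x), v⟫_ℝ * ((1 - α) * (t - x) ^ (α - 2)))
            + (⟪deriv (deriv (fun r => gradient (fun y => L (r, q r, deriv q r, y)) (deriv (deriv q) r))) x, v⟫_ℝ * (t - x) ^ (α - 1)
              + 2 * ⟪deriv (fun r => gradient (fun y => L (r, q r, deriv q r, y)) (deriv (deriv q) r)) x, v⟫_ℝ * ((1 - α) * (t - x) ^ (α - 2))
              + ⟪gradient (fun y => L (x, q x, deriv q x, y)) (deriv (deriv q) x), v⟫_ℝ * ((1 - α) * (2 - α) * (t - x) ^ (α - 3)))) = 0 := by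
        intro x hx
        have hb0 : (⇑bump) x = 0 := by
          apply bump.zero_of_le_dist
          rw [hbr, Real.dist_eq]
          rcases le_or_gt x (θ - ρ) with h | h
          · exact le_abs.mpr (Or.inr (by linarith))
          · have h' : θ + ρ ≤ x := by
              by_contra hcon
              exact hx ⟨h, not_le.mp hcon⟩
            exact le_abs.mpr (Or.inl (by linarith))
        rw [hb0, zero_mul]
      have hsubb1 : Function.support (fun x : ℝ => (⇑bump) x *
          (⟪gradient (fun y => L (x, y, deriv q x, deriv (deriv q) x)) (q x), v⟫_ℝ * (t - x) ^ (α - 1)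
            - (⟪deriv (fun r => gradient (fun y => L (r, q r, y, deriv (deriv q) r)) (deriv q r)) x, v⟫_ℝ * (t - x) ^ (α - 1)
              + ⟪gradient (fun y => L (x, q x, y, deriv (deriv q) x)) (deriv q x), v⟫_ℝ * ((1 - α) * (t - x) ^ (α - 2)))
            + (⟪deriv (deriv (fun r => gradient (fun y => L (r, q r, deriv q r, y)) (deriv (deriv q) r))) x, v⟫_ℝ * (t - x) ^ (α - 1)
              + 2 * ⟪deriv (fun r => gradient (fun y => L (r, q r, deriv q r, y)) (deriv (deriv q) r)) x, v⟫_ℝ * ((1 - α) * (t - x) ^ (α - 2))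
              + ⟪gradient (fun y => L (x, q x, deriv q x, y)) (deriv (deriv q) x), v⟫_ℝ * ((1 - α) * (2 - α) * (t - x) ^ (α - 3))))) ⊆ Set.Ioc ((a + (θ - ρ))/2) ((θ + ρ + t)/2) :=
        (Function.support_subset_iff'.mpr hsuppb).trans
          (fun x hx => ⟨by linarith [hx.1, h1.1], by linarith [hx.2, h2.2]⟩)
      have hsubb2 : Function.support (fun x : ℝ => (⇑bump) x *
          (⟪gradient (fun y => L (x, y, deriv q x, deriv (deriv q) x)) (q x), v⟫_ℝ * (t - x) ^ (α - 1)
            - (⟪deriv (fun r => gradient (fun y => L (r, q r, y, deriv (deriv q) r)) (deriv q r)) x, v⟫_ℝ * (t - x) ^ (α - 1)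
              + ⟪gradient (fun y => L (x, q x, y, deriv (deriv q) x)) (deriv q x), v⟫_ℝ * ((1 - α) * (t - x) ^ (α - 2)))
            + (⟪deriv (deriv (fun r => gradient (fun y => L (r, q r, deriv q r, y)) (deriv (deriv q) r))) x, v⟫_ℝ * (t - x) ^ (α - 1)
              + 2 * ⟪deriv (fun r => gradient (fun y => L (r, q r, deriv q r, y)) (deriv (deriv q) r)) x, v⟫_ℝ * ((1 - α) * (t - x) ^ (α - 2))
              + ⟪gradient (fun y => L (x, q x, deriv q x, y)) (deriv (deriv q) x), v⟫_ℝ * ((1 - α) * (2 - α) * (t - x) ^ (α - 3))))) ⊆ Set.Ioc (θ - ρ) (θ + ρ) :=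
        (Function.support_subset_iff'.mpr hsuppb).trans Set.Ioo_subset_Ioc_self
      have hz : ∫ s in (θ - ρ)..(θ + ρ), (⇑bump) s *
          (⟪gradient (fun y => L (s, y, deriv q s, deriv (deriv q) s)) (q s), v⟫_ℝ * (t - s) ^ (α - 1)
            - (⟪deriv (fun r => gradient (fun y => L (r, q r, y, deriv (deriv q) r)) (deriv q r)) s, v⟫_ℝ * (t - s) ^ (α - 1)
              + ⟪gradient (fun y => L (s, q s, y, deriv (deriv q) s)) (deriv q s), v⟫_ℝ * ((1 - α) * (t - s) ^ (α - 2)))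
            + (⟪deriv (deriv (fun r => gradient (fun y => L (r, q r, deriv q r, y)) (deriv (deriv q) r))) s, v⟫_ℝ * (t - s) ^ (α - 1)
              + 2 * ⟪deriv (fun r => gradient (fun y => L (r, q r, deriv q r, y)) (deriv (deriv q) r)) s, v⟫_ℝ * ((1 - α) * (t - s) ^ (α - 2))
              + ⟪gradient (fun y => L (s, q s, deriv q s, y)) (deriv (deriv q) s), v⟫_ℝ * ((1 - α) * (2 - α) * (t - s) ^ (α - 3)))) = 0 := by
        rw [intervalIntegral.integral_eq_integral_of_support_subset hsubb2,
          ← intervalIntegral.integral_eq_integral_of_support_subset hsubb1]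
        exact hIN
      have hIccsub : Set.Icc (θ - ρ) (θ + ρ) ⊆ Set.Ioo a t :=
        fun x hx => ⟨lt_of_lt_of_le h1.1 hx.1, lt_of_le_of_lt hx.2 h2.2⟩
      have hposint : 0 < ∫ s in (θ - ρ)..(θ + ρ), (⇑bump) s *
          (⟪gradient (fun y => L (s, y, deriv q s, deriv (deriv q) s)) (q s), v⟫_ℝ * (t - s) ^ (α - 1)
            - (⟪deriv (fun r => gradient (fun y => L (r, q r, y, deriv (deriv q) r)) (deriv q r)) s, v⟫_ℝ * (t - s) ^ (α - 1)
              + ⟪gradient (fun y => L (s, q s, y, deriv (deriv q) s)) (deriv q s), v⟫_ℝ * ((1 - α) * (t - s) ^ (α - 2)))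
            + (⟪deriv (deriv (fun r => gradient (fun y => L (r, q r, deriv q r, y)) (deriv (deriv q) r))) s, v⟫_ℝ * (t - s) ^ (α - 1)
              + 2 * ⟪deriv (fun r => gradient (fun y => L (r, q r, deriv q r, y)) (deriv (deriv q) r)) s, v⟫_ℝ * ((1 - α) * (t - s) ^ (α - 2))
              + ⟪gradient (fun y => L (s, q s, deriv q s, y)) (deriv (deriv q) s), v⟫_ℝ * ((1 - α) * (2 - α) * (t - s) ^ (α - 3)))) := by
        apply intervalIntegral.intervalIntegral_pos_of_pos_on
        · apply ContinuousOn.intervalIntegrable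
          rw [uIcc_of_le (by linarith)]
          exact bump.continuous.continuousOn.mul ((hKcont v).mono hIccsub)
        · intro x hx
          have hxball : x ∈ Metric.ball θ ρ := by
            rw [Real.ball_eq_Ioo]; exact hx
          have hbpos : 0 < (⇑bump) x := bump.pos_of_mem_ball (by rw [hbr]; exact hxball)
          have hKpos := (hρsub (Metric.ball_subset_closedBall hxball)).1
          exact mul_pos hbpos hKpos
        · linarith
      rw [hz] at hposint
      exact lt_irrefl 0 hposint
    intro v
    have hminus : (⟪gradient (fun y => L (θ, y, deriv q θ, deriv (deriv q) θ)) (q θ), -v⟫_ℝ * (t - θ) ^ (α - 1)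
            - (⟪deriv (fun r => gradient (fun y => L (r, q r, y, deriv (deriv q) r)) (deriv q r)) θ, -v⟫_ℝ * (t - θ) ^ (α - 1)
              + ⟪gradient (fun y => L (θ, q θ, y, deriv (deriv q) θ)) (deriv q θ), -v⟫_ℝ * ((1 - α) * (t - θ) ^ (α - 2)))
            + (⟪deriv (deriv (fun r => gradient (fun y => L (r, q r, deriv q r, y)) (deriv (deriv q) r))) θ, -v⟫_ℝ * (t - θ) ^ (α - 1)
              + 2 * ⟪deriv (fun r => gradient (fun y => L (r, q r, deriv q r, y)) (deriv (deriv q) r)) θ, -v⟫_ℝ * ((1 - α) * (t - θ) ^ (α - 2))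
              + ⟪gradient (fun y => L (θ, q θ, deriv q θ, y)) (deriv (deriv q) θ), -v⟫_ℝ * ((1 - α) * (2 - α) * (t - θ) ^ (α - 3))))
        = -(⟪gradient (fun y => L (θ, y, deriv q θ, deriv (deriv q) θ)) (q θ), v⟫_ℝ * (t - θ) ^ (α - 1)
            - (⟪deriv (fun r => gradient (fun y => L (r, q r, y, deriv (deriv q) r)) (deriv q r)) θ, v⟫_ℝ * (t - θ) ^ (α - 1)
              + ⟪gradient (fun y => L (θ, q θ, y, deriv (deriv q) θ)) (deriv q θ), v⟫_ℝ * ((1 - α) * (t - θ) ^ (α - 2)))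
            + (⟪deriv (deriv (fun r => gradient (fun y => L (r, q r, deriv q r, y)) (deriv (deriv q) r))) θ, v⟫_ℝ * (t - θ) ^ (α - 1)
              + 2 * ⟪deriv (fun r => gradient (fun y => L (r, q r, deriv q r, y)) (deriv (deriv q) r)) θ, v⟫_ℝ * ((1 - α) * (t - θ) ^ (α - 2))
              + ⟪gradient (fun y => L (θ, q θ, deriv q θ, y)) (deriv (deriv q) θ), v⟫_ℝ * ((1 - α) * (2 - α) * (t - θ) ^ (α - 3)))) := by
      simp only [inner_neg_right]
      ring
    have k1 := key0 v
    have k2 := key0 (-v)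
    rw [hminus] at k2
    push_neg at k1 k2
    have k2' : (0:ℝ) ≤ ⟪gradient (fun y => L (θ, y, deriv q θ, deriv (deriv q) θ)) (q θ), v⟫_ℝ * (t - θ) ^ (α - 1)
            - (⟪deriv (fun r => gradient (fun y => L (r, q r, y, deriv (deriv q) r)) (deriv q r)) θ, v⟫_ℝ * (t - θ) ^ (α - 1)
              + ⟪gradient (fun y => L (θ, q θ, y, deriv (deriv q) θ)) (deriv q θ), v⟫_ℝ * ((1 - α) * (t - θ) ^ (α - 2)))
            + (⟪deriv (deriv (fun r => gradient (fun y => L (r, q r, deriv q r, y)) (deriv (deriv q) r))) θ, v⟫_ℝ * (t - θ) ^ (α - 1)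
              + 2 * ⟪deriv (fun r => gradient (fun y => L (r, q r, deriv q r, y)) (deriv (deriv q) r)) θ, v⟫_ℝ * ((1 - α) * (t - θ) ^ (α - 2))
              + ⟪gradient (fun y => L (θ, q θ, deriv q θ, y)) (deriv (deriv q) θ), v⟫_ℝ * ((1 - α) * (2 - α) * (t - θ) ^ (α - 3))) := by linarith
    linarith


  -- final algebra
  have hx : (0:ℝ) < t - θ := by linarith
  have hw0 : (0:ℝ) < (t - θ) ^ (α - 1) := Real.rpow_pos_of_pos hx _
  have e2 : (t - θ) ^ (α - 2) = (t - θ) ^ (α - 1) / (t - θ) := by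
    rw [show α - 2 = α - 1 - 1 by ring, Real.rpow_sub_one hx.ne']
  have e3 : (t - θ) ^ (α - 3) = (t - θ) ^ (α - 1) / (t - θ) ^ 2 := by
    rw [show α - 3 = α - 1 - 1 - 1 by ring, Real.rpow_sub_one hx.ne',
      Real.rpow_sub_one hx.ne', div_div, ← pow_two]
  have hc1 : (1 - α) * (t - θ) ^ (α - 2) = (t - θ) ^ (α - 1) * ((1 - α) / (t - θ)) := by
    rw [e2]; ring
  have hc2 : (1 - α) * (2 - α) * (t - θ) ^ (α - 3)
      = (t - θ) ^ (α - 1) * ((1 - α) * (2 - α) / (t - θ) ^ 2) := by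
    rw [e3]; ring
  set A := gradient (fun y => L (θ, y, deriv q θ, deriv (deriv q) θ)) (q θ) with hA
  set B := gradient (fun v => L (θ, q θ, v, deriv (deriv q) θ)) (deriv q θ) with hB
  set C := gradient (fun w => L (θ, q θ, deriv q θ, w)) (deriv (deriv q) θ) with hC
  set B1 := deriv (fun s =>
      gradient (fun v => L (s, q s, v, deriv (deriv q) s)) (deriv q s)) θ with hB1
  set C1 := deriv (fun s =>
      gradient (fun w => L (s, q s, deriv q s, w)) (deriv (deriv q) s)) θ with hC1
  set C2 := deriv (deriv (fun s =>
      gradient (fun w => L (s, q s, deriv q s, w)) (deriv (deriv q) s))) θ with hC2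
  set Z := ((t - θ) ^ (α - 1)) • (A - B1 + C2)
      - ((1 - α) * (t - θ) ^ (α - 2)) • (B - (2:ℝ) • C1)
      + ((1 - α) * (2 - α) * (t - θ) ^ (α - 3)) • C with hZdef
  have hZv : ∀ v : EuclideanSpace ℝ (Fin n), ⟪Z, v⟫_ℝ = 0 := by
    intro v
    have hk := key v
    simp only [hZdef, inner_add_left, inner_sub_left, real_inner_smul_left,
      inner_smul_left, conj_trivial] at *
    linarith
  have hZ : Z = 0 := by
    have := hZv Z
    rwa [real_inner_self_eq_norm_sq, pow_eq_zero_iff (by norm_num), norm_eq_zero] at this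
  have hZ' : ((t - θ) ^ (α - 1)) • (A - B1 + C2)
      - ((1 - α) * (t - θ) ^ (α - 2)) • (B - (2:ℝ) • C1)
      + ((1 - α) * (2 - α) * (t - θ) ^ (α - 3)) • C = 0 := hZ
  rw [hc1, hc2] at hZ'
  have hE : ((t - θ) ^ (α - 1)) • ((A - B1 + C2)
      - (((1 - α) / (t - θ)) • (B - (2:ℝ) • C1)
        - ((1 - α) * (2 - α) / (t - θ) ^ 2) • C)) = 0 := by
    rw [← hZ']
    module
  have hvec := (smul_eq_zero.mp hE).resolve_left hw0.ne'
  have := sub_eq_zero.mp hvec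
  exact this
end

section
/- Let n, m ≥ 1, let a < t be real numbers, let 0 < α ≤ 1, let L : ℝ × (ℝⁿ)^{m+1} → ℝ be of class C^{2m}, and let q : ℝ → ℝⁿ be of class C^{2m} on [a,t]. For i = 0,…,m let P_i(θ) = ∂_{i+2}L(θ, q(θ), q'(θ), …, q^{(m)}(θ)), for j = 1,…,m let ψ^j(θ) = Σ_{i=0}^{m−j} (−1)^i (d^i/dθ^i) P_{i+j}(θ), and let F(θ) = ((1−α)/(t−θ)) Σ_{i=1}^{m} i·(−1)^{i−1} (d^{i−1}/dθ^{i−1}) P_i(θ) + Σ_{k=2}^{m} Σ_{i=2}^{k} (−1)^{i−1} (∏_{j=1}^{i}(j−α)) / (t−θ)^i · binom(k, k−i) · (d^{k−i}/dθ^{k−i}) P_k(θ). Suppose that q satisfies the higher-order Euler–Lagrange equations Σ_{i=0}^{m} (−1)^i (d^i/dθ^i) P_i(θ) = F(θ) for all θ ∈ (a,t). Then for all θ ∈ (a,t): (d/dθ)[ L(θ, q(θ), q'(θ), …, q^{(m)}(θ)) − Σ_{j=1}^{m} ⟨ψ^j(θ), q^{(j)}(θ)⟩ ] = ∂₁L(θ,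 q(θ), q'(θ), …, q^{(m)}(θ)) + ⟨F(θ), q'(θ)⟩. -/
open scoped RealInnerProductSpace

private lemma falva_contDiffOn_iteratedDeriv {E : Type*} [NormedAddCommGroup E]
    [NormedSpace ℝ E] {s : Set ℝ} (hs : IsOpen s) :
    ∀ (i : ℕ) (f : ℝ → E) (N M : ℕ), ContDiffOn ℝ N f s → M + i ≤ N →
      ContDiffOn ℝ M (iteratedDeriv i f) s := by
  intro i
  induction i with
  | zero =>
    intro f N M hf h
    rw [iteratedDeriv_zero]
    exact hf.of_le (by exact_mod_cast (by omega : M ≤ N))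
  | succ i ih =>
    intro f N M hf h
    rw [iteratedDeriv_succ']
    refine ih (deriv f) (N - 1) M (hf.deriv_of_isOpen hs ?_) (by omega)
    exact_mod_cast (by omega : (N - 1) + 1 ≤ N)

private lemma falva_hasDerivAt_iteratedDeriv {E : Type*} [NormedAddCommGroup E]
    [NormedSpace ℝ E] {s : Set ℝ} (hs : IsOpen s) {θ : ℝ} (hθ : θ ∈ s)
    {f : ℝ → E} {N i : ℕ} (hf : ContDiffOn ℝ N f s) (h : i + 1 ≤ N) :
    HasDerivAt (iteratedDeriv i f) (iteratedDeriv (i + 1) f θ) θ := by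
  have h1 : ContDiffOn ℝ 1 (iteratedDeriv i f) s :=
    falva_contDiffOn_iteratedDeriv hs i f N 1 hf (by omega)
  have h2 : DifferentiableAt ℝ (iteratedDeriv i f) θ :=
    (h1.differentiableOn one_ne_zero θ hθ).differentiableAt (hs.mem_nhds hθ)
  rw [iteratedDeriv_succ]
  exact h2.hasDerivAt

noncomputable def falvaJ (n m : ℕ) (idx : Fin (m + 1)) :
    EuclideanSpace ℝ (Fin n) →L[ℝ] ℝ × (Fin (m + 1) → EuclideanSpace ℝ (Fin n)) :=
  (0 : EuclideanSpace ℝ (Fin n) →L[ℝ] ℝ).prod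
    (ContinuousLinearMap.pi (Pi.single idx (ContinuousLinearMap.id ℝ _)))

lemma falvaJ_apply (n m : ℕ) (idx : Fin (m + 1)) (v : EuclideanSpace ℝ (Fin n)) :
    falvaJ n m idx v = (0, Pi.single idx v) := by
  refine Prod.ext ?_ ?_
  · rfl
  · funext j
    simp only [falvaJ, ContinuousLinearMap.prod_apply, ContinuousLinearMap.pi_apply]
    rcases eq_or_ne j idx with rfl | hne
    · simp [Pi.single_apply]
    · simp [Pi.single_apply, hne]

/-- **Higher-order DuBois-Reymond condition for FALVA problems.**
With `P i θ = ∂_{i+2}L(θ, q(θ), …, q^{(m)}(θ))`, momenta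
`ψ^j(θ) = ∑_{i=0}^{m-j} (-1)^i (d^i/dθ^i) P_{i+j}(θ)`, and external force
`F(θ) = ((1-α)/(t-θ)) ∑_{i=1}^m i (-1)^{i-1} (d^{i-1}/dθ^{i-1}) P_i(θ)
  + ∑_{k=2}^m ∑_{i=2}^k (-1)^{i-1} (∏_{j=1}^i (j-α))/(t-θ)^i C(k,k-i)
      (d^{k-i}/dθ^{k-i}) P_k(θ)`,
if `q` satisfies the higher-order Euler–Lagrange equations
`∑_{i=0}^m (-1)^i (d^i/dθ^i) P_i(θ) = F(θ)` on `(a,t)`, then on `(a,t)`: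
`(d/dθ)[L(θ, q, …, q^{(m)}) - ∑_{j=1}^m ⟨ψ^j(θ), q^{(j)}(θ)⟩]
  = ∂₁L(θ, q, …, q^{(m)}) + ⟨F(θ), q'(θ)⟩`. -/
theorem falva_higher_order_dubois_reymond
    (n m : ℕ) (hn : 1 ≤ n) (hm : 1 ≤ m) (a t α : ℝ) (hat : a < t)
    (hα0 : 0 < α) (hα1 : α ≤ 1)
    (L : ℝ × (Fin (m + 1) → EuclideanSpace ℝ (Fin n)) → ℝ)
    (hL : ContDiff ℝ (2 * m : ℕ) L)
    (q : ℝ → EuclideanSpace ℝ (Fin n))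
    (hq : ContDiffOn ℝ (2 * m : ℕ) q (Set.Icc a t))
    (P : ℕ → ℝ → EuclideanSpace ℝ (Fin n))
    (hP : ∀ (i : ℕ) (hi : i < m + 1) (θ : ℝ),
      P i θ = gradient
        (fun y => L (θ, Function.update
          (fun j : Fin (m + 1) => iteratedDeriv (j : ℕ) q θ) ⟨i, hi⟩ y))
        (iteratedDeriv i q θ))
    (ψ : ℕ → ℝ → EuclideanSpace ℝ (Fin n))
    (hψ : ∀ (j : ℕ) (θ : ℝ),
      ψ j θ = ∑ i ∈ Finset.range (m - j + 1),
        (-1 : ℝ) ^ i • iteratedDeriv i (P (i + j)) θ)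
    (F : ℝ → EuclideanSpace ℝ (Fin n))
    (hF : ∀ θ : ℝ,
      F θ = ((1 - α) / (t - θ)) •
              ∑ i ∈ Finset.range (m + 1),
                ((i : ℝ) * (-1 : ℝ) ^ (i - 1)) • iteratedDeriv (i - 1) (P i) θ
          + ∑ k ∈ Finset.range (m + 1), ∑ i ∈ Finset.Icc 2 k,
              ((-1 : ℝ) ^ (i - 1) * (∏ j ∈ Finset.Icc 1 i, ((j : ℝ) - α))
                  / (t - θ) ^ i * (Nat.choose k (k - i) : ℝ)) •
                iteratedDeriv (k - i) (P k) θ)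
    (hEL : ∀ θ ∈ Set.Ioo a t,
      ∑ i ∈ Finset.range (m + 1), (-1 : ℝ) ^ i • iteratedDeriv i (P i) θ = F θ) :
    ∀ θ ∈ Set.Ioo a t,
      deriv (fun s =>
          L (s, fun j : Fin (m + 1) => iteratedDeriv (j : ℕ) q s)
            - ∑ j ∈ Finset.Icc 1 m, ⟪ψ j s, iteratedDeriv j q s⟫) θ
        = deriv (fun s =>
            L (s, fun j : Fin (m + 1) => iteratedDeriv (j : ℕ) q θ)) θ
          + ⟪F θ, deriv q θ⟫ := by
  have hso : IsOpen (Set.Ioo a t) := isOpen_Ioo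
  have hqo : ContDiffOn ℝ (2 * m : ℕ) q (Set.Ioo a t) := hq.mono Set.Ioo_subset_Icc_self
  have hL1 : Differentiable ℝ L :=
    hL.differentiable (by exact_mod_cast (by omega : 2 * m ≠ 0))
  -- gradient identification
  have hPeq : ∀ (i : ℕ) (hi : i < m + 1) (θ' : ℝ),
      P i θ' = (InnerProductSpace.toDual ℝ (EuclideanSpace ℝ (Fin n))).symm
        ((fderiv ℝ L (θ', fun j : Fin (m + 1) => iteratedDeriv (j : ℕ) q θ')).comp
          (falvaJ n m ⟨i, hi⟩)) := by
    intro i hi θ'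
    have hupd : Function.update (fun j : Fin (m + 1) => iteratedDeriv (j : ℕ) q θ')
        (⟨i, hi⟩ : Fin (m + 1)) (iteratedDeriv i q θ')
        = fun j : Fin (m + 1) => iteratedDeriv (j : ℕ) q θ' := by
      funext j
      rcases eq_or_ne j ⟨i, hi⟩ with rfl | hne
      · rw [Function.update_self]
      · rw [Function.update_of_ne hne]
    have h2 : HasFDerivAt
        (fun y : EuclideanSpace ℝ (Fin n) =>
          ((θ' : ℝ), Function.update (fun j : Fin (m + 1) => iteratedDeriv (j : ℕ) q θ') ⟨i, hi⟩ y))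
        (falvaJ n m ⟨i, hi⟩) (iteratedDeriv i q θ') :=
      (hasFDerivAt_const θ' _).prodMk (hasFDerivAt_update _ _)
    have h1 : HasFDerivAt L
        (fderiv ℝ L (θ', fun j : Fin (m + 1) => iteratedDeriv (j : ℕ) q θ'))
        ((θ' : ℝ), Function.update (fun j : Fin (m + 1) => iteratedDeriv (j : ℕ) q θ') ⟨i, hi⟩
          (iteratedDeriv i q θ')) := by
      rw [hupd]
      exact (hL1 _).hasFDerivAt
    have hg : HasFDerivAt
        (fun y => L (θ', Function.update
          (fun j : Fin (m + 1) => iteratedDeriv (j : ℕ) q θ') ⟨i, hi⟩ y))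
        ((fderiv ℝ L (θ', fun j : Fin (m + 1) => iteratedDeriv (j : ℕ) q θ')).comp
          (falvaJ n m ⟨i, hi⟩)) (iteratedDeriv i q θ') := h1.comp (iteratedDeriv i q θ') h2
    rw [hP i hi θ']
    show (InnerProductSpace.toDual ℝ (EuclideanSpace ℝ (Fin n))).symm
        (fderiv ℝ (fun y => L (θ', Function.update
          (fun j : Fin (m + 1) => iteratedDeriv (j : ℕ) q θ') ⟨i, hi⟩ y)) (iteratedDeriv i q θ')) = _
    rw [hg.fderiv]
  -- smoothness of P k on the open interval
  have hPsm : ∀ (k : ℕ), k < m + 1 → ContDiffOn ℝ (m : ℕ) (P k) (Set.Ioo a t) := by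
    intro k hk
    have hfd : ContDiff ℝ (m : ℕ) (fderiv ℝ L) :=
      hL.fderiv_right (by exact_mod_cast (by omega : m + 1 ≤ 2 * m))
    have hΦ : ContDiff ℝ (m : ℕ) (fun z : ℝ × (Fin (m + 1) → EuclideanSpace ℝ (Fin n)) =>
        (InnerProductSpace.toDual ℝ (EuclideanSpace ℝ (Fin n))).symm
          ((fderiv ℝ L z).comp (falvaJ n m ⟨k, hk⟩))) :=
      ((InnerProductSpace.toDual ℝ (EuclideanSpace ℝ (Fin n))).symm.contDiff).comp
        ((((ContinuousLinearMap.compL ℝ (EuclideanSpace ℝ (Fin n))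
          (ℝ × (Fin (m + 1) → EuclideanSpace ℝ (Fin n))) ℝ).flip
            (falvaJ n m ⟨k, hk⟩)).contDiff).comp hfd)
    have hQ : ContDiffOn ℝ (m : ℕ)
        (fun θ' : ℝ => ((θ' : ℝ), fun j : Fin (m + 1) => iteratedDeriv (j : ℕ) q θ'))
        (Set.Ioo a t) := by
      refine ContDiffOn.prodMk contDiffOn_id ?_
      refine contDiffOn_pi.2 fun j => ?_
      exact falva_contDiffOn_iteratedDeriv hso (j : ℕ) q (2 * m) m hqo
        (by have := j.isLt; omega)
    have hfun : P k = (fun z : ℝ × (Fin (m + 1) → EuclideanSpace ℝ (Fin n)) =>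
        (InnerProductSpace.toDual ℝ (EuclideanSpace ℝ (Fin n))).symm
          ((fderiv ℝ L z).comp (falvaJ n m ⟨k, hk⟩))) ∘
        (fun θ' : ℝ => ((θ' : ℝ), fun j : Fin (m + 1) => iteratedDeriv (j : ℕ) q θ')) :=
      funext fun θ' => hPeq k hk θ'
    rw [hfun]
    exact hΦ.comp_contDiffOn hQ
  intro θ hθ
  -- inner product formula at θ
  have hinner : ∀ (i : ℕ) (hi : i < m + 1) (v : EuclideanSpace ℝ (Fin n)),
      ⟪P i θ, v⟫ = fderiv ℝ L (θ, fun j : Fin (m + 1) => iteratedDeriv (j : ℕ) q θ)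
        ((0 : ℝ), Pi.single (⟨i, hi⟩ : Fin (m + 1)) v) := by
    intro i hi v
    rw [hPeq i hi θ, InnerProductSpace.toDual_symm_apply, ContinuousLinearMap.comp_apply,
      falvaJ_apply]
  -- basic derivative facts at θ
  have hqd : ∀ j : ℕ, j ≤ m →
      HasDerivAt (iteratedDeriv j q) (iteratedDeriv (j + 1) q θ) θ := by
    intro j hj
    exact falva_hasDerivAt_iteratedDeriv hso hθ hqo (by omega)
  have hPd : ∀ (k : ℕ), k < m + 1 → ∀ (i : ℕ), i + 1 ≤ m →
      HasDerivAt (iteratedDeriv i (P k)) (iteratedDeriv (i + 1) (P k) θ) θ := by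
    intro k hk i hi
    exact falva_hasDerivAt_iteratedDeriv hso hθ (hPsm k hk) (by exact_mod_cast hi)
  -- derivative of the momenta
  have hψd : ∀ j ∈ Finset.Icc 1 m, HasDerivAt (ψ j) (P (j - 1) θ - ψ (j - 1) θ) θ := by
    intro j hj
    rw [Finset.mem_Icc] at hj
    have h1 : HasDerivAt
        (fun s => ∑ i ∈ Finset.range (m - j + 1), (-1 : ℝ) ^ i • iteratedDeriv i (P (i + j)) s)
        (∑ i ∈ Finset.range (m - j + 1), (-1 : ℝ) ^ i • iteratedDeriv (i + 1) (P (i + j)) θ)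
        θ := by
      refine HasDerivAt.fun_sum fun i hi => ?_
      rw [Finset.mem_range] at hi
      exact (hPd (i + j) (by omega) i (by omega)).const_smul ((-1 : ℝ) ^ i)
    have h2 : ψ j = fun s => ∑ i ∈ Finset.range (m - j + 1),
        (-1 : ℝ) ^ i • iteratedDeriv i (P (i + j)) s := funext fun s => hψ j s
    have key : ψ (j - 1) θ
        + ∑ i ∈ Finset.range (m - j + 1), (-1 : ℝ) ^ i • iteratedDeriv (i + 1) (P (i + j)) θ
        = P (j - 1) θ := by
      rw [hψ (j - 1) θ]
      rw [show m - (j - 1) + 1 = (m - j + 1) + 1 from by omega]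
      rw [Finset.sum_range_succ']
      have hneg : ∑ i ∈ Finset.range (m - j + 1),
          (-1 : ℝ) ^ (i + 1) • iteratedDeriv (i + 1) (P (i + 1 + (j - 1))) θ
          = -∑ i ∈ Finset.range (m - j + 1),
            (-1 : ℝ) ^ i • iteratedDeriv (i + 1) (P (i + j)) θ := by
        rw [← Finset.sum_neg_distrib]
        refine Finset.sum_congr rfl fun i _ => ?_
        rw [show i + 1 + (j - 1) = i + j from by omega, pow_succ, mul_smul]
        simp
      rw [hneg]
      simp only [pow_zero, one_smul, iteratedDeriv_zero, Nat.zero_add]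
      abel
    rw [h2]
    have : P (j - 1) θ - ψ (j - 1) θ
        = ∑ i ∈ Finset.range (m - j + 1), (-1 : ℝ) ^ i • iteratedDeriv (i + 1) (P (i + j)) θ := by
      rw [← key]; abel
    rw [this]
    exact h1
  -- special values of ψ
  have hψ0 : ψ 0 θ = F θ := by
    rw [hψ 0 θ, ← hEL θ hθ]
    simp
  have hψm : ψ m θ = P m θ := by
    rw [hψ m θ]
    simp
  -- chain rule for the full Lagrangian along the curve
  have hQd : HasDerivAt
      (fun s' : ℝ => ((s' : ℝ), fun j : Fin (m + 1) => iteratedDeriv (j : ℕ) q s'))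
      ((1 : ℝ), fun j : Fin (m + 1) => iteratedDeriv ((j : ℕ) + 1) q θ) θ := by
    refine (hasDerivAt_id θ).prodMk ?_
    exact hasDerivAt_pi.2 fun j => hqd (j : ℕ) (by have := j.isLt; omega)
  have hGd : HasDerivAt (fun s : ℝ => L (s, fun j : Fin (m + 1) => iteratedDeriv (j : ℕ) q s))
      (fderiv ℝ L (θ, fun j : Fin (m + 1) => iteratedDeriv (j : ℕ) q θ)
        ((1 : ℝ), fun j : Fin (m + 1) => iteratedDeriv ((j : ℕ) + 1) q θ)) θ :=
    (hL1 _).hasFDerivAt.comp_hasDerivAt θ hQd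
  have hRHS : HasDerivAt (fun s : ℝ => L (s, fun j : Fin (m + 1) => iteratedDeriv (j : ℕ) q θ))
      (fderiv ℝ L (θ, fun j : Fin (m + 1) => iteratedDeriv (j : ℕ) q θ) ((1 : ℝ), 0)) θ :=
    (hL1 _).hasFDerivAt.comp_hasDerivAt θ
      ((hasDerivAt_id θ).prodMk (hasDerivAt_const θ _))
  -- decomposition of the total derivative
  have hRc : fderiv ℝ L (θ, fun j : Fin (m + 1) => iteratedDeriv (j : ℕ) q θ)
        ((1 : ℝ), fun j : Fin (m + 1) => iteratedDeriv ((j : ℕ) + 1) q θ)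
      = fderiv ℝ L (θ, fun j : Fin (m + 1) => iteratedDeriv (j : ℕ) q θ) ((1 : ℝ), 0)
        + ∑ i ∈ Finset.range (m + 1), ⟪P i θ, iteratedDeriv (i + 1) q θ⟫ := by
    have hsplit : ((1 : ℝ), fun j : Fin (m + 1) => iteratedDeriv ((j : ℕ) + 1) q θ)
        = ((1 : ℝ), (0 : Fin (m + 1) → EuclideanSpace ℝ (Fin n)))
          + ∑ j : Fin (m + 1),
            ((0 : ℝ), Pi.single j (iteratedDeriv ((j : ℕ) + 1) q θ)) := by
      have hs2 : ∑ j : Fin (m + 1), ((0 : ℝ), Pi.single j (iteratedDeriv ((j : ℕ) + 1) q θ))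
          = ((0 : ℝ), fun j : Fin (m + 1) => iteratedDeriv ((j : ℕ) + 1) q θ) := by
        refine Prod.ext ?_ ?_
        · simp [Prod.fst_sum]
        · simp only [Prod.snd_sum]
          exact Finset.univ_sum_single _
      rw [hs2]
      simp [Prod.mk_add_mk]
    rw [hsplit, map_add, map_sum]
    congr 1
    rw [← Fin.sum_univ_eq_sum_range (fun i => ⟪P i θ, iteratedDeriv (i + 1) q θ⟫) (m + 1)]
    refine Finset.sum_congr rfl fun j _ => ?_
    rw [hinner (j : ℕ) j.isLt (iteratedDeriv ((j : ℕ) + 1) q θ)]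
  -- derivative of the momentum sum
  have hHd : HasDerivAt
      (fun s : ℝ => ∑ j ∈ Finset.Icc 1 m, ⟪ψ j s, iteratedDeriv j q s⟫)
      (∑ j ∈ Finset.Icc 1 m, (⟪ψ j θ, iteratedDeriv (j + 1) q θ⟫
        + ⟪P (j - 1) θ - ψ (j - 1) θ, iteratedDeriv j q θ⟫)) θ := by
    refine HasDerivAt.fun_sum fun j hj => ?_
    have hj' := Finset.mem_Icc.1 hj
    exact HasDerivAt.inner (𝕜 := ℝ) (hψd j hj) (hqd j hj'.2)
  -- telescoping identity
  have hsum : ∑ j ∈ Finset.Icc 1 m, (⟪ψ j θ, iteratedDeriv (j + 1) q θ⟫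
        + ⟪P (j - 1) θ - ψ (j - 1) θ, iteratedDeriv j q θ⟫)
      = ∑ i ∈ Finset.range (m + 1), ⟪P i θ, iteratedDeriv (i + 1) q θ⟫
        - ⟪F θ, deriv q θ⟫ := by
    have step1 : ∀ j ∈ Finset.Icc 1 m,
        (⟪ψ j θ, iteratedDeriv (j + 1) q θ⟫
          + ⟪P (j - 1) θ - ψ (j - 1) θ, iteratedDeriv j q θ⟫)
        = ⟪P (j - 1) θ, iteratedDeriv ((j - 1) + 1) q θ⟫
          + (⟪ψ j θ, iteratedDeriv (j + 1) q θ⟫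
            - ⟪ψ (j - 1) θ, iteratedDeriv ((j - 1) + 1) q θ⟫) := by
      intro j hj
      have hj' := Finset.mem_Icc.1 hj
      rw [show j - 1 + 1 = j from by omega, inner_sub_left]
      ring
    rw [Finset.sum_congr rfl step1, Finset.sum_add_distrib]
    have e1 : ∑ j ∈ Finset.Icc 1 m, ⟪P (j - 1) θ, iteratedDeriv ((j - 1) + 1) q θ⟫
        = ∑ i ∈ Finset.range m, ⟪P i θ, iteratedDeriv (i + 1) q θ⟫ := by
      rw [← Finset.Ico_add_one_right_eq_Icc, Finset.sum_Ico_eq_sum_range]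
      refine Finset.sum_congr (by norm_num) fun i _ => ?_
      rw [show 1 + i - 1 = i from by omega]
    have e2 : ∑ j ∈ Finset.Icc 1 m, (⟪ψ j θ, iteratedDeriv (j + 1) q θ⟫
          - ⟪ψ (j - 1) θ, iteratedDeriv ((j - 1) + 1) q θ⟫)
        = ⟪P m θ, iteratedDeriv (m + 1) q θ⟫ - ⟪F θ, deriv q θ⟫ := by
      rw [← Finset.Ico_add_one_right_eq_Icc, Finset.sum_Ico_eq_sum_range]
      have hc : ∀ i ∈ Finset.range (m + 1 - 1),
          (⟪ψ (1 + i) θ, iteratedDeriv ((1 + i) + 1) q θ⟫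
            - ⟪ψ (1 + i - 1) θ, iteratedDeriv ((1 + i - 1) + 1) q θ⟫)
          = (fun k => ⟪ψ k θ, iteratedDeriv (k + 1) q θ⟫) (i + 1)
            - (fun k => ⟪ψ k θ, iteratedDeriv (k + 1) q θ⟫) i := by
        intro i _
        rw [show 1 + i = i + 1 from by omega, show i + 1 - 1 = i from by omega]
      rw [Finset.sum_congr rfl hc,
        Finset.sum_range_sub (fun k => ⟪ψ k θ, iteratedDeriv (k + 1) q θ⟫)]
      simp only [show m + 1 - 1 = m from rfl]
      rw [hψm, hψ0, show (0 : ℕ) + 1 = 1 from rfl, iteratedDeriv_one]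
    rw [e1, e2, Finset.sum_range_succ]
    ring
  -- assemble
  have htot : HasDerivAt
      (fun s => L (s, fun j : Fin (m + 1) => iteratedDeriv (j : ℕ) q s)
        - ∑ j ∈ Finset.Icc 1 m, ⟪ψ j s, iteratedDeriv j q s⟫)
      (fderiv ℝ L (θ, fun j : Fin (m + 1) => iteratedDeriv (j : ℕ) q θ)
          ((1 : ℝ), fun j : Fin (m + 1) => iteratedDeriv ((j : ℕ) + 1) q θ)
        - ∑ j ∈ Finset.Icc 1 m, (⟪ψ j θ, iteratedDeriv (j + 1) q θ⟫
          + ⟪P (j - 1) θ - ψ (j - 1) θ, iteratedDeriv j q θ⟫)) θ := hGd.sub hHd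
  rw [htot.deriv, hRHS.deriv, hRc, hsum]
  ring
end

section
/- Let n ≥ 1, let a < t be real numbers, let 0 < α ≤ 1, let L : ℝ × ℝⁿ × ℝⁿ → ℝ be of class C², and let q : ℝ → ℝⁿ be of class C² on [a,t]. Suppose that q satisfies, for all θ ∈ (a,t), the Euler–Lagrange equation ∂₂L(θ, q(θ), q'(θ)) − (d/dθ)[∂₃L(θ, q(θ), q'(θ))] = ((1−α)/(t−θ)) ∂₃L(θ, q(θ), q'(θ)). Then for all θ ∈ (a,t): (d/dθ)[ L(θ, q(θ), q'(θ)) − ⟨∂₃L(θ, q(θ), q'(θ)), q'(θ)⟩ ] = ∂₁L(θ, q(θ), q'(θ)) + ((1−α)/(t−θ)) ⟨∂₃L(θ, q(θ), q'(θ)), q'(θ)⟩. -/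
open scoped RealInnerProductSpace

noncomputable section FALVAaux

private abbrev Eu (n : ℕ) := EuclideanSpace ℝ (Fin n)

private def i2 (n : ℕ) : Eu n →L[ℝ] ℝ × Eu n × Eu n :=
  (ContinuousLinearMap.inr ℝ ℝ (Eu n × Eu n)).comp (ContinuousLinearMap.inl ℝ (Eu n) (Eu n))

private def i3 (n : ℕ) : Eu n →L[ℝ] ℝ × Eu n × Eu n :=
  (ContinuousLinearMap.inr ℝ ℝ (Eu n × Eu n)).comp (ContinuousLinearMap.inr ℝ (Eu n) (Eu n))

private def eDual (n : ℕ) : StrongDual ℝ (Eu n) →L[ℝ] Eu n :=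
  LinearMap.mkContinuous
    { toFun := (InnerProductSpace.toDual ℝ (Eu n)).symm
      map_add' := fun x y => map_add _ x y
      map_smul' := fun r x => by
        rw [(InnerProductSpace.toDual ℝ (Eu n)).symm.map_smulₛₗ r x]; simp } 1
    (fun x => by
      simp [LinearIsometryEquiv.norm_map])

private lemma inner_eDual {n : ℕ} (ψ : StrongDual ℝ (Eu n)) (x : Eu n) :
    ⟪eDual n ψ, x⟫ = ψ x :=
  InnerProductSpace.toDual_symm_apply

private lemma hasFDerivAt_mk2 {n : ℕ} (s : ℝ) (w : Eu n) (y : Eu n) :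
    HasFDerivAt (fun z : Eu n => ((s, z, w) : ℝ × Eu n × Eu n)) (i2 n) y := by
  have h : HasFDerivAt (fun z : Eu n => ((s, z, w) : ℝ × Eu n × Eu n))
      ((0 : Eu n →L[ℝ] ℝ).prod ((ContinuousLinearMap.id ℝ (Eu n)).prod 0)) y :=
    (hasFDerivAt_const s y).prodMk ((hasFDerivAt_id y).prodMk (hasFDerivAt_const w y))
  have he : i2 n = (0 : Eu n →L[ℝ] ℝ).prod ((ContinuousLinearMap.id ℝ (Eu n)).prod 0) := by
    ext x <;> simp [i2]
  rw [he]; exact h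

private lemma hasFDerivAt_mk3 {n : ℕ} (s : ℝ) (y : Eu n) (v : Eu n) :
    HasFDerivAt (fun z : Eu n => ((s, y, z) : ℝ × Eu n × Eu n)) (i3 n) v := by
  have h : HasFDerivAt (fun z : Eu n => ((s, y, z) : ℝ × Eu n × Eu n))
      ((0 : Eu n →L[ℝ] ℝ).prod ((0 : Eu n →L[ℝ] Eu n).prod (ContinuousLinearMap.id ℝ (Eu n)))) v :=
    (hasFDerivAt_const s v).prodMk ((hasFDerivAt_const y v).prodMk (hasFDerivAt_id v))
  have he : i3 n = (0 : Eu n →L[ℝ] ℝ).prod ((0 : Eu n →L[ℝ] Eu n).prod (ContinuousLinearMap.id ℝ (Eu n))) := by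
    ext x <;> simp [i3]
  rw [he]; exact h

private lemma grad3_eq {n : ℕ} {L : ℝ × Eu n × Eu n → ℝ} (hL : Differentiable ℝ L)
    (s : ℝ) (y v : Eu n) :
    gradient (fun w => L (s, y, w)) v = eDual n ((fderiv ℝ L (s, y, v)).comp (i3 n)) := by
  have h : HasFDerivAt (fun w => L (s, y, w)) ((fderiv ℝ L (s, y, v)).comp (i3 n)) v :=
    (hL (s, y, v)).hasFDerivAt.comp v (hasFDerivAt_mk3 s y v)
  show (InnerProductSpace.toDual ℝ (Eu n)).symm (fderiv ℝ (fun w => L (s, y, w)) v) = _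
  rw [h.fderiv]
  rfl

private lemma grad2_eq {n : ℕ} {L : ℝ × Eu n × Eu n → ℝ} (hL : Differentiable ℝ L)
    (s : ℝ) (y v : Eu n) :
    gradient (fun z => L (s, z, v)) y = eDual n ((fderiv ℝ L (s, y, v)).comp (i2 n)) := by
  have h : HasFDerivAt (fun z => L (s, z, v)) ((fderiv ℝ L (s, y, v)).comp (i2 n)) y :=
    (hL (s, y, v)).hasFDerivAt.comp y (hasFDerivAt_mk2 s v y)
  show (InnerProductSpace.toDual ℝ (Eu n)).symm (fderiv ℝ (fun z => L (s, z, v)) y) = _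
  rw [h.fderiv]
  rfl

end FALVAaux

/-- **First-order DuBois-Reymond condition for FALVA problems.**
If `q` satisfies on `(a,t)` the FALVA Euler–Lagrange equation
`∂₂L - d/dθ ∂₃L = ((1-α)/(t-θ)) ∂₃L`, then on `(a,t)`:
`(d/dθ)[L(θ, q, q') - ⟨∂₃L(θ, q, q'), q'⟩]
  = ∂₁L(θ, q, q') + ((1-α)/(t-θ)) ⟨∂₃L(θ, q, q'), q'⟩`. -/
theorem falva_first_order_dubois_reymond
    (n : ℕ) (hn : 1 ≤ n) (a t α : ℝ) (hat : a < t) (hα0 : 0 < α) (hα1 : α ≤ 1)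
    (L : ℝ × EuclideanSpace ℝ (Fin n) × EuclideanSpace ℝ (Fin n) → ℝ)
    (hL : ContDiff ℝ 2 L)
    (q : ℝ → EuclideanSpace ℝ (Fin n))
    (hq : ContDiffOn ℝ 2 q (Set.Icc a t))
    (hEL : ∀ θ ∈ Set.Ioo a t,
      gradient (fun y => L (θ, y, deriv q θ)) (q θ)
          - deriv (fun s => gradient (fun v => L (s, q s, v)) (deriv q s)) θ
        = ((1 - α) / (t - θ)) • gradient (fun v => L (θ, q θ, v)) (deriv q θ)) :
    ∀ θ ∈ Set.Ioo a t,
      deriv (fun s =>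
          L (s, q s, deriv q s)
            - ⟪gradient (fun v => L (s, q s, v)) (deriv q s), deriv q s⟫) θ
        = deriv (fun s => L (s, q θ, deriv q θ)) θ
          + ((1 - α) / (t - θ)) *
              ⟪gradient (fun v => L (θ, q θ, v)) (deriv q θ), deriv q θ⟫ := by
  intro θ hθ
  have hLd : Differentiable ℝ L := hL.differentiable two_ne_zero
  have hopen : IsOpen (Set.Ioo a t) := isOpen_Ioo
  have hmem : Set.Ioo a t ∈ nhds θ := hopen.mem_nhds hθ
  have hqI : ContDiffOn ℝ 2 q (Set.Ioo a t) := hq.mono Set.Ioo_subset_Icc_self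
  have hq1 : DifferentiableAt ℝ q θ :=
    (hqI.differentiableOn two_ne_zero).differentiableAt hmem
  have hq2 : DifferentiableAt ℝ (deriv q) θ :=
    ((hqI.deriv_of_isOpen hopen le_rfl).differentiableOn one_ne_zero).differentiableAt hmem
  have hγ : HasDerivAt (fun s => ((s, q s, deriv q s) : ℝ × Eu n × Eu n))
      ((1 : ℝ), deriv q θ, deriv (deriv q) θ) θ :=
    (hasDerivAt_id θ).prodMk (hq1.hasDerivAt.prodMk hq2.hasDerivAt)
  have hF1 : HasDerivAt (fun s => L (s, q s, deriv q s))
      (fderiv ℝ L (θ, q θ, deriv q θ) (1, deriv q θ, deriv (deriv q) θ)) θ :=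
    (hLd (θ, q θ, deriv q θ)).hasFDerivAt.comp_hasDerivAt θ hγ
  -- the dual-valued partial derivative map
  set Φ : ℝ → (Eu n →L[ℝ] ℝ) :=
    fun s => (fderiv ℝ L (s, q s, deriv q s)).comp (i3 n) with hΦ
  have hΦdiff : DifferentiableAt ℝ Φ θ := by
    have h1 : ContDiff ℝ 1 (fderiv ℝ L) := hL.fderiv_right (by norm_num)
    have h2 : DifferentiableAt ℝ (fun s => fderiv ℝ L (s, q s, deriv q s)) θ :=
      DifferentiableAt.comp θ (h1.differentiable one_ne_zero _) hγ.differentiableAt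
    exact DifferentiableAt.comp θ
      (((ContinuousLinearMap.compL ℝ (Eu n) (ℝ × Eu n × Eu n) ℝ).flip
        (i3 n)).differentiable.differentiableAt) h2
  have hG : HasDerivAt (fun s => eDual n (Φ s)) (eDual n (deriv Φ θ)) θ :=
    (eDual n).hasFDerivAt.comp_hasDerivAt θ hΦdiff.hasDerivAt
  have hF2 : HasDerivAt (fun s => ⟪eDual n (Φ s), deriv q s⟫)
      (⟪eDual n (Φ θ), deriv (deriv q) θ⟫ + ⟪eDual n (deriv Φ θ), deriv q θ⟫) θ :=
    hG.inner ℝ hq2.hasDerivAt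
  have hF : HasDerivAt (fun s =>
      L (s, q s, deriv q s) - ⟪eDual n (Φ s), deriv q s⟫)
      (fderiv ℝ L (θ, q θ, deriv q θ) (1, deriv q θ, deriv (deriv q) θ)
        - (⟪eDual n (Φ θ), deriv (deriv q) θ⟫ + ⟪eDual n (deriv Φ θ), deriv q θ⟫)) θ :=
    hF1.sub hF2
  have hD1 : HasDerivAt (fun s => L (s, q θ, deriv q θ))
      (fderiv ℝ L (θ, q θ, deriv q θ) (1, 0, 0)) θ :=
    (hLd (θ, q θ, deriv q θ)).hasFDerivAt.comp_hasDerivAt θ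
      ((hasDerivAt_id θ).prodMk
        ((hasDerivAt_const θ (q θ)).prodMk (hasDerivAt_const θ (deriv q θ))))
  have hg3 : ∀ s : ℝ, gradient (fun v => L (s, q s, v)) (deriv q s) = eDual n (Φ s) :=
    fun s => grad3_eq hLd s (q s) (deriv q s)
  -- Euler-Lagrange in eDual form
  have hELθ := hEL θ hθ
  rw [grad2_eq hLd, grad3_eq hLd, funext hg3, hG.deriv] at hELθ
  have hinner : ⟪eDual n ((fderiv ℝ L (θ, q θ, deriv q θ)).comp (i2 n)), deriv q θ⟫
      - ⟪eDual n (deriv Φ θ), deriv q θ⟫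
      = ((1 - α) / (t - θ)) * ⟪eDual n (Φ θ), deriv q θ⟫ := by
    rw [← inner_sub_left, hELθ, real_inner_smul_left]
  -- compute the goal
  simp only [hg3]
  rw [hF.deriv, hD1.deriv]
  have hsplit : fderiv ℝ L (θ, q θ, deriv q θ) (1, deriv q θ, deriv (deriv q) θ)
      = fderiv ℝ L (θ, q θ, deriv q θ) (1, 0, 0)
        + fderiv ℝ L (θ, q θ, deriv q θ) (0, deriv q θ, 0)
        + fderiv ℝ L (θ, q θ, deriv q θ) (0, 0, deriv (deriv q) θ) := by
    rw [← map_add, ← map_add]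
    norm_num [Prod.ext_iff]
  have h2w : fderiv ℝ L (θ, q θ, deriv q θ) (0, deriv q θ, 0)
      = ⟪eDual n ((fderiv ℝ L (θ, q θ, deriv q θ)).comp (i2 n)), deriv q θ⟫ := by
    rw [inner_eDual]; rfl
  have h3w : fderiv ℝ L (θ, q θ, deriv q θ) (0, 0, deriv (deriv q) θ)
      = ⟪eDual n (Φ θ), deriv (deriv q) θ⟫ := by
    rw [inner_eDual]; rfl
  rw [hsplit, h2w, h3w]
  linarith [hinner]
end

section
/- Let n, r ≥ 1, let a < t be real numbers, let 0 < α ≤ 1, let L : ℝ × ℝⁿ × ℝʳ → ℝ and φ : ℝ × ℝⁿ × ℝʳ → ℝⁿ be of class C¹, and define the Hamiltonian H(θ, q, u, p) = L(θ, q, u)·(t−θ)^{α−1} + ⟨p, φ(θ, q, u)⟩ for θ ∈ (a,t). Let q, p : ℝ → ℝⁿ be of class C¹ on [a,t] and u : ℝ → ℝʳ be continuous on [a,t]. Suppose that for all C¹ functions h_q, h_p : ℝ → ℝⁿ with h_q(a) = h_q(t) = 0 and all continuous h_u : ℝ → ℝʳ, the function ε ↦ ∫_a^t [ H(θ, q(θ)+εh_q(θ),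 u(θ)+εh_u(θ), p(θ)+εh_p(θ)) − ⟨p(θ)+εh_p(θ), q'(θ)+εh_q'(θ)⟩ ] dθ has derivative 0 at ε = 0. Then for all θ ∈ (a,t): (i) q'(θ) = φ(θ, q(θ), u(θ)) (equivalently q'(θ) = ∂₄H(θ, q(θ), u(θ), p(θ))); (ii) p'(θ) = −∂₂H(θ, q(θ), u(θ), p(θ)); and (iii) ∂₃H(θ, q(θ), u(θ), p(θ)) = 0. -/
open scoped RealInnerProductSpace
open MeasureTheory Set

/-! ### Auxiliary lemmas -/

/-- If `g` is continuous on an open set `s` and `h` is continuous with `tsupport h ⊆ s`,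
then `θ ↦ ⟪g θ, h θ⟫` is continuous on all of `ℝ`. -/
lemma falva_inner_cont {𝓔 : Type*} [NormedAddCommGroup 𝓔] [InnerProductSpace ℝ 𝓔]
    {s : Set ℝ} (hs : IsOpen s) {g h : ℝ → 𝓔}
    (hg : ContinuousOn g s) (hh : Continuous h) (hsupp : tsupport h ⊆ s) :
    Continuous fun θ => ⟪g θ, h θ⟫ := by
  rw [continuous_iff_continuousAt]
  intro x
  by_cases hx : x ∈ s
  · exact (hg.continuousAt (hs.mem_nhds hx)).inner hh.continuousAt
  · have hx' : x ∈ (tsupport h)ᶜ := fun hc => hx (hsupp hc)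
    have hev : (fun θ => ⟪g θ, h θ⟫) =ᶠ[nhds x] fun _ => (0 : ℝ) := by
      filter_upwards [(isClosed_tsupport h).isOpen_compl.mem_nhds hx'] with y hy
      rw [image_eq_zero_of_notMem_tsupport hy, inner_zero_right]
    exact ContinuousAt.congr continuousAt_const hev.symm

/-- Fundamental lemma of the calculus of variations, vector-valued version. -/
lemma falva_flcv {m : ℕ} {a t : ℝ} (hat : a < t) {g : ℝ → EuclideanSpace ℝ (Fin m)}
    (hg : ContinuousOn g (Set.Ioo a t))
    (hint : ∀ h : ℝ → EuclideanSpace ℝ (Fin m), ContDiff ℝ 1 h → tsupport h ⊆ Set.Ioo a t →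
      (∫ θ in a..t, ⟪g θ, h θ⟫) = 0) :
    ∀ θ ∈ Set.Ioo a t, g θ = 0 := by
  intro θ₀ hθ₀
  by_contra hne
  set w := g θ₀ with hw
  have hw0 : w ≠ 0 := hne
  have hwn : (0:ℝ) < ‖w‖ ^ 2 / 2 := by
    have := norm_pos_iff.mpr hw0
    positivity
  have hca : ContinuousAt (fun θ => ⟪g θ, w⟫) θ₀ :=
    ((hg.continuousAt (isOpen_Ioo.mem_nhds hθ₀)).inner continuousAt_const)
  have hmem : (fun θ => ⟪g θ, w⟫) ⁻¹' Set.Ioi (‖w‖ ^ 2 / 2) ∈ nhds θ₀ := by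
    apply hca (isOpen_Ioi.mem_nhds ?_)
    simp only [Set.mem_Ioi, hw, real_inner_self_eq_norm_sq]
    linarith
  obtain ⟨ρ, hρpos, hρsub⟩ := Metric.nhds_basis_closedBall.mem_iff.mp
    (Filter.inter_mem hmem (isOpen_Ioo.mem_nhds hθ₀))
  set b : ContDiffBump θ₀ := ⟨ρ/2, ρ, by positivity, by linarith⟩
  set h : ℝ → EuclideanSpace ℝ (Fin m) := fun θ => b θ • w with hh
  have hsupp : tsupport h ⊆ Set.Ioo a t := by
    have h1 : tsupport h ⊆ tsupport (fun θ => (b θ : ℝ)) :=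
      tsupport_smul_subset_left (fun θ => (b θ : ℝ)) (fun _ => w)
    rw [b.tsupport_eq] at h1
    exact h1.trans (hρsub.trans Set.inter_subset_right)
  have hsm : ContDiff ℝ 1 h := by
    rw [hh]; exact ContDiff.fun_smul (𝕜' := ℝ) (by exact_mod_cast b.contDiff (n := 1)) contDiff_const
  have hzero := hint h hsm hsupp
  have hball : Metric.closedBall θ₀ ρ ⊆ Set.Ioo a t := hρsub.trans Set.inter_subset_right
  have hballs : Metric.closedBall θ₀ ρ ⊆ (fun θ => ⟪g θ, w⟫) ⁻¹' Set.Ioi (‖w‖ ^ 2 / 2) :=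
    hρsub.trans Set.inter_subset_left
  have hcont : Continuous fun θ => ⟪g θ, h θ⟫ := falva_inner_cont isOpen_Ioo hg
    (b.continuous.smul continuous_const) hsupp
  have hnonneg : ∀ θ, 0 ≤ ⟪g θ, h θ⟫ := by
    intro θ
    by_cases hθ : θ ∈ Metric.closedBall θ₀ ρ
    · have := hballs hθ
      simp only [Set.mem_preimage, Set.mem_Ioi] at this
      rw [hh, real_inner_smul_right]
      exact mul_nonneg b.nonneg (by linarith)
    · have : h θ = 0 := by
        rw [hh]
        have : b θ = 0 := b.zero_of_le_dist (by
          rw [Metric.mem_closedBall, not_le] at hθ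
          rw [dist_comm] at hθ ⊢
          exact hθ.le)
        simp [this]
      simp [this]
  have hlow : ∀ θ ∈ Set.Icc (θ₀ - ρ/2) (θ₀ + ρ/2), (‖w‖ ^ 2 / 2) ≤ ⟪g θ, h θ⟫ := by
    intro θ hθ
    have hmemb : θ ∈ Metric.closedBall θ₀ (ρ/2) := by
      rw [Metric.mem_closedBall, Real.dist_eq, abs_le]
      constructor <;> [linarith [hθ.1]; linarith [hθ.2]]
    have h1 : b θ = 1 := b.one_of_mem_closedBall hmemb
    have h2 := hballs ((Metric.closedBall_subset_closedBall (by linarith : ρ/2 ≤ ρ)) hmemb)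
    simp only [Set.mem_preimage, Set.mem_Ioi] at h2
    rw [hh, real_inner_smul_right, h1, one_mul]
    exact h2.le
  have hsub2 : Set.Icc (θ₀ - ρ/2) (θ₀ + ρ/2) ⊆ Set.Ioo a t := by
    intro θ hθ
    exact hball (by
      rw [Metric.mem_closedBall, Real.dist_eq, abs_le]
      constructor <;> [linarith [hθ.1]; linarith [hθ.2]])
  have hal : a ≤ θ₀ - ρ/2 := (hsub2 ⟨le_refl _, by linarith⟩).1.le
  have har : θ₀ + ρ/2 ≤ t := (hsub2 ⟨by linarith, le_refl _⟩).2.le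
  have hint1 : IntervalIntegrable (fun θ => ⟪g θ, h θ⟫) volume a t :=
    hcont.intervalIntegrable a t
  have key1 : (ρ/2 + ρ/2) * (‖w‖ ^ 2 / 2) ≤ ∫ θ in (θ₀ - ρ/2)..(θ₀ + ρ/2), ⟪g θ, h θ⟫ := by
    have := intervalIntegral.integral_mono_on (by linarith : θ₀ - ρ/2 ≤ θ₀ + ρ/2)
      (intervalIntegrable_const (μ := volume) (c := ‖w‖ ^ 2 / 2))
      (hcont.intervalIntegrable _ _)
      (fun θ hθ => hlow θ hθ)
    simpa using this.trans_eq' (by rw [intervalIntegral.integral_const]; ring_nf)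
  have key2 : (∫ θ in (θ₀ - ρ/2)..(θ₀ + ρ/2), ⟪g θ, h θ⟫) ≤ ∫ θ in a..t, ⟪g θ, h θ⟫ := by
    apply intervalIntegral.integral_mono_interval hal (by linarith) har
    · exact Filter.Eventually.of_forall (fun θ => hnonneg θ)
    · exact hint1
  rw [hzero] at key2
  have : (0:ℝ) < (ρ/2 + ρ/2) * (‖w‖ ^ 2 / 2) := by positivity
  linarith [key1.trans key2]

noncomputable def falvaJx (n r : ℕ) :
    EuclideanSpace ℝ (Fin n) →L[ℝ] ℝ × EuclideanSpace ℝ (Fin n) × EuclideanSpace ℝ (Fin r) :=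
  (0 : EuclideanSpace ℝ (Fin n) →L[ℝ] ℝ).prod
    ((ContinuousLinearMap.id ℝ _).prod 0)

noncomputable def falvaJu (n r : ℕ) :
    EuclideanSpace ℝ (Fin r) →L[ℝ] ℝ × EuclideanSpace ℝ (Fin n) × EuclideanSpace ℝ (Fin r) :=
  (0 : EuclideanSpace ℝ (Fin r) →L[ℝ] ℝ).prod
    ((0 : EuclideanSpace ℝ (Fin r) →L[ℝ] EuclideanSpace ℝ (Fin n)).prod
      (ContinuousLinearMap.id ℝ _))

@[simp] lemma falvaJx_apply (n r : ℕ) (v : EuclideanSpace ℝ (Fin n)) :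
    falvaJx n r v = (0, v, 0) := rfl

@[simp] lemma falvaJu_apply (n r : ℕ) (v : EuclideanSpace ℝ (Fin r)) :
    falvaJu n r v = (0, 0, v) := rfl

lemma falva_slice_x (n r : ℕ)
    (L : ℝ × EuclideanSpace ℝ (Fin n) × EuclideanSpace ℝ (Fin r) → ℝ)
    (φ : ℝ × EuclideanSpace ℝ (Fin n) × EuclideanSpace ℝ (Fin r) → EuclideanSpace ℝ (Fin n))
    (hL : ContDiff ℝ 1 L) (hφ : ContDiff ℝ 1 φ) (c θ : ℝ)
    (x : EuclideanSpace ℝ (Fin n)) (uu : EuclideanSpace ℝ (Fin r)) (pp : EuclideanSpace ℝ (Fin n)) :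
    HasFDerivAt (fun x' => L (θ, x', uu) * c + ⟪pp, φ (θ, x', uu)⟫)
      (c • ((fderiv ℝ L (θ, x, uu)).comp (falvaJx n r))
        + ((innerSL ℝ pp).comp ((fderiv ℝ φ (θ, x, uu)).comp (falvaJx n r)))) x := by
  have hm : HasFDerivAt (fun x' : EuclideanSpace ℝ (Fin n) =>
      ((θ, x', uu) : ℝ × EuclideanSpace ℝ (Fin n) × EuclideanSpace ℝ (Fin r)))
      (falvaJx n r) x :=
    (hasFDerivAt_const θ x).prodMk ((hasFDerivAt_id x).prodMk (hasFDerivAt_const uu x))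
  have h1 : HasFDerivAt (fun x' => L (θ, x', uu))
      ((fderiv ℝ L (θ, x, uu)).comp (falvaJx n r)) x :=
    ((hL.differentiable one_ne_zero) _).hasFDerivAt.comp x hm
  have h2 : HasFDerivAt (fun x' => φ (θ, x', uu))
      ((fderiv ℝ φ (θ, x, uu)).comp (falvaJx n r)) x :=
    ((hφ.differentiable one_ne_zero) _).hasFDerivAt.comp x hm
  exact (h1.mul_const c).add
    (((innerSL ℝ pp).hasFDerivAt.comp x h2 :
      HasFDerivAt (fun x' => ⟪pp, φ (θ, x', uu)⟫) _ x))

lemma falva_slice_u (n r : ℕ)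
    (L : ℝ × EuclideanSpace ℝ (Fin n) × EuclideanSpace ℝ (Fin r) → ℝ)
    (φ : ℝ × EuclideanSpace ℝ (Fin n) × EuclideanSpace ℝ (Fin r) → EuclideanSpace ℝ (Fin n))
    (hL : ContDiff ℝ 1 L) (hφ : ContDiff ℝ 1 φ) (c θ : ℝ)
    (x : EuclideanSpace ℝ (Fin n)) (uu : EuclideanSpace ℝ (Fin r)) (pp : EuclideanSpace ℝ (Fin n)) :
    HasFDerivAt (fun v => L (θ, x, v) * c + ⟪pp, φ (θ, x, v)⟫)
      (c • ((fderiv ℝ L (θ, x, uu)).comp (falvaJu n r))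
        + ((innerSL ℝ pp).comp ((fderiv ℝ φ (θ, x, uu)).comp (falvaJu n r)))) uu := by
  have hm : HasFDerivAt (fun v : EuclideanSpace ℝ (Fin r) =>
      ((θ, x, v) : ℝ × EuclideanSpace ℝ (Fin n) × EuclideanSpace ℝ (Fin r)))
      (falvaJu n r) uu :=
    (hasFDerivAt_const θ uu).prodMk ((hasFDerivAt_const x uu).prodMk (hasFDerivAt_id uu))
  have h1 : HasFDerivAt (fun v => L (θ, x, v))
      ((fderiv ℝ L (θ, x, uu)).comp (falvaJu n r)) uu :=
    ((hL.differentiable one_ne_zero) _).hasFDerivAt.comp uu hm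
  have h2 : HasFDerivAt (fun v => φ (θ, x, v))
      ((fderiv ℝ φ (θ, x, uu)).comp (falvaJu n r)) uu :=
    ((hφ.differentiable one_ne_zero) _).hasFDerivAt.comp uu hm
  exact (h1.mul_const c).add
    (((innerSL ℝ pp).hasFDerivAt.comp uu h2 :
      HasFDerivAt (fun v => ⟪pp, φ (θ, x, v)⟫) _ uu))

set_option maxHeartbeats 2000000 in
/-- **Weak Pontryagin maximum principle for FALVA optimal control problems.**
With Hamiltonian `H(θ,x,u,p) = L(θ,x,u)(t-θ)^(α-1) + ⟨p, φ(θ,x,u)⟩`, if the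
augmented functional `ε ↦ ∫_a^t [H(θ, q+εh_q, u+εh_u, p+εh_p) - ⟨p+εh_p, q'+εh_q'⟩] dθ`
has vanishing derivative at `ε = 0` for all admissible variations
`(h_q, h_u, h_p)`, then on `(a,t)` the Hamiltonian system
`q' = φ(θ,q,u) (= ∂₄H)`, `p' = -∂₂H` and the stationary condition `∂₃H = 0` hold. -/
theorem falva_weak_pontryagin_principle
    (n r : ℕ) (hn : 1 ≤ n) (hr : 1 ≤ r) (a t α : ℝ) (hat : a < t)
    (hα0 : 0 < α) (hα1 : α ≤ 1)
    (L : ℝ × EuclideanSpace ℝ (Fin n) × EuclideanSpace ℝ (Fin r) → ℝ)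
    (φ : ℝ × EuclideanSpace ℝ (Fin n) × EuclideanSpace ℝ (Fin r) →
      EuclideanSpace ℝ (Fin n))
    (hL : ContDiff ℝ 1 L) (hφ : ContDiff ℝ 1 φ)
    (H : ℝ → EuclideanSpace ℝ (Fin n) → EuclideanSpace ℝ (Fin r) →
      EuclideanSpace ℝ (Fin n) → ℝ)
    (hH : ∀ θ x u p, H θ x u p = L (θ, x, u) * (t - θ) ^ (α - 1) + ⟪p, φ (θ, x, u)⟫)
    (q p : ℝ → EuclideanSpace ℝ (Fin n)) (u : ℝ → EuclideanSpace ℝ (Fin r))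
    (hq : ContDiffOn ℝ 1 q (Set.Icc a t))
    (hp : ContDiffOn ℝ 1 p (Set.Icc a t))
    (hu : ContinuousOn u (Set.Icc a t))
    (hstat : ∀ (hq' hp' : ℝ → EuclideanSpace ℝ (Fin n))
        (hu' : ℝ → EuclideanSpace ℝ (Fin r)),
      ContDiff ℝ 1 hq' → ContDiff ℝ 1 hp' → Continuous hu' →
      hq' a = 0 → hq' t = 0 →
      HasDerivAt (fun ε : ℝ => ∫ θ in a..t,
          (H θ (q θ + ε • hq' θ) (u θ + ε • hu' θ) (p θ + ε • hp' θ)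
            - ⟪p θ + ε • hp' θ, deriv q θ + ε • deriv hq' θ⟫))
        0 0) :
    ∀ θ ∈ Set.Ioo a t,
      deriv q θ = φ (θ, q θ, u θ)
        ∧ deriv p θ = - gradient (fun x => H θ x (u θ) (p θ)) (q θ)
        ∧ gradient (fun v => H θ (q θ) v (p θ)) (u θ) = 0 := by
  have hIccU : UniqueDiffOn ℝ (Set.Icc a t) := uniqueDiffOn_Icc hat
  have hqc : ContinuousOn q (Set.Icc a t) := hq.continuousOn
  have hpc : ContinuousOn p (Set.Icc a t) := hp.continuousOn
  have hq'c : ContinuousOn (derivWithin q (Set.Icc a t)) (Set.Icc a t) :=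
    hq.continuousOn_derivWithin hIccU le_rfl
  have hp'c : ContinuousOn (derivWithin p (Set.Icc a t)) (Set.Icc a t) :=
    hp.continuousOn_derivWithin hIccU le_rfl
  have hdq : ∀ θ ∈ Set.Ioo a t, deriv q θ = derivWithin q (Set.Icc a t) θ :=
    fun θ hθ => (derivWithin_of_mem_nhds (Icc_mem_nhds hθ.1 hθ.2)).symm
  have hdp : ∀ θ ∈ Set.Ioo a t, deriv p θ = derivWithin p (Set.Icc a t) θ :=
    fun θ hθ => (derivWithin_of_mem_nhds (Icc_mem_nhds hθ.1 hθ.2)).symm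
  have hdqc : ContinuousOn (deriv q) (Set.Ioo a t) :=
    (hq'c.mono Set.Ioo_subset_Icc_self).congr hdq
  have hdpc : ContinuousOn (deriv p) (Set.Ioo a t) :=
    (hp'c.mono Set.Ioo_subset_Icc_self).congr hdp
  have hc_cont : ContinuousOn (fun θ : ℝ => (t - θ) ^ (α - 1)) (Set.Ioo a t) := by
    apply ContinuousOn.rpow_const (by fun_prop)
    intro θ hθ
    exact Or.inl (ne_of_gt (sub_pos.mpr hθ.2))
  have hc_nonneg : ∀ θ ∈ Set.Ioo a t, 0 ≤ (t - θ) ^ (α - 1) :=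
    fun θ hθ => Real.rpow_nonneg (by linarith [hθ.2]) _
  have hc_int : IntervalIntegrable (fun θ : ℝ => (t - θ) ^ (α - 1)) volume a t := by
    have h0 : IntervalIntegrable (fun x : ℝ => x ^ (α - 1)) volume 0 (t - a) :=
      intervalIntegral.intervalIntegrable_rpow' (by linarith)
    have h1 := h0.comp_sub_left t
    simpa using h1.symm
  have huIoc : Set.uIoc a t = Set.Ioc a t := Set.uIoc_of_le hat.le
  have hres : volume.restrict (Set.uIoc a t) = volume.restrict (Set.Ioo a t) := by
    rw [huIoc]
    exact (MeasureTheory.Measure.restrict_congr_set MeasureTheory.Ioo_ae_eq_Ioc).symm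
  have hzc : ContinuousOn (fun θ => ((θ, q θ, u θ) :
      ℝ × EuclideanSpace ℝ (Fin n) × EuclideanSpace ℝ (Fin r))) (Set.Icc a t) :=
    continuousOn_id.prodMk (hqc.prodMk hu)
  -- pointwise formulas for the two partial gradients of H
  have hAapp : ∀ (θ : ℝ) (v : EuclideanSpace ℝ (Fin n)),
      ⟪gradient (fun x => H θ x (u θ) (p θ)) (q θ), v⟫
        = ((t - θ) ^ (α - 1)) * ((fderiv ℝ L (θ, q θ, u θ)) (0, v, 0))
          + ⟪p θ, (fderiv ℝ φ (θ, q θ, u θ)) (0, v, 0)⟫ := by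
    intro θ v
    have hfun : (fun x => H θ x (u θ) (p θ))
        = fun x => L (θ, x, u θ) * (t - θ) ^ (α - 1) + ⟪p θ, φ (θ, x, u θ)⟫ :=
      funext fun x => hH θ x (u θ) (p θ)
    rw [hfun, (hasFDerivAt_iff_hasGradientAt.mp
      (falva_slice_x n r L φ hL hφ ((t - θ) ^ (α - 1)) θ (q θ) (u θ) (p θ))).gradient,
      InnerProductSpace.toDual_symm_apply]
    simp [smul_eq_mul]
  have hBapp : ∀ (θ : ℝ) (v : EuclideanSpace ℝ (Fin r)),
      ⟪gradient (fun w => H θ (q θ) w (p θ)) (u θ), v⟫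
        = ((t - θ) ^ (α - 1)) * ((fderiv ℝ L (θ, q θ, u θ)) (0, 0, v))
          + ⟪p θ, (fderiv ℝ φ (θ, q θ, u θ)) (0, 0, v)⟫ := by
    intro θ v
    have hfun : (fun w => H θ (q θ) w (p θ))
        = fun w => L (θ, q θ, w) * (t - θ) ^ (α - 1) + ⟪p θ, φ (θ, q θ, w)⟫ :=
      funext fun w => hH θ (q θ) w (p θ)
    rw [hfun, (hasFDerivAt_iff_hasGradientAt.mp
      (falva_slice_u n r L φ hL hφ ((t - θ) ^ (α - 1)) θ (q θ) (u θ) (p θ))).gradient,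
      InnerProductSpace.toDual_symm_apply]
    simp [smul_eq_mul]
  -- continuity of the gradient maps on (a,t)
  have hAcont : ContinuousOn
      (fun θ => gradient (fun x => H θ x (u θ) (p θ)) (q θ)) (Set.Ioo a t) := by
    have hAeq : (fun θ => gradient (fun x => H θ x (u θ) (p θ)) (q θ))
        = fun θ => (InnerProductSpace.toDual ℝ (EuclideanSpace ℝ (Fin n))).symm
            (((t - θ) ^ (α - 1)) • ((fderiv ℝ L (θ, q θ, u θ)).comp (falvaJx n r))
              + (innerSL ℝ (p θ)).comp ((fderiv ℝ φ (θ, q θ, u θ)).comp (falvaJx n r))) := by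
      funext θ
      have hfun : (fun x => H θ x (u θ) (p θ))
          = fun x => L (θ, x, u θ) * (t - θ) ^ (α - 1) + ⟪p θ, φ (θ, x, u θ)⟫ :=
        funext fun x => hH θ x (u θ) (p θ)
      rw [hfun, (hasFDerivAt_iff_hasGradientAt.mp
        (falva_slice_x n r L φ hL hφ ((t - θ) ^ (α - 1)) θ (q θ) (u θ) (p θ))).gradient]
    rw [hAeq]
    apply Continuous.comp_continuousOn (LinearIsometryEquiv.continuous _)
    apply ContinuousOn.add
    · exact hc_cont.smul (((hL.continuous_fderiv one_ne_zero).comp_continuousOn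
        (hzc.mono Set.Ioo_subset_Icc_self)).clm_comp continuousOn_const)
    · exact (((innerSL ℝ).continuous.comp_continuousOn
        (hpc.mono Set.Ioo_subset_Icc_self))).clm_comp
        (((hφ.continuous_fderiv one_ne_zero).comp_continuousOn
          (hzc.mono Set.Ioo_subset_Icc_self)).clm_comp continuousOn_const)
  have hBcont : ContinuousOn
      (fun θ => gradient (fun w => H θ (q θ) w (p θ)) (u θ)) (Set.Ioo a t) := by
    have hBeq : (fun θ => gradient (fun w => H θ (q θ) w (p θ)) (u θ))
        = fun θ => (InnerProductSpace.toDual ℝ (EuclideanSpace ℝ (Fin r))).symm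
            (((t - θ) ^ (α - 1)) • ((fderiv ℝ L (θ, q θ, u θ)).comp (falvaJu n r))
              + (innerSL ℝ (p θ)).comp ((fderiv ℝ φ (θ, q θ, u θ)).comp (falvaJu n r))) := by
      funext θ
      have hfun : (fun w => H θ (q θ) w (p θ))
          = fun w => L (θ, q θ, w) * (t - θ) ^ (α - 1) + ⟪p θ, φ (θ, q θ, w)⟫ :=
        funext fun w => hH θ (q θ) w (p θ)
      rw [hfun, (hasFDerivAt_iff_hasGradientAt.mp
        (falva_slice_u n r L φ hL hφ ((t - θ) ^ (α - 1)) θ (q θ) (u θ) (p θ))).gradient]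
    rw [hBeq]
    apply Continuous.comp_continuousOn (LinearIsometryEquiv.continuous _)
    apply ContinuousOn.add
    · exact hc_cont.smul (((hL.continuous_fderiv one_ne_zero).comp_continuousOn
        (hzc.mono Set.Ioo_subset_Icc_self)).clm_comp continuousOn_const)
    · exact (((innerSL ℝ).continuous.comp_continuousOn
        (hpc.mono Set.Ioo_subset_Icc_self))).clm_comp
        (((hφ.continuous_fderiv one_ne_zero).comp_continuousOn
          (hzc.mono Set.Ioo_subset_Icc_self)).clm_comp continuousOn_const)
  -- the master integral identity, obtained by differentiating under the integral sign
  have key : ∀ (h1 h2 : ℝ → EuclideanSpace ℝ (Fin n)) (h3 : ℝ → EuclideanSpace ℝ (Fin r)),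
      ContDiff ℝ 1 h1 → ContDiff ℝ 1 h2 → ContDiff ℝ 1 h3 →
      tsupport h1 ⊆ Set.Ioo a t → tsupport h2 ⊆ Set.Ioo a t → tsupport h3 ⊆ Set.Ioo a t →
      (∫ θ in a..t, (⟪gradient (fun x => H θ x (u θ) (p θ)) (q θ), h1 θ⟫
        + ⟪gradient (fun w => H θ (q θ) w (p θ)) (u θ), h3 θ⟫
        + ⟪h2 θ, φ (θ, q θ, u θ) - deriv q θ⟫ - ⟪p θ, deriv h1 θ⟫)) = 0 := by
    intro h1 h2 h3 h1s h2s h3s h1sup h2sup h3sup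
    have h1cont := h1s.continuous
    have h2cont := h2s.continuous
    have h3cont := h3s.continuous
    have hd1cont : Continuous (deriv h1) := h1s.continuous_deriv le_rfl
    have h1a : h1 a = 0 := image_eq_zero_of_notMem_tsupport (fun hc => lt_irrefl a (h1sup hc).1)
    have h1t : h1 t = 0 := image_eq_zero_of_notMem_tsupport (fun hc => lt_irrefl t (h1sup hc).2)
    -- bounds on the compact interval
    obtain ⟨Cq, hCq⟩ := isCompact_Icc.exists_bound_of_continuousOn hqc
    obtain ⟨Cp, hCp⟩ := isCompact_Icc.exists_bound_of_continuousOn hpc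
    obtain ⟨Cu, hCu⟩ := isCompact_Icc.exists_bound_of_continuousOn hu
    obtain ⟨Ch1, hCh1⟩ := isCompact_Icc.exists_bound_of_continuousOn h1cont.continuousOn
    obtain ⟨Ch2, hCh2⟩ := isCompact_Icc.exists_bound_of_continuousOn h2cont.continuousOn
    obtain ⟨Ch3, hCh3⟩ := isCompact_Icc.exists_bound_of_continuousOn h3cont.continuousOn
    obtain ⟨Cd1, hCd1⟩ := isCompact_Icc.exists_bound_of_continuousOn hd1cont.continuousOn
    obtain ⟨Cdq, hCdq⟩ := isCompact_Icc.exists_bound_of_continuousOn hq'c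
    obtain ⟨Cv, hCv⟩ := isCompact_Icc.exists_bound_of_continuousOn
      (Continuous.continuousOn (f := fun θ : ℝ => (((0:ℝ), h1 θ, h3 θ) :
        ℝ × EuclideanSpace ℝ (Fin n) × EuclideanSpace ℝ (Fin r))) (by fun_prop))
    set K : Set (ℝ × EuclideanSpace ℝ (Fin n) × EuclideanSpace ℝ (Fin r)) :=
      (Set.Icc a t) ×ˢ ((Metric.closedBall 0 (Cq + Ch1)) ×ˢ (Metric.closedBall 0 (Cu + Ch3)))
      with hKdef
    have hKcomp : IsCompact K :=
      isCompact_Icc.prod ((isCompact_closedBall _ _).prod (isCompact_closedBall _ _))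
    obtain ⟨MLd, hMLd⟩ :=
      hKcomp.exists_bound_of_continuousOn ((hL.continuous_fderiv one_ne_zero).continuousOn)
    obtain ⟨Mpd, hMpd⟩ :=
      hKcomp.exists_bound_of_continuousOn ((hφ.continuous_fderiv one_ne_zero).continuousOn)
    obtain ⟨Mp, hMp⟩ := hKcomp.exists_bound_of_continuousOn (hφ.continuous.continuousOn)
    obtain ⟨ML, hML⟩ := hKcomp.exists_bound_of_continuousOn (hL.continuous.continuousOn)
    have hmemK : ∀ θ ∈ Set.Icc a t, ∀ ε : ℝ, |ε| ≤ 1 →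
        ((θ, q θ + ε • h1 θ, u θ + ε • h3 θ) :
          ℝ × EuclideanSpace ℝ (Fin n) × EuclideanSpace ℝ (Fin r)) ∈ K := by
      intro θ hθ ε hε
      refine ⟨hθ, mem_closedBall_zero_iff.mpr ?_, mem_closedBall_zero_iff.mpr ?_⟩
      · calc ‖q θ + ε • h1 θ‖ ≤ ‖q θ‖ + ‖ε • h1 θ‖ := norm_add_le _ _
          _ ≤ Cq + Ch1 := by
            rw [norm_smul, Real.norm_eq_abs]
            have h5 := hCh1 θ hθ; have h6 := hCq θ hθ
            nlinarith [norm_nonneg (h1 θ), abs_nonneg ε]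
      · calc ‖u θ + ε • h3 θ‖ ≤ ‖u θ‖ + ‖ε • h3 θ‖ := norm_add_le _ _
          _ ≤ Cu + Ch3 := by
            rw [norm_smul, Real.norm_eq_abs]
            have h5 := hCh3 θ hθ; have h6 := hCu θ hθ
            nlinarith [norm_nonneg (h3 θ), abs_nonneg ε]
    have hpK : ∀ θ ∈ Set.Icc a t, ∀ ε : ℝ, |ε| ≤ 1 → ‖p θ + ε • h2 θ‖ ≤ Cp + Ch2 := by
      intro θ hθ ε hε
      calc ‖p θ + ε • h2 θ‖ ≤ ‖p θ‖ + ‖ε • h2 θ‖ := norm_add_le _ _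
        _ ≤ Cp + Ch2 := by
          rw [norm_smul, Real.norm_eq_abs]
          have h5 := hCh2 θ hθ; have h6 := hCp θ hθ
          nlinarith [norm_nonneg (h2 θ), abs_nonneg ε]
    -- the pointwise derivative of the integrand in ε
    set G' : ℝ → ℝ → ℝ := fun ε θ =>
      (fderiv ℝ L (θ, q θ + ε • h1 θ, u θ + ε • h3 θ)) ((0:ℝ), h1 θ, h3 θ)
          * ((t - θ) ^ (α - 1))
        + (⟪p θ + ε • h2 θ,
            (fderiv ℝ φ (θ, q θ + ε • h1 θ, u θ + ε • h3 θ)) ((0:ℝ), h1 θ, h3 θ)⟫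
          + ⟪h2 θ, φ (θ, q θ + ε • h1 θ, u θ + ε • h3 θ)⟫)
        - (⟪p θ + ε • h2 θ, deriv h1 θ⟫ + ⟪h2 θ, deriv q θ + ε • deriv h1 θ⟫) with hG'def
    have hpt : ∀ (θ : ℝ) (ε : ℝ), HasDerivAt (fun ε' : ℝ =>
        H θ (q θ + ε' • h1 θ) (u θ + ε' • h3 θ) (p θ + ε' • h2 θ)
          - ⟪p θ + ε' • h2 θ, deriv q θ + ε' • deriv h1 θ⟫) (G' ε θ) ε := by
      intro θ ε
      have e1 : HasDerivAt (fun ε' : ℝ => q θ + ε' • h1 θ) (h1 θ) ε := by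
        simpa using ((hasDerivAt_id ε).smul_const (h1 θ)).const_add (q θ)
      have e2 : HasDerivAt (fun ε' : ℝ => p θ + ε' • h2 θ) (h2 θ) ε := by
        simpa using ((hasDerivAt_id ε).smul_const (h2 θ)).const_add (p θ)
      have e3 : HasDerivAt (fun ε' : ℝ => u θ + ε' • h3 θ) (h3 θ) ε := by
        simpa using ((hasDerivAt_id ε).smul_const (h3 θ)).const_add (u θ)
      have e4 : HasDerivAt (fun ε' : ℝ => deriv q θ + ε' • deriv h1 θ) (deriv h1 θ) ε := by
        simpa using ((hasDerivAt_id ε).smul_const (deriv h1 θ)).const_add (deriv q θ)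
      have hmw : HasDerivAt (fun ε' : ℝ => ((θ, q θ + ε' • h1 θ, u θ + ε' • h3 θ) :
          ℝ × EuclideanSpace ℝ (Fin n) × EuclideanSpace ℝ (Fin r)))
          (((0:ℝ), h1 θ, h3 θ)) ε := (hasDerivAt_const ε θ).prodMk (e1.prodMk e3)
      have hLd : HasDerivAt (fun ε' : ℝ => L (θ, q θ + ε' • h1 θ, u θ + ε' • h3 θ))
          ((fderiv ℝ L (θ, q θ + ε • h1 θ, u θ + ε • h3 θ)) ((0:ℝ), h1 θ, h3 θ)) ε :=
        ((hL.differentiable one_ne_zero) _).hasFDerivAt.comp_hasDerivAt ε hmw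
      have hpd : HasDerivAt (fun ε' : ℝ => φ (θ, q θ + ε' • h1 θ, u θ + ε' • h3 θ))
          ((fderiv ℝ φ (θ, q θ + ε • h1 θ, u θ + ε • h3 θ)) ((0:ℝ), h1 θ, h3 θ)) ε :=
        ((hφ.differentiable one_ne_zero) _).hasFDerivAt.comp_hasDerivAt ε hmw
      have hin1 := HasDerivAt.inner ℝ e2 hpd
      have hin2 := HasDerivAt.inner ℝ e2 e4
      have hfin := ((hLd.mul_const ((t - θ) ^ (α - 1))).add hin1).sub hin2
      rw [hG'def]
      simp only [hH]
      exact hfin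
    -- measurability
    have hwc : ∀ ε : ℝ, ContinuousOn (fun θ => ((θ, q θ + ε • h1 θ, u θ + ε • h3 θ) :
        ℝ × EuclideanSpace ℝ (Fin n) × EuclideanSpace ℝ (Fin r))) (Set.Ioo a t) :=
      fun ε => continuousOn_id.prodMk
        ((show ContinuousOn (fun θ => q θ + ε • h1 θ) (Set.Ioo a t) from
          (hqc.mono Set.Ioo_subset_Icc_self).add
          ((continuous_const : Continuous fun _ : ℝ => ε).smul h1cont).continuousOn).prodMk
        (show ContinuousOn (fun θ => u θ + ε • h3 θ) (Set.Ioo a t) from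
          (hu.mono Set.Ioo_subset_Icc_self).add
          ((continuous_const : Continuous fun _ : ℝ => ε).smul h3cont).continuousOn))
    have hpec : ∀ ε : ℝ, ContinuousOn (fun θ => p θ + ε • h2 θ) (Set.Ioo a t) :=
      fun ε => (hpc.mono Set.Ioo_subset_Icc_self).add
        ((continuous_const : Continuous fun _ : ℝ => ε).smul h2cont).continuousOn
    have hmeas : ∀ ε : ℝ, MeasureTheory.AEStronglyMeasurable
        (fun θ => H θ (q θ + ε • h1 θ) (u θ + ε • h3 θ) (p θ + ε • h2 θ)
          - ⟪p θ + ε • h2 θ, deriv q θ + ε • deriv h1 θ⟫)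
        (volume.restrict (Set.uIoc a t)) := by
      intro ε
      rw [hres]
      apply ContinuousOn.aestronglyMeasurable _ measurableSet_Ioo
      simp only [hH]
      apply ContinuousOn.sub
      · apply ContinuousOn.add
        · exact (hL.continuous.comp_continuousOn (hwc ε)).mul hc_cont
        · exact ContinuousOn.inner (hpec ε) (hφ.continuous.comp_continuousOn (hwc ε))
      · exact ContinuousOn.inner (hpec ε)
          (hdqc.add ((continuous_const : Continuous fun _ : ℝ => ε).smul hd1cont).continuousOn)
    have hG'0meas : MeasureTheory.AEStronglyMeasurable (G' 0)
        (volume.restrict (Set.uIoc a t)) := by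
      rw [hres, hG'def]
      apply ContinuousOn.aestronglyMeasurable _ measurableSet_Ioo
      apply ContinuousOn.sub
      · apply ContinuousOn.add
        · exact (ContinuousOn.clm_apply
            ((hL.continuous_fderiv one_ne_zero).comp_continuousOn (hwc 0))
            (Continuous.continuousOn (by fun_prop))).mul hc_cont
        · exact ((hpec 0).inner (ContinuousOn.clm_apply
            ((hφ.continuous_fderiv one_ne_zero).comp_continuousOn (hwc 0))
            (Continuous.continuousOn (by fun_prop)))).add
            (h2cont.continuousOn.inner (hφ.continuous.comp_continuousOn (hwc 0)))
      · exact ((hpec 0).inner hd1cont.continuousOn).add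
          (h2cont.continuousOn.inner
            (hdqc.add ((continuous_const : Continuous fun _ : ℝ => (0:ℝ)).smul hd1cont).continuousOn))
    -- a.e. avoidance of the right endpoint
    have haet : ∀ᵐ θ : ℝ, θ ≠ t := by
      have h0 : (volume : MeasureTheory.Measure ℝ) {t} = 0 := Real.volume_singleton
      simpa using MeasureTheory.measure_eq_zero_iff_ae_notMem.mp h0
    -- the uniform bound
    set bound : ℝ → ℝ := fun θ => (MLd * Cv) * ((t - θ) ^ (α - 1))
      + ((Cp + Ch2) * (Mpd * Cv) + Ch2 * Mp + ((Cp + Ch2) * Cd1 + Ch2 * (Cdq + Cd1)))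
      with hbounddef
    have hbound_int : IntervalIntegrable bound volume a t :=
      (hc_int.const_mul (MLd * Cv)).add intervalIntegrable_const
    have h_bound : ∀ᵐ θ ∂(volume : MeasureTheory.Measure ℝ), θ ∈ Set.uIoc a t →
        ∀ ε ∈ Metric.ball (0:ℝ) 1, ‖G' ε θ‖ ≤ bound θ := by
      filter_upwards [haet] with θ hθt hmem ε hε
      rw [huIoc] at hmem
      have hθI : θ ∈ Set.Ioo a t := ⟨hmem.1, lt_of_le_of_ne hmem.2 hθt⟩
      have hθc : θ ∈ Set.Icc a t := Set.Ioo_subset_Icc_self hθI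
      have hεle : |ε| ≤ 1 := by
        have := Metric.mem_ball.mp hε
        rw [Real.dist_eq, sub_zero] at this
        exact this.le
      have hwK := hmemK θ hθc ε hεle
      have hcnn : 0 ≤ (t - θ) ^ (α - 1) := hc_nonneg θ hθI
      have hvb : ‖(((0:ℝ), h1 θ, h3 θ) :
          ℝ × EuclideanSpace ℝ (Fin n) × EuclideanSpace ℝ (Fin r))‖ ≤ Cv := hCv θ hθc
      have hb1 : ‖(fderiv ℝ L (θ, q θ + ε • h1 θ, u θ + ε • h3 θ)) ((0:ℝ), h1 θ, h3 θ)‖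
          ≤ MLd * Cv := by
        calc ‖(fderiv ℝ L (θ, q θ + ε • h1 θ, u θ + ε • h3 θ)) ((0:ℝ), h1 θ, h3 θ)‖
            ≤ ‖fderiv ℝ L (θ, q θ + ε • h1 θ, u θ + ε • h3 θ)‖
              * ‖(((0:ℝ), h1 θ, h3 θ) :
                ℝ × EuclideanSpace ℝ (Fin n) × EuclideanSpace ℝ (Fin r))‖ :=
              ContinuousLinearMap.le_opNorm _ _
          _ ≤ MLd * Cv := mul_le_mul (hMLd _ hwK) hvb (norm_nonneg _)
              ((norm_nonneg _).trans (hMLd _ hwK))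
      have hb2 : ‖(fderiv ℝ φ (θ, q θ + ε • h1 θ, u θ + ε • h3 θ)) ((0:ℝ), h1 θ, h3 θ)‖
          ≤ Mpd * Cv := by
        calc ‖(fderiv ℝ φ (θ, q θ + ε • h1 θ, u θ + ε • h3 θ)) ((0:ℝ), h1 θ, h3 θ)‖
            ≤ ‖fderiv ℝ φ (θ, q θ + ε • h1 θ, u θ + ε • h3 θ)‖
              * ‖(((0:ℝ), h1 θ, h3 θ) :
                ℝ × EuclideanSpace ℝ (Fin n) × EuclideanSpace ℝ (Fin r))‖ :=
              ContinuousLinearMap.le_opNorm _ _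
          _ ≤ Mpd * Cv := mul_le_mul (hMpd _ hwK) hvb (norm_nonneg _)
              ((norm_nonneg _).trans (hMpd _ hwK))
      have hpb : ‖p θ + ε • h2 θ‖ ≤ Cp + Ch2 := hpK θ hθc ε hεle
      have hqd : ‖deriv q θ‖ ≤ Cdq := by rw [hdq θ hθI]; exact hCdq θ hθc
      have he4 : ‖deriv q θ + ε • deriv h1 θ‖ ≤ Cdq + Cd1 := by
        calc ‖deriv q θ + ε • deriv h1 θ‖ ≤ ‖deriv q θ‖ + ‖ε • deriv h1 θ‖ := norm_add_le _ _
          _ ≤ Cdq + Cd1 := by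
            rw [norm_smul, Real.norm_eq_abs]
            have h5 := hCd1 θ hθc
            nlinarith [norm_nonneg (deriv h1 θ), abs_nonneg ε]
      -- assemble
      rw [hG'def, Real.norm_eq_abs]
      have habs : ∀ x y : ℝ, |x - y| ≤ |x| + |y| := fun x y => by
        calc |x - y| = |x + -y| := by ring_nf
          _ ≤ |x| + |-y| := abs_add_le _ _
          _ = |x| + |y| := by rw [abs_neg]
      have hT1 : |(fderiv ℝ L (θ, q θ + ε • h1 θ, u θ + ε • h3 θ)) ((0:ℝ), h1 θ, h3 θ)
          * ((t - θ) ^ (α - 1))| ≤ (MLd * Cv) * ((t - θ) ^ (α - 1)) := by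
        rw [abs_mul, abs_of_nonneg hcnn]
        exact mul_le_mul_of_nonneg_right hb1 hcnn
      have hT2 : |⟪p θ + ε • h2 θ,
          (fderiv ℝ φ (θ, q θ + ε • h1 θ, u θ + ε • h3 θ)) ((0:ℝ), h1 θ, h3 θ)⟫|
          ≤ (Cp + Ch2) * (Mpd * Cv) :=
        (abs_real_inner_le_norm _ _).trans (mul_le_mul hpb hb2 (norm_nonneg _)
          ((norm_nonneg _).trans hpb))
      have hT3 : |⟪h2 θ, φ (θ, q θ + ε • h1 θ, u θ + ε • h3 θ)⟫| ≤ Ch2 * Mp :=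
        (abs_real_inner_le_norm _ _).trans (mul_le_mul (hCh2 θ hθc) (hMp _ hwK)
          (norm_nonneg _) ((norm_nonneg _).trans (hCh2 θ hθc)))
      have hT4 : |⟪p θ + ε • h2 θ, deriv h1 θ⟫| ≤ (Cp + Ch2) * Cd1 :=
        (abs_real_inner_le_norm _ _).trans (mul_le_mul hpb (hCd1 θ hθc) (norm_nonneg _)
          ((norm_nonneg _).trans hpb))
      have hT5 : |⟪h2 θ, deriv q θ + ε • deriv h1 θ⟫| ≤ Ch2 * (Cdq + Cd1) :=
        (abs_real_inner_le_norm _ _).trans (mul_le_mul (hCh2 θ hθc) he4 (norm_nonneg _)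
          ((norm_nonneg _).trans (hCh2 θ hθc)))
      calc |(fderiv ℝ L (θ, q θ + ε • h1 θ, u θ + ε • h3 θ)) ((0:ℝ), h1 θ, h3 θ)
            * ((t - θ) ^ (α - 1))
          + (⟪p θ + ε • h2 θ,
              (fderiv ℝ φ (θ, q θ + ε • h1 θ, u θ + ε • h3 θ)) ((0:ℝ), h1 θ, h3 θ)⟫
            + ⟪h2 θ, φ (θ, q θ + ε • h1 θ, u θ + ε • h3 θ)⟫)
          - (⟪p θ + ε • h2 θ, deriv h1 θ⟫ + ⟪h2 θ, deriv q θ + ε • deriv h1 θ⟫)|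
          ≤ |(fderiv ℝ L (θ, q θ + ε • h1 θ, u θ + ε • h3 θ)) ((0:ℝ), h1 θ, h3 θ)
            * ((t - θ) ^ (α - 1))
          + (⟪p θ + ε • h2 θ,
              (fderiv ℝ φ (θ, q θ + ε • h1 θ, u θ + ε • h3 θ)) ((0:ℝ), h1 θ, h3 θ)⟫
            + ⟪h2 θ, φ (θ, q θ + ε • h1 θ, u θ + ε • h3 θ)⟫)|
          + |⟪p θ + ε • h2 θ, deriv h1 θ⟫ + ⟪h2 θ, deriv q θ + ε • deriv h1 θ⟫| :=
            habs _ _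
        _ ≤ bound θ := by
            rw [hbounddef]
            have t1 := (abs_add_le _ _).trans (add_le_add hT1 ((abs_add_le _ _).trans
              (add_le_add hT2 hT3)))
            have t2 := (abs_add_le _ _).trans (add_le_add hT4 hT5)
            dsimp only
            linarith
    -- integrability of the integrand at ε = 0
    have hGint : IntervalIntegrable
        (fun θ => H θ (q θ + (0:ℝ) • h1 θ) (u θ + (0:ℝ) • h3 θ) (p θ + (0:ℝ) • h2 θ)
          - ⟪p θ + (0:ℝ) • h2 θ, deriv q θ + (0:ℝ) • deriv h1 θ⟫) volume a t := by
      rw [intervalIntegrable_iff]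
      have hbnd2 : IntervalIntegrable
          (fun θ => ML * ((t - θ) ^ (α - 1)) + ((Cp + Ch2) * Mp + (Cp + Ch2) * Cdq))
          volume a t := (hc_int.const_mul ML).add intervalIntegrable_const
      rw [intervalIntegrable_iff] at hbnd2
      apply MeasureTheory.Integrable.mono' hbnd2 (hmeas 0)
      rw [hres, MeasureTheory.ae_restrict_iff' measurableSet_Ioo]
      filter_upwards with θ hθI
      have hθc : θ ∈ Set.Icc a t := Set.Ioo_subset_Icc_self hθI
      have hwK := hmemK θ hθc 0 (by simp)
      have hpb : ‖p θ + (0:ℝ) • h2 θ‖ ≤ Cp + Ch2 := hpK θ hθc 0 (by simp)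
      have hqd : ‖deriv q θ‖ ≤ Cdq := by rw [hdq θ hθI]; exact hCdq θ hθc
      have hcnn : 0 ≤ (t - θ) ^ (α - 1) := hc_nonneg θ hθI
      rw [Real.norm_eq_abs, hH]
      have hTa : |L (θ, q θ + (0:ℝ) • h1 θ, u θ + (0:ℝ) • h3 θ) * ((t - θ) ^ (α - 1))|
          ≤ ML * ((t - θ) ^ (α - 1)) := by
        rw [abs_mul, abs_of_nonneg hcnn]
        exact mul_le_mul_of_nonneg_right (hML _ hwK) hcnn
      have hTb : |⟪p θ + (0:ℝ) • h2 θ, φ (θ, q θ + (0:ℝ) • h1 θ, u θ + (0:ℝ) • h3 θ)⟫|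
          ≤ (Cp + Ch2) * Mp :=
        (abs_real_inner_le_norm _ _).trans (mul_le_mul hpb (hMp _ hwK) (norm_nonneg _)
          ((norm_nonneg _).trans hpb))
      have hTc : |⟪p θ + (0:ℝ) • h2 θ, deriv q θ + (0:ℝ) • deriv h1 θ⟫|
          ≤ (Cp + Ch2) * Cdq := by
        refine (abs_real_inner_le_norm _ _).trans (mul_le_mul hpb ?_ (norm_nonneg _)
          ((norm_nonneg _).trans hpb))
        simpa using hqd
      have habs : ∀ x y z : ℝ, |x + y - z| ≤ |x| + |y| + |z| := fun x y z => by
        calc |x + y - z| = |x + y + -z| := by ring_nf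
          _ ≤ |x + y| + |-z| := abs_add_le _ _
          _ ≤ |x| + |y| + |z| := by
              rw [abs_neg]
              exact add_le_add_left (abs_add_le _ _) _
      calc |L (θ, q θ + (0:ℝ) • h1 θ, u θ + (0:ℝ) • h3 θ) * ((t - θ) ^ (α - 1))
            + ⟪p θ + (0:ℝ) • h2 θ, φ (θ, q θ + (0:ℝ) • h1 θ, u θ + (0:ℝ) • h3 θ)⟫
            - ⟪p θ + (0:ℝ) • h2 θ, deriv q θ + (0:ℝ) • deriv h1 θ⟫|
          ≤ |L (θ, q θ + (0:ℝ) • h1 θ, u θ + (0:ℝ) • h3 θ) * ((t - θ) ^ (α - 1))|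
            + |⟪p θ + (0:ℝ) • h2 θ, φ (θ, q θ + (0:ℝ) • h1 θ, u θ + (0:ℝ) • h3 θ)⟫|
            + |⟪p θ + (0:ℝ) • h2 θ, deriv q θ + (0:ℝ) • deriv h1 θ⟫| := habs _ _ _
        _ ≤ ML * ((t - θ) ^ (α - 1)) + ((Cp + Ch2) * Mp + (Cp + Ch2) * Cdq) := by
            linarith
    -- differentiation under the integral sign
    have hder := (intervalIntegral.hasDerivAt_integral_of_dominated_loc_of_deriv_le
      (F := fun ε θ => H θ (q θ + ε • h1 θ) (u θ + ε • h3 θ) (p θ + ε • h2 θ)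
        - ⟪p θ + ε • h2 θ, deriv q θ + ε • deriv h1 θ⟫)
      (F' := G') (x₀ := (0:ℝ)) (bound := bound) (Metric.ball_mem_nhds 0 one_pos)
      (Filter.Eventually.of_forall hmeas) hGint hG'0meas h_bound hbound_int
      (MeasureTheory.ae_of_all _ (fun θ _ ε _ => hpt θ ε))).2
    have h0 := hstat h1 h2 h3 h1s h2s h3s.continuous h1a h1t
    have hval : (∫ θ in a..t, G' 0 θ) = 0 := hder.unique h0
    rw [← hval]
    apply intervalIntegral.integral_congr
    intro s hs
    rw [hG'def]
    simp only [zero_smul, add_zero]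
    have hsplit : (((0:ℝ), h1 s, h3 s) :
        ℝ × EuclideanSpace ℝ (Fin n) × EuclideanSpace ℝ (Fin r))
        = (((0:ℝ), h1 s, 0) : ℝ × EuclideanSpace ℝ (Fin n) × EuclideanSpace ℝ (Fin r))
          + ((0:ℝ), 0, h3 s) := by simp
    rw [hAapp, hBapp, hsplit, ContinuousLinearMap.map_add, ContinuousLinearMap.map_add,
      inner_add_right, inner_sub_right]
    ring
  -- auxiliary: zero variations
  have hzsup : tsupport (fun _ : ℝ => (0 : EuclideanSpace ℝ (Fin n))) ⊆ Set.Ioo a t := by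
    rw [show (fun _ : ℝ => (0 : EuclideanSpace ℝ (Fin n))) = 0 from rfl,
      tsupport_eq_empty_iff.mpr rfl]
    exact Set.empty_subset _
  have hzsup' : tsupport (fun _ : ℝ => (0 : EuclideanSpace ℝ (Fin r))) ⊆ Set.Ioo a t := by
    rw [show (fun _ : ℝ => (0 : EuclideanSpace ℝ (Fin r))) = 0 from rfl,
      tsupport_eq_empty_iff.mpr rfl]
    exact Set.empty_subset _
  intro θ hθ
  refine ⟨?_, ?_, ?_⟩
  · -- q' = φ
    have hflcv := falva_flcv (g := fun s => φ (s, q s, u s) - deriv q s) hat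
      ((hφ.continuous.comp_continuousOn (hzc.mono Set.Ioo_subset_Icc_self)).sub hdqc)
      ?_ θ hθ
    · exact (sub_eq_zero.mp hflcv).symm
    · intro h hs hsup
      rw [← key (fun _ => 0) h (fun _ => 0) contDiff_const hs contDiff_const hzsup hsup hzsup']
      apply intervalIntegral.integral_congr
      intro s _
      simp only [inner_zero_right, inner_zero_left, deriv_const', zero_add, add_zero, sub_zero]
      exact real_inner_comm _ _
  · -- p' = -∂₂H
    have hflcv := falva_flcv
      (g := fun s => gradient (fun x => H s x (u s) (p s)) (q s) + deriv p s) hat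
      (hAcont.add hdpc) ?_ θ hθ
    · exact eq_neg_of_add_eq_zero_right hflcv
    · intro h hs hsup
      have hsup' : tsupport (deriv h) ⊆ Set.Ioo a t :=
        (closure_minimal support_deriv_subset (isClosed_tsupport h)).trans hsup
      have hdh : Continuous (deriv h) := hs.continuous_deriv le_rfl
      have hha : h a = 0 := image_eq_zero_of_notMem_tsupport (fun hc => lt_irrefl a (hsup hc).1)
      have hht : h t = 0 := image_eq_zero_of_notMem_tsupport (fun hc => lt_irrefl t (hsup hc).2)
      have hI1 : (∫ s in a..t, (⟪gradient (fun x => H s x (u s) (p s)) (q s), h s⟫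
          - ⟪p s, deriv h s⟫)) = 0 := by
        rw [← key h (fun _ => 0) (fun _ => 0) hs contDiff_const contDiff_const hsup hzsup hzsup']
        apply intervalIntegral.integral_congr
        intro s _
        simp
      have hint2 : IntervalIntegrable
          (fun s => ⟪p s, deriv h s⟫ + ⟪deriv p s, h s⟫) volume a t :=
        ((falva_inner_cont isOpen_Ioo (hpc.mono Set.Ioo_subset_Icc_self) hdh hsup').add
          (falva_inner_cont isOpen_Ioo hdpc hs.continuous hsup)).intervalIntegrable a t
      have hftc : (∫ s in a..t, (⟪p s, deriv h s⟫ + ⟪deriv p s, h s⟫))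
          = ⟪p t, h t⟫ - ⟪p a, h a⟫ := by
        apply intervalIntegral.integral_eq_sub_of_hasDeriv_right_of_le hat.le
          (hpc.inner hs.continuous.continuousOn) _ hint2
        intro s hsm
        exact (HasDerivAt.inner ℝ
          ((((hp.differentiableOn one_ne_zero) s (Set.Ioo_subset_Icc_self hsm)).differentiableAt
            (Icc_mem_nhds hsm.1 hsm.2)).hasDerivAt)
          ((hs.differentiable one_ne_zero _).hasDerivAt)).hasDerivWithinAt
      have hI2 : (∫ s in a..t, (⟪p s, deriv h s⟫ + ⟪deriv p s, h s⟫)) = 0 := by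
        rw [hftc, hha, hht]; simp
      have hint1 : IntervalIntegrable
          (fun s => ⟪gradient (fun x => H s x (u s) (p s)) (q s), h s⟫
            - ⟪p s, deriv h s⟫) volume a t :=
        ((falva_inner_cont isOpen_Ioo hAcont hs.continuous hsup).sub
          (falva_inner_cont isOpen_Ioo (hpc.mono Set.Ioo_subset_Icc_self) hdh hsup')).intervalIntegrable a t
      have hcongr : (∫ s in a..t,
            ⟪gradient (fun x => H s x (u s) (p s)) (q s) + deriv p s, h s⟫)
          = (∫ s in a..t, ((⟪gradient (fun x => H s x (u s) (p s)) (q s), h s⟫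
              - ⟪p s, deriv h s⟫) + (⟪p s, deriv h s⟫ + ⟪deriv p s, h s⟫))) := by
        apply intervalIntegral.integral_congr
        intro s _
        simp only [inner_add_left]
        ring
      rw [hcongr, intervalIntegral.integral_add hint1 hint2, hI1, hI2, add_zero]
  · -- ∂₃H = 0
    have hflcv := falva_flcv
      (g := fun s => gradient (fun v => H s (q s) v (p s)) (u s)) hat hBcont ?_ θ hθ
    · exact hflcv
    · intro h hs hsup
      rw [← key (fun _ => 0) (fun _ => 0) h contDiff_const contDiff_const hs hzsup hzsup hsup]
      apply intervalIntegral.integral_congr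
      intro s _
      simp
end

section
/- Let n, r ≥ 1, let a < t be real numbers, let 0 < α ≤ 1, let L : ℝ × ℝⁿ × ℝʳ → ℝ and φ : ℝ × ℝⁿ × ℝʳ → ℝⁿ be of class C¹, and define H(θ, q, u, p) = L(θ, q, u)·(t−θ)^{α−1} + ⟨p, φ(θ, q, u)⟩ for θ ∈ (a,t). Let q, p : ℝ → ℝⁿ and u : ℝ → ℝʳ be of class C¹ and suppose that for all θ ∈ (a,t): q'(θ) = ∂₄H(θ, q(θ), u(θ), p(θ)), p'(θ) = −∂₂H(θ, q(θ), u(θ), p(θ)), and ∂₃H(θ, q(θ), u(θ), p(θ)) = 0. Then for all θ ∈ (a,t): (d/dθ) [H(θ, q(θ), u(θ), p(θ))] = ∂₁H(θ, q(θ), u(θ), p(θ)). -/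
open scoped RealInnerProductSpace

private lemma inner_gradient_eq_fderiv {F : Type*} [NormedAddCommGroup F]
    [InnerProductSpace ℝ F] [CompleteSpace F] (f : F → ℝ) (x h : F) :
    ⟪gradient f x, h⟫ = fderiv ℝ f x h := by
  rw [gradient, InnerProductSpace.toDual_symm_apply]

/-- **DuBois-Reymond condition along Pontryagin FALVA extremals.**
With Hamiltonian `H(θ,x,u,p) = L(θ,x,u)(t-θ)^(α-1) + ⟨p, φ(θ,x,u)⟩`, along any
Pontryagin FALVA extremal (i.e. `q' = ∂₄H`, `p' = -∂₂H`, `∂₃H = 0` on `(a,t)`)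
one has `(d/dθ) H(θ, q(θ), u(θ), p(θ)) = ∂₁H(θ, q(θ), u(θ), p(θ))` on `(a,t)`. -/
theorem falva_pontryagin_extremal_hamiltonian_deriv
    (n r : ℕ) (hn : 1 ≤ n) (hr : 1 ≤ r) (a t α : ℝ) (hat : a < t)
    (hα0 : 0 < α) (hα1 : α ≤ 1)
    (L : ℝ × EuclideanSpace ℝ (Fin n) × EuclideanSpace ℝ (Fin r) → ℝ)
    (φ : ℝ × EuclideanSpace ℝ (Fin n) × EuclideanSpace ℝ (Fin r) →
      EuclideanSpace ℝ (Fin n))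
    (hL : ContDiff ℝ 1 L) (hφ : ContDiff ℝ 1 φ)
    (H : ℝ → EuclideanSpace ℝ (Fin n) → EuclideanSpace ℝ (Fin r) →
      EuclideanSpace ℝ (Fin n) → ℝ)
    (hH : ∀ θ x u p, H θ x u p = L (θ, x, u) * (t - θ) ^ (α - 1) + ⟪p, φ (θ, x, u)⟫)
    (q p : ℝ → EuclideanSpace ℝ (Fin n)) (u : ℝ → EuclideanSpace ℝ (Fin r))
    (hq : ContDiff ℝ 1 q) (hp : ContDiff ℝ 1 p) (hu : ContDiff ℝ 1 u)
    (hsys : ∀ θ ∈ Set.Ioo a t,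
      deriv q θ = gradient (fun pp => H θ (q θ) (u θ) pp) (p θ)
        ∧ deriv p θ = - gradient (fun x => H θ x (u θ) (p θ)) (q θ)
        ∧ gradient (fun v => H θ (q θ) v (p θ)) (u θ) = 0) :
    ∀ θ ∈ Set.Ioo a t,
      deriv (fun s => H s (q s) (u s) (p s)) θ
        = deriv (fun s => H s (q θ) (u θ) (p θ)) θ := by
  intro θ hθ
  obtain ⟨hsq, hsp, hsu⟩ := hsys θ hθ
  let E := EuclideanSpace ℝ (Fin n)
  let U := EuclideanSpace ℝ (Fin r)
  -- the full Hamiltonian as a function of one product variable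
  set G : ℝ × E × U × E → ℝ :=
    fun z => L (z.1, z.2.1, z.2.2.1) * (t - z.1) ^ (α - 1) +
      ⟪z.2.2.2, φ (z.1, z.2.1, z.2.2.1)⟫ with hG
  have hHG : ∀ s x v pp, H s x v pp = G (s, x, v, pp) := fun s x v pp => hH s x v pp
  set z₀ : ℝ × E × U × E := (θ, q θ, u θ, p θ) with hz₀
  have htne : t - θ ≠ 0 := (sub_pos.mpr hθ.2).ne'
  -- differentiability of G at z₀
  have hm : DifferentiableAt ℝ (fun z : ℝ × E × U × E => (z.1, z.2.1, z.2.2.1)) z₀ :=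
    DifferentiableAt.prodMk differentiableAt_fst (DifferentiableAt.prodMk (DifferentiableAt.fst differentiableAt_snd)
      (DifferentiableAt.fst (DifferentiableAt.snd differentiableAt_snd)))
  have hLm : DifferentiableAt ℝ (fun z : ℝ × E × U × E => L (z.1, z.2.1, z.2.2.1)) z₀ :=
    (hL.differentiable one_ne_zero _).comp z₀ hm
  have hφm : DifferentiableAt ℝ (fun z : ℝ × E × U × E => φ (z.1, z.2.1, z.2.2.1)) z₀ :=
    (hφ.differentiable one_ne_zero _).comp z₀ hm
  have hrp : DifferentiableAt ℝ (fun z : ℝ × E × U × E => (t - z.1) ^ (α - 1)) z₀ :=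
    ((differentiableAt_const t).sub differentiableAt_fst).rpow_const (Or.inl htne)
  have hGd : DifferentiableAt ℝ G z₀ :=
    (hLm.mul hrp).add (differentiableAt_snd.snd.snd.inner ℝ hφm)
  set Φ := fderiv ℝ G z₀ with hΦ
  -- derivatives of the two curves
  have hq' := (hq.differentiable one_ne_zero θ).hasDerivAt
  have hu' := (hu.differentiable one_ne_zero θ).hasDerivAt
  have hp' := (hp.differentiable one_ne_zero θ).hasDerivAt
  have hγ : HasDerivAt (fun s => ((s, q s, u s, p s) : ℝ × E × U × E))
      (1, deriv q θ, deriv u θ, deriv p θ) θ :=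
    HasDerivAt.prodMk (hasDerivAt_id θ) (HasDerivAt.prodMk hq' (HasDerivAt.prodMk hu' hp'))
  have hγ₀ : HasDerivAt (fun s => ((s, q θ, u θ, p θ) : ℝ × E × U × E))
      ((1 : ℝ), (0 : E), (0 : U), (0 : E)) θ :=
    HasDerivAt.prodMk (hasDerivAt_id θ) (HasDerivAt.prodMk (hasDerivAt_const θ _)
      (HasDerivAt.prodMk (hasDerivAt_const θ _) (hasDerivAt_const θ _)))
  have hF : HasDerivAt (fun s => G (s, q s, u s, p s))
      (Φ (1, deriv q θ, deriv u θ, deriv p θ)) θ :=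
    by exact hGd.hasFDerivAt.comp_hasDerivAt θ hγ
  have hF₀ : HasDerivAt (fun s => G (s, q θ, u θ, p θ))
      (Φ ((1 : ℝ), (0 : E), (0 : U), (0 : E))) θ :=
    by exact hGd.hasFDerivAt.comp_hasDerivAt θ hγ₀
  have e1 : deriv (fun s => H s (q s) (u s) (p s)) θ
      = Φ (1, deriv q θ, deriv u θ, deriv p θ) := by
    have : (fun s => H s (q s) (u s) (p s)) = fun s => G (s, q s, u s, p s) :=
      funext fun s => hHG s (q s) (u s) (p s)
    rw [this, hF.deriv]
  have e2 : deriv (fun s => H s (q θ) (u θ) (p θ)) θ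
      = Φ ((1 : ℝ), (0 : E), (0 : U), (0 : E)) := by
    have : (fun s => H s (q θ) (u θ) (p θ)) = fun s => G (s, q θ, u θ, p θ) :=
      funext fun s => hHG s (q θ) (u θ) (p θ)
    rw [this, hF₀.deriv]
  -- partial derivatives via linear embeddings
  -- x-slot
  have hfx : ∀ h : E, fderiv ℝ (fun x : E => H θ x (u θ) (p θ)) (q θ) h
      = Φ ((0 : ℝ), h, (0 : U), (0 : E)) := by
    intro h
    have hι : HasFDerivAt (fun x : E => ((θ, x, u θ, p θ) : ℝ × E × U × E))
        ((0 : E →L[ℝ] ℝ).prod ((ContinuousLinearMap.id ℝ E).prod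
          ((0 : E →L[ℝ] U).prod (0 : E →L[ℝ] E)))) (q θ) :=
      HasFDerivAt.prodMk (hasFDerivAt_const θ _) (HasFDerivAt.prodMk (hasFDerivAt_id _)
        (HasFDerivAt.prodMk (hasFDerivAt_const (u θ) _) (hasFDerivAt_const (p θ) _)))
    have hc : HasFDerivAt (fun x : E => G (θ, x, u θ, p θ))
        (Φ.comp ((0 : E →L[ℝ] ℝ).prod ((ContinuousLinearMap.id ℝ E).prod
          ((0 : E →L[ℝ] U).prod (0 : E →L[ℝ] E))))) (q θ) :=
      by exact hGd.hasFDerivAt.comp (q θ) hι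
    have heq : (fun x : E => H θ x (u θ) (p θ)) = fun x : E => G (θ, x, u θ, p θ) :=
      funext fun x => hHG θ x (u θ) (p θ)
    rw [heq, hc.fderiv]
    simp
  -- u-slot
  have hfu : ∀ h : U, fderiv ℝ (fun v : U => H θ (q θ) v (p θ)) (u θ) h
      = Φ ((0 : ℝ), (0 : E), h, (0 : E)) := by
    intro h
    have hι : HasFDerivAt (fun v : U => ((θ, q θ, v, p θ) : ℝ × E × U × E))
        ((0 : U →L[ℝ] ℝ).prod ((0 : U →L[ℝ] E).prod
          ((ContinuousLinearMap.id ℝ U).prod (0 : U →L[ℝ] E)))) (u θ) :=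
      HasFDerivAt.prodMk (hasFDerivAt_const θ _) (HasFDerivAt.prodMk (hasFDerivAt_const (q θ) _)
        (HasFDerivAt.prodMk (hasFDerivAt_id _) (hasFDerivAt_const (p θ) _)))
    have hc : HasFDerivAt (fun v : U => G (θ, q θ, v, p θ))
        (Φ.comp ((0 : U →L[ℝ] ℝ).prod ((0 : U →L[ℝ] E).prod
          ((ContinuousLinearMap.id ℝ U).prod (0 : U →L[ℝ] E))))) (u θ) :=
      by exact hGd.hasFDerivAt.comp (u θ) hι
    have heq : (fun v : U => H θ (q θ) v (p θ)) = fun v : U => G (θ, q θ, v, p θ) :=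
      funext fun v => hHG θ (q θ) v (p θ)
    rw [heq, hc.fderiv]
    simp
  -- p-slot
  have hfp : ∀ h : E, fderiv ℝ (fun pp : E => H θ (q θ) (u θ) pp) (p θ) h
      = Φ ((0 : ℝ), (0 : E), (0 : U), h) := by
    intro h
    have hι : HasFDerivAt (fun pp : E => ((θ, q θ, u θ, pp) : ℝ × E × U × E))
        ((0 : E →L[ℝ] ℝ).prod ((0 : E →L[ℝ] E).prod
          ((0 : E →L[ℝ] U).prod (ContinuousLinearMap.id ℝ E)))) (p θ) :=
      HasFDerivAt.prodMk (hasFDerivAt_const θ _) (HasFDerivAt.prodMk (hasFDerivAt_const (q θ) _)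
        (HasFDerivAt.prodMk (hasFDerivAt_const (u θ) _) (hasFDerivAt_id _)))
    have hc : HasFDerivAt (fun pp : E => G (θ, q θ, u θ, pp))
        (Φ.comp ((0 : E →L[ℝ] ℝ).prod ((0 : E →L[ℝ] E).prod
          ((0 : E →L[ℝ] U).prod (ContinuousLinearMap.id ℝ E))))) (p θ) :=
      by exact hGd.hasFDerivAt.comp (p θ) hι
    have heq : (fun pp : E => H θ (q θ) (u θ) pp) = fun pp : E => G (θ, q θ, u θ, pp) :=
      funext fun pp => hHG θ (q θ) (u θ) pp
    rw [heq, hc.fderiv]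
    simp
  -- values of Φ on the three slot directions
  have vx : Φ ((0 : ℝ), deriv q θ, (0 : U), (0 : E)) = ⟪-(deriv p θ), deriv q θ⟫ := by
    rw [← hfx (deriv q θ), ← inner_gradient_eq_fderiv]
    have : gradient (fun x : E => H θ x (u θ) (p θ)) (q θ) = -(deriv p θ) := by
      rw [hsp, neg_neg]
    rw [this]
  have vu : Φ ((0 : ℝ), (0 : E), deriv u θ, (0 : E)) = 0 := by
    rw [← hfu (deriv u θ), ← inner_gradient_eq_fderiv, hsu, inner_zero_left]
  have vp : Φ ((0 : ℝ), (0 : E), (0 : U), deriv p θ) = ⟪deriv q θ, deriv p θ⟫ := by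
    rw [← hfp (deriv p θ), ← inner_gradient_eq_fderiv, ← hsq]
  -- conclude by linearity
  rw [e1, e2]
  have hsum : ((1 : ℝ), deriv q θ, deriv u θ, deriv p θ)
      = ((1 : ℝ), (0 : E), (0 : U), (0 : E)) + ((0 : ℝ), deriv q θ, (0 : U), (0 : E))
        + ((0 : ℝ), (0 : E), deriv u θ, (0 : E))
        + ((0 : ℝ), (0 : E), (0 : U), deriv p θ) := by
    simp [Prod.ext_iff]
  rw [hsum, map_add, map_add, map_add, vx, vu, vp]
  rw [inner_neg_left, real_inner_comm (deriv q θ) (deriv p θ)]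
  ring
end
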